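/- arXiv:2006.11315 — 8 statements merged into one kernel-verified Lean document; each statement's English description precedes it below -/
import Mathlib

section
/- If a group G has exactly four subgroups, then G is isomorphic to Z_{pq} for distinct primes p and q, or to Z_{p^3} for a prime p. -/
open Subgroup

-- every element has finite order if the subgroup lattice is finite
lemma aux_torsion (G : Type*) [Group G] [Finite (Subgroup G)] (g : G) : IsOfFinOrder g := by
  by_contra hg
  have hinj : Function.Injective fun n : ℤ => g ^ n :=
    injective_zpow_iff_not_isOfFinOrder.mpr hg
  have key : Function.Injective fun k : ℕ => zpowers (g ^ (k + 1)) := by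
    intro a b hab
    simp only at hab
    have h1 : g ^ (a + 1) ∈ zpowers (g ^ (b + 1)) := by rw [← hab]; exact mem_zpowers _
    have h2 : g ^ (b + 1) ∈ zpowers (g ^ (a + 1)) := by rw [hab]; exact mem_zpowers _
    obtain ⟨m, hm⟩ := mem_zpowers_iff.mp h1
    obtain ⟨k, hk⟩ := mem_zpowers_iff.mp h2
    rw [← zpow_natCast g (b + 1), ← zpow_mul] at hm
    rw [← zpow_natCast g (a + 1)] at hm
    rw [← zpow_natCast g (a + 1), ← zpow_mul] at hk
    rw [← zpow_natCast g (b + 1)] at hk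
    have hm' : ((b : ℤ) + 1) * m = (a : ℤ) + 1 := by
      have := hinj hm; push_cast at this ⊢; linarith [this]
    have hk' : ((a : ℤ) + 1) * k = (b : ℤ) + 1 := by
      have := hinj hk; push_cast at this ⊢; linarith [this]
    have hd1 : ((b : ℤ) + 1) ∣ ((a : ℤ) + 1) := ⟨m, hm'.symm⟩
    have hd2 : ((a : ℤ) + 1) ∣ ((b : ℤ) + 1) := ⟨k, hk'.symm⟩
    have := Int.dvd_antisymm (by positivity) (by positivity) hd2 hd1
    omega
  have := Finite.of_injective _ key
  exact not_finite ℕ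

lemma aux_finite (G : Type*) [Group G] [Finite (Subgroup G)] : Finite G := by
  have h : (Set.univ : Set G).Finite := by
    have hsub : (Set.univ : Set G) ⊆ ⋃ H ∈ Set.range (fun g : G => zpowers g), (H : Set G) :=
      fun x _ => Set.mem_biUnion ⟨x, rfl⟩ (mem_zpowers x)
    have hfin : (⋃ H ∈ Set.range (fun g : G => zpowers g), (H : Set G)).Finite := by
      refine Set.Finite.biUnion (Set.toFinite _) ?_
      rintro H ⟨g, rfl⟩
      exact (aux_torsion G g).finite_zpowers
    exact hfin.subset hsub
  exact Set.finite_univ_iff.mp h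

-- a group is not the union of two proper subgroups
lemma aux_union (G : Type*) [Group G] (A B : Subgroup G) (hA : A ≠ ⊤) (hB : B ≠ ⊤)
    (h : ∀ g : G, g ∈ A ∨ g ∈ B) : False := by
  obtain ⟨a, ha⟩ : ∃ a, a ∉ A := by
    by_contra hc; push_neg at hc; exact hA ((Subgroup.eq_top_iff' A).mpr hc)
  obtain ⟨b, hb⟩ : ∃ b, b ∉ B := by
    by_contra hc; push_neg at hc; exact hB ((Subgroup.eq_top_iff' B).mpr hc)
  have haB : a ∈ B := (h a).resolve_left ha
  have hbA : b ∈ A := (h b).resolve_right hb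
  rcases h (a * b) with hab | hab
  · exact ha (by simpa using mul_mem hab (inv_mem hbA))
  · exact hb (by simpa using mul_mem (inv_mem haB) hab)

-- in a finite cyclic group, subgroups of equal cardinality are equal
lemma aux_card_inj (G : Type*) [Group G] [Fintype G] [IsCyclic G] (H K : Subgroup G)
    (h : Nat.card H = Nat.card K) : H = K := by
  classical
  have key : ∀ L : Subgroup G, (L : Set G).toFinset =
      Finset.univ.filter (fun x => x ^ (Nat.card L) = 1) := by
    intro L
    have hd : 0 < Nat.card L := Nat.card_pos
    have hsub : (L : Set G).toFinset ⊆ Finset.univ.filter (fun x => x ^ (Nat.card L) = 1) := by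
      intro x hx
      rw [Set.mem_toFinset] at hx
      rw [Finset.mem_filter]
      refine ⟨Finset.mem_univ x, ?_⟩
      have h1 : (⟨x, hx⟩ : L) ^ (Nat.card L) = 1 := pow_card_eq_one'
      have h2 := congrArg (Subtype.val) h1
      push_cast at h2
      exact h2
    refine Finset.eq_of_subset_of_card_le hsub ?_
    calc (Finset.univ.filter (fun x => x ^ (Nat.card L) = 1)).card
        ≤ Nat.card L := IsCyclic.card_pow_eq_one_le hd
      _ = (L : Set G).toFinset.card := by
          rw [Set.toFinset_card, Nat.card_eq_fintype_card]; rfl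
  ext x
  have h1 := key H
  have h2 := key K
  rw [h] at h1
  constructor
  · intro hx
    have : x ∈ (H : Set G).toFinset := Set.mem_toFinset.mpr hx
    rw [h1, ← h2] at this
    exact Set.mem_toFinset.mp this
  · intro hx
    have : x ∈ (K : Set G).toFinset := Set.mem_toFinset.mpr hx
    rw [h2, ← h1] at this
    exact Set.mem_toFinset.mp this

-- number of subgroups of a finite cyclic group = number of divisors
lemma aux_count (G : Type*) [Group G] [Fintype G] [IsCyclic G] :
    Nat.card (Subgroup G) = (Nat.card G).divisors.card := by
  classical
  set n := Nat.card G with hn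
  have hn0 : n ≠ 0 := Nat.card_pos.ne'
  let f : Subgroup G → {d : ℕ // d ∈ n.divisors} := fun H =>
    ⟨Nat.card H, Nat.mem_divisors.mpr ⟨Subgroup.card_subgroup_dvd_card H, hn0⟩⟩
  have hbij : Function.Bijective f := by
    constructor
    · intro H K hHK
      exact aux_card_inj G H K (by exact congrArg Subtype.val hHK)
    · rintro ⟨d, hd⟩
      obtain ⟨hdvd, -⟩ := Nat.mem_divisors.mp hd
      have hd0 : d ≠ 0 := by rintro rfl; exact hn0 (Nat.eq_zero_of_zero_dvd hdvd)
      obtain ⟨g, hg⟩ := IsCyclic.exists_ofOrder_eq_natCard (α := G)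
      refine ⟨zpowers (g ^ (n / d)), ?_⟩
      have horder : orderOf (g ^ (n / d)) = d := by
        rw [orderOf_pow, hg, ← hn, Nat.gcd_eq_right (Nat.div_dvd_of_dvd hdvd),
          Nat.div_div_self hdvd hn0]
      refine Subtype.ext ?_
      show Nat.card (zpowers (g ^ (n / d))) = d
      rw [Nat.card_zpowers]
      exact horder
  calc Nat.card (Subgroup G) = Nat.card {d : ℕ // d ∈ n.divisors} :=
        Nat.card_congr (Equiv.ofBijective f hbij)
    _ = n.divisors.card := Nat.card_eq_finsetCard _

-- numbers with exactly four divisors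
lemma aux_nt (n : ℕ) (h : n.divisors.card = 4) :
    (∃ p q : ℕ, p.Prime ∧ q.Prime ∧ p ≠ q ∧ n = p * q) ∨ (∃ p : ℕ, p.Prime ∧ n = p ^ 3) := by
  have hn0 : n ≠ 0 := by rintro rfl; simp at h
  have hn1 : n ≠ 1 := by rintro rfl; simp at h
  have h4 : ∏ p ∈ n.primeFactors, (n.factorization p + 1) = 4 := by
    rw [← Nat.card_divisors hn0, h]
  have hpos : ∀ p ∈ n.primeFactors, 1 ≤ n.factorization p := by
    intro p hp
    exact (Nat.Prime.factorization_pos_of_dvd (Nat.prime_of_mem_primeFactors hp) hn0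
      (Nat.dvd_of_mem_primeFactors hp))
  have hle : n.primeFactors.card ≤ 2 := by
    by_contra hc
    push_neg at hc
    have h2 : 2 ^ n.primeFactors.card ≤ ∏ p ∈ n.primeFactors, (n.factorization p + 1) :=
      Finset.pow_card_le_prod _ _ _ (fun p hp => by have := hpos p hp; omega)
    rw [h4] at h2
    have : (2 : ℕ) ^ 3 ≤ 2 ^ n.primeFactors.card := Nat.pow_le_pow_right (by norm_num) hc
    omega
  have hne : n.primeFactors.Nonempty := Nat.nonempty_primeFactors.mpr (by omega)
  have hself : ∏ p ∈ n.primeFactors, p ^ n.factorization p = n := by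
    conv_rhs => rw [← Nat.factorization_prod_pow_eq_self hn0]
    rfl
  interval_cases hcard : n.primeFactors.card
  · exact absurd hcard (Finset.card_ne_zero_of_mem hne.choose_spec)
  · obtain ⟨p, hp⟩ := Finset.card_eq_one.mp hcard
    have hpmem : p ∈ n.primeFactors := by rw [hp]; exact Finset.mem_singleton_self p
    rw [hp, Finset.prod_singleton] at h4
    have hk : n.factorization p = 3 := by omega
    right
    refine ⟨p, Nat.prime_of_mem_primeFactors hpmem, ?_⟩
    rw [← hself, hp, Finset.prod_singleton, hk]
  · obtain ⟨p, q, hpq, hs⟩ := Finset.card_eq_two.mp hcard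
    have hpmem : p ∈ n.primeFactors := by rw [hs]; simp
    have hqmem : q ∈ n.primeFactors := by rw [hs]; simp
    rw [hs, Finset.prod_pair hpq] at h4
    have hp1 := hpos p hpmem
    have hq1 := hpos q hqmem
    have hkp : n.factorization p = 1 ∧ n.factorization q = 1 := by
      constructor <;> nlinarith
    left
    refine ⟨p, q, Nat.prime_of_mem_primeFactors hpmem, Nat.prime_of_mem_primeFactors hqmem,
      hpq, ?_⟩
    rw [← hself, hs, Finset.prod_pair hpq, hkp.1, hkp.2, pow_one, pow_one]

theorem four_subgroups (G : Type*) [Group G]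
    (h : Nat.card (Subgroup G) = 4) :
    (∃ p q : ℕ, p.Prime ∧ q.Prime ∧ p ≠ q ∧
      Nonempty (G ≃* Multiplicative (ZMod (p * q)))) ∨
    (∃ p : ℕ, p.Prime ∧ Nonempty (G ≃* Multiplicative (ZMod (p ^ 3)))) := by
  classical
  have hfinS : Finite (Subgroup G) := Nat.finite_of_card_ne_zero (by omega)
  have hfinG : Finite G := aux_finite G
  have : Fintype G := Fintype.ofFinite G
  have hnt : Nontrivial G := by
    by_contra hc
    have : Subsingleton G := not_nontrivial_iff_subsingleton.mp hc
    have hsub : Subsingleton (Subgroup G) := ⟨fun H K => by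
      ext x
      have hx : x = 1 := Subsingleton.elim x 1
      subst hx
      exact iff_of_true (one_mem H) (one_mem K)⟩
    have h1 : Nat.card (Subgroup G) = 1 := by
      rw [Nat.card_eq_one_iff_unique]; exact ⟨hsub, ⟨⊥⟩⟩
    omega
  have hcyc : IsCyclic G := by
    by_contra hnc
    have hzne : ∀ g : G, zpowers g ≠ ⊤ := by
      intro g hg
      exact hnc ⟨g, fun x => (Subgroup.eq_top_iff' (zpowers g)).mp hg x⟩
    obtain ⟨a, ha⟩ := exists_ne (1 : G)
    set A := zpowers a with hA
    have hAbot : A ≠ ⊥ := by simpa [hA, Subgroup.zpowers_eq_bot] using ha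
    have hAtop : A ≠ ⊤ := hzne a
    obtain ⟨b, hb⟩ : ∃ b, b ∉ A := by
      by_contra hc; push_neg at hc; exact hAtop ((Subgroup.eq_top_iff' A).mpr hc)
    set B := zpowers b with hB
    have hBtop : B ≠ ⊤ := hzne b
    have hBbot : B ≠ ⊥ := by
      simp only [hB, Ne, Subgroup.zpowers_eq_bot]
      rintro rfl; exact hb (one_mem A)
    have hAB : A ≠ B := fun hab => hb (hab ▸ mem_zpowers b)
    have hbotTop : (⊥ : Subgroup G) ≠ ⊤ := bot_ne_top
    have : Fintype (Subgroup G) := Fintype.ofFinite _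
    have hcard4 : Fintype.card (Subgroup G) = 4 := by
      rw [← Nat.card_eq_fintype_card, h]
    have huniv : (Finset.univ : Finset (Subgroup G)) = {⊥, A, B, ⊤} := by
      symm
      apply Finset.eq_univ_of_card
      rw [hcard4]
      rw [Finset.card_insert_of_notMem (by simp [hAbot.symm, hBbot.symm, hbotTop]),
        Finset.card_insert_of_notMem (by simp [hAB, hAtop]),
        Finset.card_insert_of_notMem (by simp [hBtop]),
        Finset.card_singleton]
    have hcover : ∀ g : G, g ∈ A ∨ g ∈ B := by
      intro g
      have : zpowers g ∈ (Finset.univ : Finset (Subgroup G)) := Finset.mem_univ _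
      rw [huniv] at this
      simp only [Finset.mem_insert, Finset.mem_singleton] at this
      rcases this with hz | hz | hz | hz
      · left
        have : g = 1 := Subgroup.zpowers_eq_bot.mp hz
        rw [this]; exact one_mem A
      · left; rw [← hz]; exact mem_zpowers g
      · right; rw [← hz]; exact mem_zpowers g
      · exact absurd hz (hzne g)
    exact absurd hcover (fun hc => aux_union G A B hAtop hBtop hc)
  have hdiv : (Nat.card G).divisors.card = 4 := by
    rw [← aux_count G, h]
  rcases aux_nt (Nat.card G) hdiv with ⟨p, q, hp, hq, hpq, heq⟩ | ⟨p, hp, heq⟩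
  · left
    refine ⟨p, q, hp, hq, hpq, ?_⟩
    have e : Multiplicative (ZMod (Nat.card G)) ≃* G := zmodCyclicMulEquiv hcyc
    rw [heq] at e
    exact ⟨e.symm⟩
  · right
    refine ⟨p, hp, ?_⟩
    have e : Multiplicative (ZMod (Nat.card G)) ≃* G := zmodCyclicMulEquiv hcyc
    rw [heq] at e
    exact ⟨e.symm⟩
end

section
/- If G has exactly four subgroups, then G is cyclic. -/
theorem four_subgroups_cyclic (G : Type*) [Group G]
    (h : Nat.card (Subgroup G) = 4) : IsCyclic G := by
  have hfin : Finite (Subgroup G) := Nat.finite_of_card_ne_zero (by omega)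
  classical
  have := Fintype.ofFinite (Subgroup G)
  by_contra hnc
  -- G is nontrivial
  have hnt : Nontrivial G := by
    by_contra h'
    have hs : Subsingleton G := not_nontrivial_iff_subsingleton.mp h'
    have : Subsingleton (Subgroup G) := ⟨fun a b => by
      ext x; simp [Subsingleton.elim x (1 : G), a.one_mem, b.one_mem]⟩
    have h1 : Nat.card (Subgroup G) = 1 :=
      Nat.card_eq_one_iff_unique.mpr ⟨this, ⟨⊥⟩⟩
    omega
  have hbt : (⊥ : Subgroup G) ≠ ⊤ := bot_ne_top
  -- the set of proper nontrivial subgroups has 2 elements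
  have hcard : (Finset.univ \ ({⊥, ⊤} : Finset (Subgroup G))).card = 2 := by
    rw [Finset.card_sdiff_of_subset (Finset.subset_univ _)]
    rw [Finset.card_pair hbt]
    rw [Finset.card_univ, ← Nat.card_eq_fintype_card, h]
  obtain ⟨H, K, hHK, hs⟩ := Finset.card_eq_two.mp hcard
  have hHmem : H ∈ Finset.univ \ ({⊥, ⊤} : Finset (Subgroup G)) := by
    rw [hs]; simp
  have hKmem : K ∈ Finset.univ \ ({⊥, ⊤} : Finset (Subgroup G)) := by
    rw [hs]; simp
  simp only [Finset.mem_sdiff, Finset.mem_univ, Finset.mem_insert,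
    Finset.mem_singleton, true_and, not_or] at hHmem hKmem
  obtain ⟨hHb, hHt⟩ := hHmem
  obtain ⟨hKb, hKt⟩ := hKmem
  -- every subgroup is one of the four
  have hall : ∀ L : Subgroup G, L = ⊥ ∨ L = ⊤ ∨ L = H ∨ L = K := by
    intro L
    by_cases h1 : L = ⊥
    · exact Or.inl h1
    by_cases h2 : L = ⊤
    · exact Or.inr (Or.inl h2)
    have : L ∈ Finset.univ \ ({⊥, ⊤} : Finset (Subgroup G)) := by
      simp [h1, h2]
    rw [hs] at this
    simp only [Finset.mem_insert, Finset.mem_singleton] at this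
    tauto
  -- every element lies in H or K
  have hcov : ∀ x : G, x ∈ H ∨ x ∈ K := by
    intro x
    have hx : x ∈ Subgroup.zpowers x := Subgroup.mem_zpowers x
    rcases hall (Subgroup.zpowers x) with h1 | h1 | h1 | h1
    · rw [h1] at hx
      exact Or.inl (hx ▸ H.one_mem)
    · exact absurd ⟨⟨x, fun y => show y ∈ Subgroup.zpowers x by rw [h1]; trivial⟩⟩ hnc
    · exact Or.inl (h1 ▸ hx)
    · exact Or.inr (h1 ▸ hx)
  -- union of two proper subgroups can't cover G
  by_cases hle : H ≤ K
  · exact hKt ((Subgroup.eq_top_iff' K).mpr fun x => (hcov x).elim (fun hx => hle hx) id)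
  by_cases hle' : K ≤ H
  · exact hHt ((Subgroup.eq_top_iff' H).mpr fun x => (hcov x).elim id (fun hx => hle' hx))
  obtain ⟨a, haH, haK⟩ := SetLike.not_le_iff_exists.mp hle
  obtain ⟨b, hbK, hbH⟩ := SetLike.not_le_iff_exists.mp hle'
  rcases hcov (a * b) with hab | hab
  · exact hbH (by simpa using H.mul_mem (H.inv_mem haH) hab)
  · exact haK (by simpa using K.mul_mem hab (K.inv_mem hbK))
end

section
/- Let G and H be finite groups with coprime orders. Then the number of subgroups of G × H equals the number of subgroups of G times the number of subgroups of H. -/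
open Subgroup

lemma mem_of_mem_coprime {G H : Type*} [Group G] [Group H] [Finite G] [Finite H]
    (hcop : Nat.Coprime (Nat.card G) (Nat.card H)) (K : Subgroup (G × H)) {g : G} {h : H}
    (hgh : (g, h) ∈ K) : (g, 1) ∈ K := by
  set n := Nat.card H with hn
  have h1 : (g ^ n, 1) ∈ K := by
    have := K.pow_mem hgh n
    rwa [Prod.pow_mk, pow_card_eq_one'] at this
  have hco : Nat.Coprime (orderOf g) n :=
    Nat.Coprime.coprime_dvd_left (orderOf_dvd_natCard g) hcop
  rcases eq_or_lt_of_le (show 1 ≤ orderOf g from orderOf_pos g) with ho | ho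
  · have : g = 1 := orderOf_eq_one_iff.mp ho.symm
    rw [this]; exact K.one_mem
  · obtain ⟨m, -, hm⟩ := Nat.exists_mul_mod_eq_one_of_coprime hco.symm ho
    have : ((g ^ n, (1 : H)) : G × H) ^ m ∈ K := K.pow_mem h1 m
    have hg : (g ^ n) ^ m = g := by
      rw [← pow_mul, ← pow_mod_orderOf, hm, pow_one]
    simpa [Prod.pow_mk, hg] using this

theorem card_subgroups_coprime_prod (G H : Type*) [Group G] [Group H]
    [Finite G] [Finite H] (hcop : Nat.Coprime (Nat.card G) (Nat.card H)) :
    Nat.card (Subgroup (G × H)) = Nat.card (Subgroup G) * Nat.card (Subgroup H) := by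
  rw [← Nat.card_prod]
  refine Nat.card_congr ⟨fun K => (K.map (MonoidHom.fst G H), K.map (MonoidHom.snd G H)),
    fun p => p.1.prod p.2, fun K => ?_, fun p => ?_⟩
  · ext ⟨g, h⟩
    simp only [Subgroup.mem_prod, Subgroup.mem_map, MonoidHom.coe_fst, MonoidHom.coe_snd]
    constructor
    · rintro ⟨⟨⟨a, b⟩, ha, rfl⟩, ⟨⟨c, d⟩, hc, rfl⟩⟩
      have h1 : ((a, 1) : G × H) ∈ K := mem_of_mem_coprime hcop K ha
      have h2 : ((1, d) : G × H) ∈ K := by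
        have := mem_of_mem_coprime hcop.symm (K.comap (MulEquiv.prodComm : H × G ≃* G × H).toMonoidHom)
          (g := d) (h := c) (by simpa using hc)
        simpa using this
      simpa using K.mul_mem h1 h2
    · intro hgh
      exact ⟨⟨(g, h), hgh, rfl⟩, ⟨(g, h), hgh, rfl⟩⟩
  · obtain ⟨A, B⟩ := p
    ext x <;> simp only [Subgroup.mem_map, Subgroup.mem_prod, MonoidHom.coe_fst,
      MonoidHom.coe_snd] <;> constructor
    · rintro ⟨⟨a, b⟩, ⟨ha, hb⟩, rfl⟩; exact ha
    · intro hx; exact ⟨(x, 1), ⟨hx, B.one_mem⟩, rfl⟩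
    · rintro ⟨⟨a, b⟩, ⟨ha, hb⟩, rfl⟩; exact hb
    · intro hx; exact ⟨(1, x), ⟨A.one_mem, hx⟩, rfl⟩
end

section
/- For a prime p and integers 1 ≤ a ≤ b, the number of subgroups of Z_{p^a} × Z_{p^b} equals [(b−a+1)p^{a+2} − (b−a−1)p^{a+1} − (b+a+3)p + (b+a+1)] / (p−1)^2. -/
open AddSubgroup

lemma mem_zmul_iff {N c : ℕ} [NeZero N] (hc : c ∣ N) (x : ℤ) :
    ((x : ZMod N) ∈ zmultiples ((c : ZMod N))) ↔ (c : ℤ) ∣ x := by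
  rw [AddSubgroup.mem_zmultiples_iff]
  constructor
  · rintro ⟨t, ht⟩
    rw [zsmul_eq_mul] at ht
    have h1 : ((t * c - x : ℤ) : ZMod N) = 0 := by
      push_cast
      rw [sub_eq_zero, ← ht]
    rw [ZMod.intCast_zmod_eq_zero_iff_dvd] at h1
    have hcN : (c : ℤ) ∣ (N : ℤ) := Int.natCast_dvd_natCast.2 hc
    have h2 : (c : ℤ) ∣ t * c - x := hcN.trans h1
    have h3 : (c : ℤ) ∣ t * c := Dvd.intro_left t rfl
    exact (dvd_sub_right h3).mp h2
  · rintro ⟨t, rfl⟩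
    exact ⟨t, by rw [zsmul_eq_mul]; push_cast; ring⟩

lemma zmultiples_neg' {G : Type*} [AddGroup G] (x : G) :
    zmultiples (-x) = zmultiples x := by
  ext y
  simp only [AddSubgroup.mem_zmultiples_iff]
  constructor <;> rintro ⟨t, rfl⟩ <;> exact ⟨-t, by simp⟩

lemma zmod_ppow_subgroup {p : ℕ} (hp : p.Prime) (k : ℕ) (H : AddSubgroup (ZMod (p ^ k))) :
    ∃ i ≤ k, H = zmultiples (((p ^ i : ℕ) : ZMod (p ^ k))) := by
  haveI : NeZero (p ^ k) := ⟨pow_ne_zero k hp.ne_zero⟩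
  set φ := Int.castAddHom (ZMod (p ^ k)) with hφ
  have hφ' : ∀ x : ℤ, φ x = (x : ZMod (p ^ k)) := fun x => rfl
  have hsurj : Function.Surjective φ := ZMod.intCast_surjective
  obtain ⟨g, hg⟩ := Int.subgroup_cyclic (H.comap φ)
  have hmap : (H.comap φ).map φ = H := AddSubgroup.map_comap_eq_self_of_surjective hsurj _
  have hpk : ((p ^ k : ℕ) : ℤ) ∈ H.comap φ := by
    have h0 : (((p ^ k : ℕ) : ℤ) : ZMod (p ^ k)) = 0 := by
      rw [Int.cast_natCast, ZMod.natCast_self]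
    simp only [AddSubgroup.mem_comap, hφ', h0]
    exact zero_mem H
  rw [hg, ← AddSubgroup.zmultiples_eq_closure, AddSubgroup.mem_zmultiples_iff] at hpk
  obtain ⟨t, ht⟩ := hpk
  rw [zsmul_eq_mul] at ht
  have hdvd : g ∣ ((p ^ k : ℕ) : ℤ) := Dvd.intro_left t ht
  have hdvd' : g.natAbs ∣ p ^ k := by
    have h2 := Int.natAbs_dvd_natAbs.2 hdvd
    rwa [Int.natAbs_natCast] at h2
  obtain ⟨i, hik, hi⟩ := (Nat.dvd_prime_pow hp).1 hdvd'
  refine ⟨i, hik, ?_⟩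
  rw [← hmap, hg, ← AddSubgroup.zmultiples_eq_closure]
  have hmapz : (zmultiples g).map φ = zmultiples (φ g) := by
    ext x
    simp only [AddSubgroup.mem_map, AddSubgroup.mem_zmultiples_iff]
    constructor
    · rintro ⟨y, ⟨t, rfl⟩, rfl⟩
      exact ⟨t, (map_zsmul φ t g).symm⟩
    · rintro ⟨t, rfl⟩
      exact ⟨t • g, ⟨t, rfl⟩, map_zsmul φ t g⟩
  rw [hmapz]
  rcases Int.natAbs_eq g with h | h <;> rw [hi] at h <;> rw [h, hφ']
  · norm_cast
  · rw [Int.cast_neg, zmultiples_neg']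
    norm_cast
open AddSubgroup

section
variable {p a b : ℕ}

/-- The subgroup generated by `(p^i, Y)` and `(0, p^j)`. -/
def Hsub (p a b i j Y : ℕ) : AddSubgroup (ZMod (p ^ a) × ZMod (p ^ b)) :=
  closure {(((p ^ i : ℕ) : ZMod (p ^ a)), ((Y : ℕ) : ZMod (p ^ b))),
           ((0 : ZMod (p ^ a)), ((p ^ j : ℕ) : ZMod (p ^ b)))}

lemma mem_Hsub {i j Y : ℕ} {u : ZMod (p ^ a)} {v : ZMod (p ^ b)} :
    (u, v) ∈ Hsub p a b i j Y ↔
      ∃ s t : ℤ, u = ((s * p ^ i : ℤ) : ZMod (p ^ a)) ∧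
        v = ((s * Y + t * p ^ j : ℤ) : ZMod (p ^ b)) := by
  rw [Hsub, AddSubgroup.mem_closure_pair]
  constructor
  · rintro ⟨s, t, h⟩
    rw [Prod.ext_iff] at h
    obtain ⟨h1, h2⟩ := h
    simp only [Prod.fst_add, Prod.snd_add, Prod.smul_fst, Prod.smul_snd] at h1 h2
    refine ⟨s, t, ?_, ?_⟩
    · rw [← h1]; simp only [zsmul_eq_mul]; push_cast; ring
    · rw [← h2]; simp only [zsmul_eq_mul]; push_cast; ring
  · rintro ⟨s, t, h1, h2⟩
    refine ⟨s, t, ?_⟩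
    rw [Prod.ext_iff]
    simp only [Prod.smul_mk, Prod.fst_add, Prod.snd_add, Prod.smul_fst, Prod.smul_snd,
      zsmul_eq_mul, h1, h2]
    refine ⟨?_, ?_⟩ <;> push_cast <;> ring

end

section
variable {p a b : ℕ}

lemma cast_eq_zero_dvd (hp : p.Prime) {i : ℕ} (hia : i ≤ a) (s : ℤ)
    (h : ((s * p ^ i : ℤ) : ZMod (p ^ a)) = 0) : (p : ℤ) ^ (a - i) ∣ s := by
  rw [ZMod.intCast_zmod_eq_zero_iff_dvd] at h
  push_cast at h
  have hpow : (p : ℤ) ^ a = (p : ℤ) ^ (a - i) * (p : ℤ) ^ i := by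
    rw [← pow_add]; congr 1; omega
  rw [hpow] at h
  exact (mul_dvd_mul_iff_right (pow_ne_zero i (by exact_mod_cast hp.ne_zero))).mp h

lemma map_fst_Hsub {i j Y : ℕ} :
    (Hsub p a b i j Y).map (AddMonoidHom.fst (ZMod (p ^ a)) (ZMod (p ^ b)))
      = zmultiples (((p ^ i : ℕ) : ZMod (p ^ a))) := by
  ext u
  simp only [AddSubgroup.mem_map, AddSubgroup.mem_zmultiples_iff]
  constructor
  · rintro ⟨⟨u', v⟩, hm, rfl⟩
    rw [mem_Hsub] at hm
    obtain ⟨s, t, h1, -⟩ := hm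
    refine ⟨s, ?_⟩
    show s • ((p ^ i : ℕ) : ZMod (p ^ a)) = u'
    rw [zsmul_eq_mul, h1]; push_cast; ring
  · rintro ⟨s, rfl⟩
    refine ⟨(((s * p ^ i : ℤ) : ZMod (p ^ a)), ((s * Y + 0 * p ^ j : ℤ) : ZMod (p ^ b))), ?_, ?_⟩
    · exact mem_Hsub.mpr ⟨s, 0, rfl, rfl⟩
    · rw [zsmul_eq_mul]; push_cast; simp [mul_comm]

lemma zero_mem_Hsub_iff (hp : p.Prime) {i j Y : ℕ} (hia : i ≤ a)
    (hdvd : p ^ j ∣ p ^ (a - i) * Y) (v : ZMod (p ^ b)) :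
    ((0 : ZMod (p ^ a)), v) ∈ Hsub p a b i j Y
      ↔ v ∈ zmultiples (((p ^ j : ℕ) : ZMod (p ^ b))) := by
  obtain ⟨d, hd⟩ := hdvd
  have hdZ : (p : ℤ) ^ (a - i) * (Y : ℤ) = (p : ℤ) ^ j * (d : ℤ) := by exact_mod_cast hd
  rw [mem_Hsub]
  constructor
  · rintro ⟨s, t, h1, rfl⟩
    obtain ⟨s', rfl⟩ := cast_eq_zero_dvd hp hia s h1.symm
    rw [AddSubgroup.mem_zmultiples_iff]
    refine ⟨s' * d + t, ?_⟩
    have hZM : (p : ZMod (p ^ b)) ^ (a - i) * (Y : ZMod (p ^ b))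
        = (p : ZMod (p ^ b)) ^ j * (d : ZMod (p ^ b)) := by
      exact_mod_cast congrArg (Nat.cast : ℕ → ZMod (p ^ b)) hd
    rw [zsmul_eq_mul]
    push_cast
    linear_combination (-(s' : ZMod (p ^ b))) * hZM
  · rw [AddSubgroup.mem_zmultiples_iff]
    rintro ⟨t, rfl⟩
    refine ⟨0, t, by push_cast; simp, ?_⟩
    rw [zsmul_eq_mul]; push_cast; ring

lemma fiber_Hsub_iff (hp : p.Prime) {i j Y : ℕ} (hia : i ≤ a)
    (hdvd : p ^ j ∣ p ^ (a - i) * Y) (w : ZMod (p ^ b)) :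
    (((p ^ i : ℕ) : ZMod (p ^ a)), w) ∈ Hsub p a b i j Y
      ↔ w - ((Y : ℕ) : ZMod (p ^ b)) ∈ zmultiples (((p ^ j : ℕ) : ZMod (p ^ b))) := by
  obtain ⟨d, hd⟩ := hdvd
  have hdZ : (p : ℤ) ^ (a - i) * (Y : ℤ) = (p : ℤ) ^ j * (d : ℤ) := by exact_mod_cast hd
  rw [mem_Hsub]
  constructor
  · rintro ⟨s, t, h1, rfl⟩
    have h0 : (((s - 1) * p ^ i : ℤ) : ZMod (p ^ a)) = 0 := by
      push_cast at h1 ⊢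
      linear_combination -h1
    obtain ⟨s', hs'⟩ := cast_eq_zero_dvd hp hia (s - 1) h0
    rw [AddSubgroup.mem_zmultiples_iff]
    refine ⟨s' * d + t, ?_⟩
    have hZM : (p : ZMod (p ^ b)) ^ (a - i) * (Y : ZMod (p ^ b))
        = (p : ZMod (p ^ b)) ^ j * (d : ZMod (p ^ b)) := by
      exact_mod_cast congrArg (Nat.cast : ℕ → ZMod (p ^ b)) hd
    have hsZ : (s : ZMod (p ^ b)) - 1 = (p : ZMod (p ^ b)) ^ (a - i) * (s' : ZMod (p ^ b)) := by
      exact_mod_cast congrArg (fun x : ℤ => (x : ZMod (p ^ b))) hs'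
    rw [zsmul_eq_mul]
    push_cast
    linear_combination (-(Y : ZMod (p ^ b))) * hsZ + (-(s' : ZMod (p ^ b))) * hZM
  · rw [AddSubgroup.mem_zmultiples_iff]
    rintro ⟨t, ht⟩
    rw [zsmul_eq_mul] at ht
    refine ⟨1, t, by push_cast; ring, ?_⟩
    push_cast at ht ⊢
    linear_combination -ht

end

section
variable {p : ℕ}

lemma le_of_pow_mem (hp : p.Prime) {k i i' : ℕ} (hik' : i' ≤ k)
    (h : (((p ^ i : ℕ) : ZMod (p ^ k))) ∈ zmultiples (((p ^ i' : ℕ) : ZMod (p ^ k)))) :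
    i' ≤ i := by
  haveI : NeZero (p ^ k) := ⟨pow_ne_zero k hp.ne_zero⟩
  have h2 : (((p ^ i : ℕ) : ℤ) : ZMod (p ^ k)) ∈ zmultiples (((p ^ i' : ℕ) : ZMod (p ^ k))) := by
    rwa [Int.cast_natCast]
  rw [mem_zmul_iff (pow_dvd_pow p hik') _] at h2
  have h3 : p ^ i' ∣ p ^ i := by exact_mod_cast h2
  exact (Nat.pow_dvd_pow_iff_le_right hp.one_lt).mp h3

lemma pow_zmul_inj (hp : p.Prime) {k i i' : ℕ} (hik : i ≤ k) (hik' : i' ≤ k)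
    (h : zmultiples (((p ^ i : ℕ) : ZMod (p ^ k))) = zmultiples (((p ^ i' : ℕ) : ZMod (p ^ k)))) :
    i = i' := by
  have m1 : (((p ^ i : ℕ) : ZMod (p ^ k))) ∈ zmultiples (((p ^ i' : ℕ) : ZMod (p ^ k))) := by
    rw [← h]; exact mem_zmultiples _
  have m2 : (((p ^ i' : ℕ) : ZMod (p ^ k))) ∈ zmultiples (((p ^ i : ℕ) : ZMod (p ^ k))) := by
    rw [h]; exact mem_zmultiples _
  exact le_antisymm (le_of_pow_mem hp hik m2) (le_of_pow_mem hp hik' m1)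

end

lemma zsmul_natCast' {N : ℕ} (s : ℤ) (c : ℕ) :
    s • ((c : ZMod N)) = ((s * c : ℤ) : ZMod N) := by
  rw [zsmul_eq_mul]; push_cast; ring

lemma card_addsubgroups (p a b : ℕ) (hp : p.Prime) :
    Nat.card (AddSubgroup (ZMod (p ^ a) × ZMod (p ^ b)))
      = ∑ i ∈ Finset.range (a + 1), ∑ j ∈ Finset.range (b + 1), p ^ min (a - i) j := by
  haveI : NeZero (p ^ a) := ⟨pow_ne_zero a hp.ne_zero⟩
  haveI : NeZero (p ^ b) := ⟨pow_ne_zero b hp.ne_zero⟩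
  -- basic facts about the parameter `Y`
  have keylt : ∀ i j y : ℕ, i ≤ a → y < p ^ min (a - i) j →
      y * p ^ (j - (a - i)) < p ^ j := by
    intro i j y hia hy
    have he : min (a - i) j + (j - (a - i)) = j := by omega
    calc y * p ^ (j - (a - i)) < p ^ min (a - i) j * p ^ (j - (a - i)) :=
          (Nat.mul_lt_mul_right (pow_pos hp.pos _)).mpr hy
      _ = p ^ j := by rw [← pow_add, he]
  have keydvd : ∀ i j y : ℕ, p ^ j ∣ p ^ (a - i) * (y * p ^ (j - (a - i))) := by
    intro i j y
    have he : j ≤ (a - i) + (j - (a - i)) := by omega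
    have h2 : p ^ (a - i) * (y * p ^ (j - (a - i))) = y * p ^ ((a - i) + (j - (a - i))) := by
      rw [pow_add]; ring
    rw [h2]
    exact dvd_mul_of_dvd_right (pow_dvd_pow p he) y
  -- the parametrizing map
  set f : ((i : Fin (a + 1)) × (j : Fin (b + 1)) × Fin (p ^ min (a - (i : ℕ)) (j : ℕ))) →
      AddSubgroup (ZMod (p ^ a) × ZMod (p ^ b)) :=
    fun d => Hsub p a b d.1 d.2.1 ((d.2.2 : ℕ) * p ^ ((d.2.1 : ℕ) - (a - (d.1 : ℕ)))) with hf
  have hinj : Function.Injective f := by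
    rintro ⟨⟨i, hi⟩, ⟨j, hj⟩, ⟨y, hy⟩⟩ ⟨⟨i', hi'⟩, ⟨j', hj'⟩, ⟨y', hy'⟩⟩ h
    simp only [hf] at h
    set Y := y * p ^ (j - (a - i)) with hY
    set Y' := y' * p ^ (j' - (a - i')) with hY'
    have hia : i ≤ a := by omega
    have hia' : i' ≤ a := by omega
    have hjb : j ≤ b := by omega
    have hjb' : j' ≤ b := by omega
    -- recover i
    have hmap := congrArg (AddSubgroup.map (AddMonoidHom.fst (ZMod (p ^ a)) (ZMod (p ^ b)))) h
    rw [map_fst_Hsub, map_fst_Hsub] at hmap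
    have ei : i = i' := pow_zmul_inj hp hia hia' hmap
    subst ei
    -- recover j
    have ej : j = j' := by
      refine pow_zmul_inj hp hjb hjb' ?_
      ext v
      rw [← zero_mem_Hsub_iff hp hia (keydvd i j y) v, ← zero_mem_Hsub_iff hp hia
        (keydvd i j' y') v, h]
    subst ej
    -- recover y
    have hYmem : (((p ^ i : ℕ) : ZMod (p ^ a)), ((Y : ℕ) : ZMod (p ^ b))) ∈
        Hsub p a b i j Y := by
      rw [mem_Hsub]
      exact ⟨1, 0, by push_cast; ring, by push_cast; ring⟩
    rw [h] at hYmem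
    rw [fiber_Hsub_iff hp hia (keydvd i j y') _] at hYmem
    have hcast : ((Y : ℕ) : ZMod (p ^ b)) - ((Y' : ℕ) : ZMod (p ^ b))
        = (((Y : ℤ) - (Y' : ℤ) : ℤ) : ZMod (p ^ b)) := by push_cast; ring
    rw [hcast, mem_zmul_iff (pow_dvd_pow p hjb)] at hYmem
    have hd : ((p ^ j : ℕ) : ℤ) ∣ ((Y : ℤ) - (Y' : ℤ)) := by exact_mod_cast hYmem
    have hYlt : Y < p ^ j := keylt i j y hia hy
    have hYlt' : Y' < p ^ j := keylt i j y' hia hy'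
    have eY : Y = Y' := by
      have h0 : (Y : ℤ) - (Y' : ℤ) = 0 := by
        refine Int.eq_zero_of_abs_lt_dvd hd ?_
        have l1 : (Y : ℤ) < ((p ^ j : ℕ) : ℤ) := by exact_mod_cast hYlt
        have l2 : (Y' : ℤ) < ((p ^ j : ℕ) : ℤ) := by exact_mod_cast hYlt'
        rw [abs_sub_lt_iff]
        constructor <;> omega
      omega
    have ey : y = y' := by
      have := eY
      rw [hY, hY'] at this
      exact Nat.eq_of_mul_eq_mul_right (pow_pos hp.pos _) this
    subst ey
    rfl
  have hsurj : Function.Surjective f := by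
    intro H
    obtain ⟨i, hia, hfst⟩ := zmod_ppow_subgroup hp a
      (H.map (AddMonoidHom.fst (ZMod (p ^ a)) (ZMod (p ^ b))))
    obtain ⟨j, hjb, hker⟩ := zmod_ppow_subgroup hp b
      (H.comap (AddMonoidHom.inr (ZMod (p ^ a)) (ZMod (p ^ b))))
    have hpi : ((p ^ i : ℕ) : ZMod (p ^ a)) ∈
        H.map (AddMonoidHom.fst (ZMod (p ^ a)) (ZMod (p ^ b))) := by
      rw [hfst]; exact mem_zmultiples _
    obtain ⟨⟨u, w⟩, hwH, hu⟩ := hpi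
    have hu' : u = ((p ^ i : ℕ) : ZMod (p ^ a)) := hu
    set W := w.val with hWdef
    have hwW : ((W : ℕ) : ZMod (p ^ b)) = w := ZMod.natCast_rightInverse w
    have hfirst : ((p ^ (a - i) : ℕ) : ℤ) • u = 0 := by
      rw [hu', zsmul_natCast', ZMod.intCast_zmod_eq_zero_iff_dvd]
      push_cast
      rw [← pow_add]
      exact pow_dvd_pow _ (by omega)
    have hsm : (((p ^ (a - i) : ℕ) : ℤ) • ((u, w) : ZMod (p ^ a) × ZMod (p ^ b))) ∈ H :=
      AddSubgroup.zsmul_mem H hwH _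
    have hpair : (((p ^ (a - i) : ℕ) : ℤ) • ((u, w) : ZMod (p ^ a) × ZMod (p ^ b)))
        = ((0 : ZMod (p ^ a)), ((p ^ (a - i) : ℕ) : ℤ) • w) := by
      have : (((p ^ (a - i) : ℕ) : ℤ) • ((u, w) : ZMod (p ^ a) × ZMod (p ^ b)))
          = (((p ^ (a - i) : ℕ) : ℤ) • u, ((p ^ (a - i) : ℕ) : ℤ) • w) := rfl
      rw [this, hfirst]
    rw [hpair] at hsm
    have hmem2 : ((p ^ (a - i) : ℕ) : ℤ) • w
        ∈ H.comap (AddMonoidHom.inr (ZMod (p ^ a)) (ZMod (p ^ b))) := hsm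
    rw [hker] at hmem2
    have hW1 : ((p ^ (a - i) : ℕ) : ℤ) • w = (((p ^ (a - i) * W : ℤ)) : ZMod (p ^ b)) := by
      conv_lhs => rw [← hwW]
      rw [zsmul_natCast']
      push_cast
      ring_nf
    rw [hW1, mem_zmul_iff (pow_dvd_pow p hjb)] at hmem2
    have hdW : p ^ j ∣ p ^ (a - i) * W := by exact_mod_cast hmem2
    set Y := W % p ^ j with hYdef
    have hYlt : Y < p ^ j := Nat.mod_lt _ (pow_pos hp.pos j)
    have hYW : W = p ^ j * (W / p ^ j) + Y := (Nat.div_add_mod W (p ^ j)).symm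
    have hdY : p ^ j ∣ p ^ (a - i) * Y := by
      have h2 : p ^ (a - i) * W = p ^ j * (p ^ (a - i) * (W / p ^ j)) + p ^ (a - i) * Y := by
        conv_lhs => rw [hYW]
        ring
      have h3 : p ^ j ∣ p ^ j * (p ^ (a - i) * (W / p ^ j)) := Dvd.intro _ rfl
      rw [h2] at hdW
      exact (Nat.dvd_add_right h3).mp hdW
    have hdY2 : p ^ (j - (a - i)) ∣ Y := by
      rcases le_or_gt j (a - i) with hc | hc
      · simp [Nat.sub_eq_zero_of_le hc]
      · have h1 : p ^ (a - i) * p ^ (j - (a - i)) = p ^ j := by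
          rw [← pow_add]; congr 1; omega
        have h2 : p ^ (a - i) * p ^ (j - (a - i)) ∣ p ^ (a - i) * Y := by rw [h1]; exact hdY
        exact (mul_dvd_mul_iff_left (pow_ne_zero _ hp.ne_zero)).mp h2
    set y := Y / p ^ (j - (a - i)) with hydef
    have hyY : y * p ^ (j - (a - i)) = Y := Nat.div_mul_cancel hdY2
    have hylt : y < p ^ min (a - i) j := by
      have he : min (a - i) j + (j - (a - i)) = j := by omega
      have h2 : y * p ^ (j - (a - i)) < p ^ min (a - i) j * p ^ (j - (a - i)) := by
        rw [hyY, ← pow_add, he]; exact hYlt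
      exact Nat.lt_of_mul_lt_mul_right h2
    -- membership facts in H
    have hgen2 : ((0 : ZMod (p ^ a)), ((p ^ j : ℕ) : ZMod (p ^ b))) ∈ H := by
      have h0 : ((p ^ j : ℕ) : ZMod (p ^ b))
          ∈ H.comap (AddMonoidHom.inr (ZMod (p ^ a)) (ZMod (p ^ b))) := by
        rw [hker]; exact mem_zmultiples _
      exact h0
    have hsubY : w - ((Y : ℕ) : ZMod (p ^ b)) ∈ zmultiples (((p ^ j : ℕ) : ZMod (p ^ b))) := by
      obtain ⟨q, hq⟩ : ∃ q, W = p ^ j * q + Y := ⟨W / p ^ j, hYW⟩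
      have hcg := congrArg (Nat.cast : ℕ → ZMod (p ^ b)) hq
      have h1 : w - ((Y : ℕ) : ZMod (p ^ b))
          = (((p ^ j * q : ℕ) : ℤ) : ZMod (p ^ b)) := by
        conv_lhs => rw [← hwW]
        push_cast at hcg ⊢
        linear_combination hcg
      rw [h1, mem_zmul_iff (pow_dvd_pow p hjb)]
      push_cast
      exact Dvd.intro _ rfl
    have hgen1 : (((p ^ i : ℕ) : ZMod (p ^ a)), ((Y : ℕ) : ZMod (p ^ b))) ∈ H := by
      have h2 : ((0 : ZMod (p ^ a)), w - ((Y : ℕ) : ZMod (p ^ b))) ∈ H := by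
        have h0 : w - ((Y : ℕ) : ZMod (p ^ b))
            ∈ H.comap (AddMonoidHom.inr (ZMod (p ^ a)) (ZMod (p ^ b))) := by
          rw [hker]; exact hsubY
        exact h0
      have h3 := AddSubgroup.sub_mem H hwH h2
      have h4 : ((u, w) : ZMod (p ^ a) × ZMod (p ^ b))
          - ((0 : ZMod (p ^ a)), w - ((Y : ℕ) : ZMod (p ^ b)))
          = (((p ^ i : ℕ) : ZMod (p ^ a)), ((Y : ℕ) : ZMod (p ^ b))) := by
        have : ((u, w) : ZMod (p ^ a) × ZMod (p ^ b))
            - ((0 : ZMod (p ^ a)), w - ((Y : ℕ) : ZMod (p ^ b)))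
            = (u - 0, w - (w - ((Y : ℕ) : ZMod (p ^ b)))) := rfl
        rw [this, hu', sub_zero, sub_sub_cancel]
      rwa [h4] at h3
    refine ⟨⟨⟨i, by omega⟩, ⟨j, by omega⟩, ⟨y, hylt⟩⟩, ?_⟩
    simp only [hf]
    show Hsub p a b i j (y * p ^ (j - (a - i))) = H
    rw [hyY]
    apply le_antisymm
    · rw [Hsub, AddSubgroup.closure_le]
      exact Set.pair_subset hgen1 hgen2
    · rintro ⟨u0, v0⟩ hx
      have hu0 : u0 ∈ zmultiples (((p ^ i : ℕ) : ZMod (p ^ a))) := by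
        rw [← hfst]; exact ⟨(u0, v0), hx, rfl⟩
      obtain ⟨s, hs⟩ := AddSubgroup.mem_zmultiples_iff.mp hu0
      have h4 : ((u0, v0) : ZMod (p ^ a) × ZMod (p ^ b))
          - s • (((p ^ i : ℕ) : ZMod (p ^ a)), ((Y : ℕ) : ZMod (p ^ b))) ∈ H :=
        AddSubgroup.sub_mem H hx (AddSubgroup.zsmul_mem H hgen1 s)
      have h5 : ((u0, v0) : ZMod (p ^ a) × ZMod (p ^ b))
          - s • (((p ^ i : ℕ) : ZMod (p ^ a)), ((Y : ℕ) : ZMod (p ^ b)))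
          = ((0 : ZMod (p ^ a)), v0 - s • ((Y : ℕ) : ZMod (p ^ b))) := by
        have : ((u0, v0) : ZMod (p ^ a) × ZMod (p ^ b))
            - s • (((p ^ i : ℕ) : ZMod (p ^ a)), ((Y : ℕ) : ZMod (p ^ b)))
            = (u0 - s • ((p ^ i : ℕ) : ZMod (p ^ a)), v0 - s • ((Y : ℕ) : ZMod (p ^ b))) := rfl
        rw [this, hs, sub_self]
      rw [h5] at h4
      have h6 : v0 - s • ((Y : ℕ) : ZMod (p ^ b))
          ∈ zmultiples (((p ^ j : ℕ) : ZMod (p ^ b))) := by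
        rw [← hker]; exact h4
      obtain ⟨t, ht⟩ := AddSubgroup.mem_zmultiples_iff.mp h6
      rw [mem_Hsub]
      refine ⟨s, t, ?_, ?_⟩
      · rw [← hs, zsmul_natCast']; push_cast; ring_nf
      · rw [zsmul_natCast'] at ht
        have hs2 : s • ((Y : ℕ) : ZMod (p ^ b)) = ((s * Y : ℤ) : ZMod (p ^ b)) :=
          zsmul_natCast' s Y
        rw [hs2] at ht
        push_cast at ht ⊢
        linear_combination -ht
  rw [← Nat.card_eq_of_bijective f ⟨hinj, hsurj⟩, Nat.card_eq_fintype_card]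
  simp only [Fintype.card_sigma, Fintype.card_fin]
  rw [← Fin.sum_univ_eq_sum_range
    (fun i => ∑ j ∈ Finset.range (b + 1), p ^ (min (a - i) j)) (a + 1)]
  refine Finset.sum_congr rfl fun x _ => ?_
  rw [← Fin.sum_univ_eq_sum_range (fun j => p ^ (min (a - (x : ℕ)) j)) (b + 1)]

lemma alg1 (q : ℤ) {b c : ℕ} (hcb : c ≤ b) :
    ∑ j ∈ Finset.range (b + 1), q ^ (min c j)
      = (∑ j ∈ Finset.range c, q ^ j) + ((b : ℤ) + 1 - c) * q ^ c := by
  rw [Finset.range_eq_Ico, ← Finset.sum_Ico_consecutive _ (Nat.zero_le c)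
    (by omega : c ≤ b + 1)]
  congr 1
  · rw [← Finset.range_eq_Ico]
    exact Finset.sum_congr rfl fun j hj =>
      by rw [min_eq_right (le_of_lt (Finset.mem_range.mp hj))]
  · rw [Finset.sum_congr rfl (fun j hj => by
      rw [min_eq_left (Finset.mem_Ico.mp hj).1]), Finset.sum_const, Nat.card_Ico,
      nsmul_eq_mul]
    congr 1
    push_cast [Nat.cast_sub (by omega : c ≤ b + 1)]
    ring

lemma alg2 (q : ℤ) (b : ℕ) : ∀ a : ℕ, a ≤ b →
    (∑ c ∈ Finset.range (a + 1),
        ((∑ j ∈ Finset.range c, q ^ j) + ((b : ℤ) + 1 - c) * q ^ c)) * (q - 1) ^ 2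
      = ((b : ℤ) - a + 1) * q ^ (a + 2) - ((b : ℤ) - a - 1) * q ^ (a + 1)
        - ((b : ℤ) + a + 3) * q + ((b : ℤ) + a + 1) := by
  intro a
  induction a with
  | zero =>
    intro _
    simp only [Finset.sum_range_succ, Finset.sum_range_zero]
    push_cast
    ring
  | succ a IH =>
    intro hab
    rw [Finset.sum_range_succ, add_mul, IH (by omega)]
    have hG : (∑ j ∈ Finset.range (a + 1), q ^ j) * (q - 1) = q ^ (a + 1) - 1 :=
      geom_sum_mul q (a + 1)
    push_cast
    linear_combination (q - 1) * hG

theorem card_subgroups_Zpa_Zpb (p a b : ℕ) (hp : p.Prime) (ha : 1 ≤ a) (hab : a ≤ b) :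
    (Nat.card (Subgroup (Multiplicative (ZMod (p ^ a) × ZMod (p ^ b)))) : ℤ) * (p - 1) ^ 2 =
      ((b : ℤ) - a + 1) * p ^ (a + 2) - ((b : ℤ) - a - 1) * p ^ (a + 1)
        - ((b : ℤ) + a + 3) * p + ((b : ℤ) + a + 1) := by
  have hequiv : Nat.card (Subgroup (Multiplicative (ZMod (p ^ a) × ZMod (p ^ b))))
      = Nat.card (AddSubgroup (ZMod (p ^ a) × ZMod (p ^ b))) :=
    (Nat.card_congr AddSubgroup.toSubgroup.toEquiv).symm
  rw [hequiv, card_addsubgroups p a b hp]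
  push_cast
  have hre : ∑ i ∈ Finset.range (a + 1), ∑ j ∈ Finset.range (b + 1), (p : ℤ) ^ (min (a - i) j)
      = ∑ c ∈ Finset.range (a + 1), ∑ j ∈ Finset.range (b + 1), (p : ℤ) ^ (min c j) := by
    rw [← Finset.sum_range_reflect
      (fun c => ∑ j ∈ Finset.range (b + 1), (p : ℤ) ^ (min c j)) (a + 1)]
    simp only [Nat.add_sub_cancel]
  rw [hre, Finset.sum_congr rfl (fun c hc => alg1 (p : ℤ)
    (le_trans (Nat.lt_succ_iff.mp (Finset.mem_range.mp hc)) hab))]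
  exact alg2 (p : ℤ) b a hab
end

section
/- Let G be a group of order p^a for a prime p, and let 0 ≤ i ≤ a. Then the number of subgroups of G of order p^i is congruent to 1 modulo p. -/
open MulAction

namespace Wielandt

lemma nat_card_orbit_mul {G X : Type*} [Group G] [MulAction G X] (b : X) :
    Nat.card (orbit G b) * Nat.card (stabilizer G b) = Nat.card G := by
  rw [← Nat.card_prod]
  exact Nat.card_congr (orbitProdStabilizerEquivGroup G b)

lemma card_eq_sum_card_orbits (H X : Type*) [Group H] [MulAction H X] [Finite X]
    [Fintype (orbitRel.Quotient H X)] :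
    Nat.card X = ∑ ω : orbitRel.Quotient H X, Nat.card ω.orbit := by
  classical
  letI := Fintype.ofFinite X
  letI : ∀ ω : orbitRel.Quotient H X, Fintype ω.orbit := fun ω => Fintype.ofFinite _
  rw [Nat.card_congr (selfEquivSigmaOrbits' H X), Nat.card_eq_fintype_card,
    Fintype.card_sigma]
  exact Finset.sum_congr rfl fun ω _ => by rw [Nat.card_eq_fintype_card]

lemma card_dvd_of_free {H X : Type*} [Group H] [MulAction H X] [Finite X]
    (hf : ∀ (h : H) (x : X), h • x = x → h = 1) : Nat.card H ∣ Nat.card X := by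
  rcases isEmpty_or_nonempty X with hX | hX
  · simp [Nat.card_of_isEmpty]
  obtain ⟨x0⟩ := hX
  have hHfin : Finite H := Finite.of_injective (fun h => h • x0) (by
    intro h h' e
    have h1 : (h'⁻¹ * h) • x0 = x0 := by
      rw [mul_smul]; simp only at e; rw [e, inv_smul_smul]
    have := hf _ _ h1
    rwa [inv_mul_eq_one, eq_comm] at this)
  letI : Fintype (orbitRel.Quotient H X) := Fintype.ofFinite _
  rw [card_eq_sum_card_orbits H X]
  refine Finset.dvd_sum fun ω _ => ?_
  rw [orbitRel.Quotient.orbit_eq_orbit_out ω Quotient.out_eq']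
  have h1 : stabilizer H (ω.out : X) = ⊥ := by
    ext h
    simp only [mem_stabilizer_iff, Subgroup.mem_bot]
    exact ⟨fun hh => hf _ _ hh, by rintro rfl; exact one_smul _ _⟩
  have h2 := nat_card_orbit_mul (G := H) (ω.out : X)
  rw [h1] at h2
  simp only [Subgroup.card_bot, mul_one] at h2
  rw [h2]


open scoped Pointwise

variable {G : Type*} [Group G] [DecidableEq G]

instance finsetCardAction (k : ℕ) : MulAction G {S : Finset G // S.card = k} where
  smul g S := ⟨g • S.1, by rw [Finset.card_smul_finset]; exact S.2⟩
  one_smul S := Subtype.ext (one_smul G S.1)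
  mul_smul g h S := Subtype.ext (mul_smul g h S.1)

@[simp] lemma smul_coe {k : ℕ} (g : G) (S : {S : Finset G // S.card = k}) :
    (g • S).1 = g • S.1 := rfl

lemma stab_card_dvd {k : ℕ} (S : {S : Finset G // S.card = k}) :
    Nat.card (stabilizer G S) ∣ k := by
  have hmem : ∀ (h : stabilizer G S) (x : G), x ∈ S.1 → (h : G) * x ∈ S.1 := by
    intro h x hx
    have h2 : (h : G) • S.1 = S.1 := congrArg Subtype.val h.2
    rw [← h2]
    exact Finset.smul_mem_smul_finset hx
  letI act : MulAction (stabilizer G S) {x : G // x ∈ S.1} :=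
    { smul := fun h x => ⟨(h : G) * x.1, hmem h x.1 x.2⟩
      one_smul := fun x => Subtype.ext (one_mul _)
      mul_smul := fun g h x => Subtype.ext (mul_assoc _ _ _) }
  have free : ∀ (h : stabilizer G S) (x : {x : G // x ∈ S.1}),
      h • x = x → h = 1 := by
    intro h x hx
    have h3 : (h : G) * x.1 = x.1 := congrArg Subtype.val hx
    exact Subtype.ext (mul_right_cancel (h3.trans (one_mul x.1).symm))
  have hdvd := @card_dvd_of_free (stabilizer G S) {x : G // x ∈ S.1} _ act _ free
  have hS : Nat.card {x : G // x ∈ S.1} = k := by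
    rw [Nat.card_eq_fintype_card]
    simpa using S.2
  rwa [hS] at hdvd

end Wielandt
section Key
open MulAction
open scoped Pointwise
namespace Wielandt
variable {G : Type*} [Group G] [DecidableEq G]
variable [Fintype G]

noncomputable def subFinset (H : Subgroup G) : Finset G :=
  @Set.toFinset _ (H : Set G) (Set.toFinite _).fintype

@[simp] lemma mem_subFinset {H : Subgroup G} {x : G} : x ∈ subFinset H ↔ x ∈ H :=
  @Set.mem_toFinset _ _ (Set.toFinite _).fintype _

lemma subFinset_card (H : Subgroup G) : (subFinset H).card = Nat.card H := by
  rw [subFinset, Set.toFinset_card]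
  exact (@Nat.card_eq_fintype_card _ (Set.toFinite (H : Set G)).fintype).symm

lemma stabilizer_subFinset {k : ℕ} (H : Subgroup G) (hH : (subFinset H).card = k) :
    stabilizer G (⟨subFinset H, hH⟩ : {S : Finset G // S.card = k}) = H := by
  ext g
  simp only [mem_stabilizer_iff]
  constructor
  · intro hg
    have hg1 : g • subFinset H = subFinset H := congrArg Subtype.val hg
    have h1 : (1 : G) ∈ subFinset H := mem_subFinset.2 H.one_mem
    have h2 : g • (1 : G) ∈ g • subFinset H := Finset.smul_mem_smul_finset h1
    rw [hg1] at h2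
    simpa using h2
  · intro hg
    apply Subtype.ext
    show g • subFinset H = subFinset H
    ext x
    simp only [Finset.mem_smul_finset, mem_subFinset, smul_eq_mul]
    constructor
    · rintro ⟨y, hy, rfl⟩; exact H.mul_mem hg hy
    · intro hx; exact ⟨g⁻¹ * x, H.mul_mem (H.inv_mem hg) hx, by simp⟩

lemma eq_of_smul_subFinset {H K : Subgroup G} {g : G}
    (h : g • subFinset K = subFinset H) : K = H := by
  have hmem : ∀ x, x ∈ subFinset H ↔ ∃ y ∈ subFinset K, g * y = x := by
    intro x
    rw [← h]
    simp [Finset.mem_smul_finset]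
  have hg : g ∈ K := by
    obtain ⟨y, hy, hgy⟩ := (hmem 1).1 (mem_subFinset.2 H.one_mem)
    have : g = y⁻¹ := eq_inv_of_mul_eq_one_left hgy
    exact this ▸ K.inv_mem (mem_subFinset.1 hy)
  ext x
  constructor
  · intro hx
    have : x ∈ subFinset H :=
      (hmem x).2 ⟨g⁻¹ * x, mem_subFinset.2 (K.mul_mem (K.inv_mem hg) hx), by simp⟩
    exact mem_subFinset.1 this
  · intro hx
    obtain ⟨y, hy, rfl⟩ := (hmem x).1 (mem_subFinset.2 hx)
    exact K.mul_mem hg (mem_subFinset.1 hy)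

lemma exists_conj_subgroup {k : ℕ} (b : {S : Finset G // S.card = k}) {s : G} (hs : s ∈ b.1)
    (hfull : Nat.card (stabilizer G b) = k) :
    ∃ K : Subgroup G, Nat.card K = k ∧ s⁻¹ • b.1 = subFinset K := by
  set H := stabilizer G b with hHdef
  have hsub : Finset.image (· * s) (subFinset H) ⊆ b.1 := by
    intro x hx
    obtain ⟨h, hh, rfl⟩ := Finset.mem_image.1 hx
    have hmem : (h : G) ∈ H := mem_subFinset.1 hh
    have hb : h • b.1 = b.1 := congrArg Subtype.val (mem_stabilizer_iff.1 hmem)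
    have : h • s ∈ h • b.1 := Finset.smul_mem_smul_finset hs
    rw [hb] at this
    simpa using this
  have hcardim : (Finset.image (· * s) (subFinset H)).card = k := by
    rw [Finset.card_image_of_injective _ (mul_left_injective s), subFinset_card, hfull]
  have hbeq : b.1 = Finset.image (· * s) (subFinset H) :=
    (Finset.eq_of_subset_of_card_le hsub (by rw [hcardim, b.2])).symm
  refine ⟨Subgroup.map (MulAut.conj s⁻¹).toMonoidHom H, ?_, ?_⟩
  · rw [← hfull]
    exact (Nat.card_congr (H.equivMapOfInjective _ (MulAut.conj s⁻¹).injective).toEquiv).symm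
  · ext x
    simp only [Finset.mem_smul_finset, mem_subFinset, Subgroup.mem_map, hbeq,
      Finset.mem_image, smul_eq_mul]
    constructor
    · rintro ⟨y, ⟨h, hh, rfl⟩, rfl⟩
      exact ⟨h, hh, by simp [MulAut.conj_apply]; group⟩
    · rintro ⟨h, hh, rfl⟩
      exact ⟨h * s, ⟨h, hh, rfl⟩, by simp [MulAut.conj_apply]; group⟩

lemma key {p a i : ℕ} (hp : p.Prime) (hcard : Nat.card G = p ^ a) (hi : i ≤ a) :
    (p ^ a).choose (p ^ i) ≡
      Nat.card {H : Subgroup G // Nat.card H = p ^ i} * p ^ (a - i) [MOD p ^ (a - i + 1)] := by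
  classical
  set k := p ^ i with hk
  set Ω := {S : Finset G // S.card = k} with hΩdef
  letI : Fintype (orbitRel.Quotient G Ω) := Fintype.ofFinite _
  have hΩ : Nat.card Ω = (p ^ a).choose k := by
    rw [Nat.card_eq_fintype_card, Fintype.card_finset_len, ← Nat.card_eq_fintype_card, hcard]
  -- orbit analysis
  have hsplit : ∀ ω : orbitRel.Quotient G Ω, ∃ j, j ≤ i ∧
      Nat.card (stabilizer G (ω.out : Ω)) = p ^ j ∧ Nat.card ω.orbit = p ^ (a - j) := by
    intro ω
    obtain ⟨j, hj, hstab⟩ := (Nat.dvd_prime_pow hp).1 (stab_card_dvd (ω.out : Ω))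
    refine ⟨j, hj, hstab, ?_⟩
    have horb : Nat.card ω.orbit = Nat.card (orbit G (ω.out : Ω)) := by
      rw [orbitRel.Quotient.orbit_eq_orbit_out ω Quotient.out_eq']
    have hos := nat_card_orbit_mul (G := G) (ω.out : Ω)
    rw [hstab, hcard] at hos
    have : p ^ (a - j) * p ^ j = p ^ a := by
      rw [← pow_add, Nat.sub_add_cancel (hj.trans hi)]
    rw [horb]
    exact Nat.eq_of_mul_eq_mul_right (pow_pos hp.pos j) (hos.trans this.symm)
  set F := Finset.univ.filter (fun ω : orbitRel.Quotient G Ω =>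
    Nat.card ω.orbit = p ^ (a - i)) with hF
  -- bijection between subgroups of order p^i and full orbits
  have hbij : Nat.card {H : Subgroup G // Nat.card H = k} = F.card := by
    rw [← Fintype.card_subtype, ← Nat.card_eq_fintype_card]
    have horbfull : ∀ (H : Subgroup G) (hH : Nat.card H = k),
        Nat.card (orbitRel.Quotient.orbit
          (Quotient.mk'' (⟨subFinset H, by rw [subFinset_card, hH]⟩ : Ω) :
            orbitRel.Quotient G Ω)) = p ^ (a - i) := by
      intro H hH
      set b : Ω := ⟨subFinset H, by rw [subFinset_card, hH]⟩ with hb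
      have h1 : orbitRel.Quotient.orbit (Quotient.mk'' b : orbitRel.Quotient G Ω) =
          orbit G b := orbitRel.Quotient.orbit_mk b
      have hos := nat_card_orbit_mul (G := G) b
      rw [stabilizer_subFinset H, hH, hcard] at hos
      have h2 : p ^ (a - i) * k = p ^ a := by
        rw [hk, ← pow_add, Nat.sub_add_cancel hi]
      have := Nat.eq_of_mul_eq_mul_right (show 0 < k from hk ▸ pow_pos hp.pos i)
        (hos.trans h2.symm)
      rw [h1] at *
      exact this
    refine Nat.card_eq_of_bijective
      (fun H => ⟨Quotient.mk'' ⟨subFinset H.1, by rw [subFinset_card, H.2]⟩,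
        horbfull H.1 H.2⟩) ⟨?_, ?_⟩
    · -- injective
      rintro ⟨H, hH⟩ ⟨K, hK⟩ he
      have he' : (Quotient.mk'' (⟨subFinset H, by rw [subFinset_card, hH]⟩ : Ω) :
          orbitRel.Quotient G Ω) = Quotient.mk'' ⟨subFinset K, by rw [subFinset_card, hK]⟩ := by
        simpa using congrArg Subtype.val he
      have hrel := Quotient.exact' he'
      rw [Setoid.comm'] at hrel
      obtain ⟨g, hg⟩ := hrel
      have hg1 : g • subFinset H = subFinset K :=
        congrArg Subtype.val hg
      exact Subtype.ext (eq_of_smul_subFinset hg1)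
    · -- surjective
      rintro ⟨ω, hω⟩
      obtain ⟨j, hj, hstab, horb⟩ := hsplit ω
      have hij : j = i := by
        have := horb.symm.trans hω
        have := Nat.pow_right_injective hp.two_le this
        omega
      rw [hij, ← hk] at hstab
      set b : Ω := ω.out with hbdef
      have hbne : b.1.Nonempty := by
        rw [← Finset.card_pos, b.2, hk]
        exact pow_pos hp.pos i
      obtain ⟨s, hs⟩ := hbne
      obtain ⟨K, hK, hsb⟩ := exists_conj_subgroup b hs hstab
      refine ⟨⟨K, hK⟩, ?_⟩
      apply Subtype.ext
      show (Quotient.mk'' ⟨subFinset K, _⟩ : orbitRel.Quotient G Ω) = ω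
      have hout : (Quotient.mk'' b : orbitRel.Quotient G Ω) = ω := Quotient.out_eq' ω
      rw [← hout]
      apply Quotient.sound'
      rw [orbitRel_apply]
      exact mem_orbit_iff.2 ⟨s⁻¹, Subtype.ext hsb⟩
  -- sum over orbits
  have hsum : Nat.card Ω = F.card * p ^ (a - i) +
      ∑ ω ∈ Finset.univ.filter (fun ω : orbitRel.Quotient G Ω =>
        ¬ Nat.card ω.orbit = p ^ (a - i)), Nat.card ω.orbit := by
    rw [card_eq_sum_card_orbits G Ω,
      ← Finset.sum_filter_add_sum_filter_not Finset.univ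
        (fun ω : orbitRel.Quotient G Ω => Nat.card ω.orbit = p ^ (a - i))]
    congr 1
    rw [Finset.sum_congr rfl (fun ω hω => (Finset.mem_filter.1 hω).2), Finset.sum_const,
      smul_eq_mul]
  have hrest : p ^ (a - i + 1) ∣
      ∑ ω ∈ Finset.univ.filter (fun ω : orbitRel.Quotient G Ω =>
        ¬ Nat.card ω.orbit = p ^ (a - i)), Nat.card ω.orbit := by
    refine Finset.dvd_sum fun ω hω => ?_
    have hnot := (Finset.mem_filter.1 hω).2
    obtain ⟨j, hj, hstab, horb⟩ := hsplit ω
    have hji : j ≠ i := by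
      rintro rfl
      exact hnot horb
    rw [horb]
    exact pow_dvd_pow p (by omega)
  rw [← hΩ, hsum, ← hbij]
  have h0 : ∑ ω ∈ Finset.univ.filter (fun ω : orbitRel.Quotient G Ω =>
      ¬ Nat.card ω.orbit = p ^ (a - i)), Nat.card ω.orbit ≡ 0 [MOD p ^ (a - i + 1)] :=
    (Nat.modEq_zero_iff_dvd).2 hrest
  calc Nat.card {H : Subgroup G // Nat.card H = k} * p ^ (a - i) +
        ∑ ω ∈ Finset.univ.filter (fun ω : orbitRel.Quotient G Ω =>
          ¬ Nat.card ω.orbit = p ^ (a - i)), Nat.card ω.orbit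
      ≡ Nat.card {H : Subgroup G // Nat.card H = k} * p ^ (a - i) + 0 [MOD p ^ (a - i + 1)] :=
        Nat.ModEq.add_left _ h0
    _ = Nat.card {H : Subgroup G // Nat.card H = k} * p ^ (a - i) := add_zero _

end Wielandt
end Key
section Cyclic
namespace Wielandt

lemma cyclic_count (C : Type*) [CommGroup C] [IsCyclic C] [Fintype C] {p a i : ℕ}
    (hp : p.Prime) (hcard : Nat.card C = p ^ a) (hi : i ≤ a) :
    Nat.card {H : Subgroup C // Nat.card H = p ^ i} = 1 := by
  classical
  haveI : Fact p.Prime := ⟨hp⟩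
  obtain ⟨K, hK⟩ := Sylow.exists_subgroup_card_pow_prime (G := C) p
    (n := i) (by rw [hcard]; exact pow_dvd_pow p hi)
  have huniq : ∀ H : Subgroup C, Nat.card H = p ^ i →
      H = (powMonoidHom (p ^ i) : C →* C).ker := by
    intro H hH
    apply Subgroup.eq_of_le_of_card_ge
    · intro x hx
      have h1 : (⟨x, hx⟩ : H) ^ (p ^ i) = 1 := by rw [← hH]; exact pow_card_eq_one'
      have h2 : x ^ (p ^ i) = 1 := by simpa using congrArg Subtype.val h1
      simpa [MonoidHom.mem_ker, powMonoidHom_apply] using h2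
    · have hle := IsCyclic.card_pow_eq_one_le (α := C) (n := p ^ i) (pow_pos hp.pos i)
      have hcardker : Nat.card ((powMonoidHom (p ^ i) : C →* C).ker) =
          ({a : C | a ^ (p ^ i) = 1} : Finset C).card := by
        rw [Nat.card_eq_fintype_card]
        rw [Fintype.card_subtype]
        congr 1
        ext x
        simp [MonoidHom.mem_ker, powMonoidHom_apply]
      rw [hcardker, hH]
      exact hle
  rw [Nat.card_eq_one_iff_unique]
  constructor
  · constructor
    rintro ⟨H, hH⟩ ⟨H', hH'⟩
    apply Subtype.ext
    show H = H'
    rw [huniq H hH, huniq H' hH']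
  · exact ⟨⟨K, hK⟩⟩

end Wielandt
end Cyclic

theorem wielandt_subgroup_count (G : Type*) [Group G] (p a i : ℕ) (hp : p.Prime)
    (hcard : Nat.card G = p ^ a) (hi : i ≤ a) :
    Nat.card {H : Subgroup G // Nat.card H = p ^ i} ≡ 1 [MOD p] := by
  haveI : Fact p.Prime := ⟨hp⟩
  have hfin : Finite G := Nat.finite_of_card_ne_zero (by rw [hcard]; exact (pow_pos hp.pos a).ne')
  letI := Fintype.ofFinite G
  letI := Classical.decEq G
  have h1 := Wielandt.key (G := G) hp hcard hi
  haveI : NeZero (p ^ a) := ⟨(pow_pos hp.pos a).ne'⟩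
  have hC : Nat.card (Multiplicative (ZMod (p ^ a))) = p ^ a := by
    rw [Nat.card_congr Multiplicative.toAdd, Nat.card_zmod]
  have h2 := Wielandt.key (G := Multiplicative (ZMod (p ^ a))) hp hC hi
  rw [Wielandt.cyclic_count _ hp hC hi, one_mul] at h2
  have h3 : Nat.card {H : Subgroup G // Nat.card H = p ^ i} * p ^ (a - i) ≡
      1 * p ^ (a - i) [MOD p * p ^ (a - i)] := by
    rw [one_mul, ← pow_succ']
    exact h1.symm.trans h2
  exact Nat.ModEq.mul_right_cancel' (pow_ne_zero _ hp.pos.ne') h3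
end

section
/- Let G be a non-cyclic group of order 2^a with a ≥ 4. Then the number of subgroups of G is at least 3a − 1. -/
open Subgroup
open scoped Pointwise

namespace TwoGroupAux

variable {G : Type*} [Group G]

lemma card_pow_two {n : ℕ} (hcard : Nat.card G = 2 ^ n) (H : Subgroup G) :
    ∃ k ≤ n, Nat.card H = 2 ^ k := by
  have h := H.card_subgroup_dvd_card
  rw [hcard] at h
  exact (Nat.dvd_prime_pow Nat.prime_two).mp h

lemma orderOf_pow_two {n : ℕ} (hcard : Nat.card G = 2 ^ n) (g : G) :
    ∃ k ≤ n, orderOf g = 2 ^ k := by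
  have h := _root_.orderOf_dvd_natCard g
  rw [hcard] at h
  exact (Nat.dvd_prime_pow Nat.prime_two).mp h

lemma exists_three_max {n : ℕ} (hn : 1 ≤ n) (hcard : Nat.card G = 2 ^ n)
    (hnc : ¬IsCyclic G) :
    ∃ M1 M2 M3 : Subgroup G,
      (Nat.card M1 = 2 ^ (n - 1) ∧ Nat.card M2 = 2 ^ (n - 1) ∧ Nat.card M3 = 2 ^ (n - 1)) ∧
      (M1 ≠ M2 ∧ M1 ≠ M3 ∧ M2 ≠ M3) := by
  have hfin : Finite G := Nat.finite_of_card_ne_zero (by rw [hcard]; positivity)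
  haveI := Fact.mk Nat.prime_two
  have hmem : ∀ g : G, ∃ M : Subgroup G, Nat.card M = 2 ^ (n - 1) ∧ g ∈ M := by
    intro g
    obtain ⟨k, hk, hog⟩ := orderOf_pow_two hcard g
    have hkn : k ≤ n - 1 := by
      rcases Nat.lt_or_ge k n with h | h
      · omega
      · exact absurd (isCyclic_of_orderOf_eq_card g (by rw [hcard, hog]; congr 1; omega)) hnc
    obtain ⟨K, hK, hle⟩ := Sylow.exists_subgroup_card_pow_prime_le 2
      (by rw [hcard]; exact pow_dvd_pow 2 (by omega)) (zpowers g)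
      (by rw [Nat.card_zpowers, hog]) hkn
    exact ⟨K, hK, hle (mem_zpowers g)⟩
  have hne : ∀ M : Subgroup G, Nat.card M = 2 ^ (n - 1) → ∃ x, x ∉ M := by
    intro M hM
    by_contra h
    push_neg at h
    have hTop : M = ⊤ := by ext x; simp [h x]
    rw [hTop, card_top, hcard] at hM
    have := Nat.pow_right_injective (le_refl 2) hM
    omega
  obtain ⟨M1, hM1, -⟩ := hmem 1
  obtain ⟨x, hx1⟩ := hne M1 hM1
  obtain ⟨M2, hM2, hxM2⟩ := hmem x
  have h12 : M1 ≠ M2 := fun h => hx1 (h ▸ hxM2)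
  have hy : ∃ y, y ∉ M1 ∧ y ∉ M2 := by
    by_contra h
    push_neg at h
    obtain ⟨b, hb2⟩ := hne M2 hM2
    have hb1 : b ∈ M1 := by
      rcases Classical.em (b ∈ M1) with h' | h'
      · exact h'
      · exact absurd (h b h') hb2
    rcases Classical.em (x * b ∈ M1) with h' | h'
    · exact hx1 (by simpa using M1.mul_mem h' (M1.inv_mem hb1))
    · have := h _ h'
      exact hb2 (by simpa using M2.mul_mem (M2.inv_mem hxM2) this)
  obtain ⟨y, hy1, hy2⟩ := hy
  obtain ⟨M3, hM3, hyM3⟩ := hmem y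
  exact ⟨M1, M2, M3, ⟨hM1, hM2, hM3⟩, h12, fun h => hy1 (h ▸ hyM3), fun h => hy2 (h ▸ hyM3)⟩



lemma exists_gen [Finite G] {H : Subgroup G} (hc : IsCyclic H) :
    ∃ m ∈ H, orderOf m = Nat.card H ∧ ∀ y ∈ H, ∃ j : ℕ, y = m ^ j := by
  obtain ⟨g, hg⟩ := hc.exists_generator
  have htop : zpowers g = ⊤ := by ext x; simpa using hg x
  have hord : orderOf g = Nat.card H := by
    rw [← Nat.card_zpowers, htop, card_top]
  refine ⟨(g : G), g.2, ?_, ?_⟩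
  · rw [← hord]
    exact (orderOf_injective H.subtype H.subtype_injective g).symm ▸ rfl
  · intro y hy
    have hmem : (⟨y, hy⟩ : H) ∈ Submonoid.powers g := mem_powers_iff_mem_zpowers.mpr (hg _)
    obtain ⟨j, hj⟩ := hmem
    exact ⟨j, by simpa using congrArg Subtype.val hj.symm⟩

lemma index_of_card [Finite G] {n k : ℕ} (hcard : Nat.card G = 2 ^ n) {M : Subgroup G}
    (hM : Nat.card M = 2 ^ k) (hk : k ≤ n) : M.index = 2 ^ (n - k) := by
  have h1 := M.card_mul_index
  rw [hM, hcard] at h1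
  have h2 : (2:ℕ) ^ n = 2 ^ k * 2 ^ (n - k) := by rw [← pow_add]; congr 1; omega
  rw [h2] at h1
  exact Nat.eq_of_mul_eq_mul_left (by positivity) h1

lemma orderOf_sq [Finite G] {m : G} {k : ℕ} (hk : 1 ≤ k) (h : orderOf m = 2 ^ k) :
    orderOf (m ^ 2) = 2 ^ (k - 1) := by
  rw [orderOf_pow, h]
  have hg : Nat.gcd (2 ^ k) 2 = 2 := by
    rw [Nat.gcd_comm]; exact Nat.gcd_eq_left (dvd_pow_self 2 (by omega))
  rw [hg]
  have h2 : (2:ℕ) ^ k = 2 ^ (k - 1) * 2 := by rw [← pow_succ]; congr 1; omega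
  rw [h2]
  exact Nat.mul_div_cancel _ (by norm_num)

lemma exists_not_mem [Finite G] {M : Subgroup G} (h : Nat.card M ≠ Nat.card G) :
    ∃ x, x ∉ M := by
  by_contra hc
  push_neg at hc
  exact h (by rw [show M = ⊤ by ext x; simp [hc x], card_top])


lemma exp_bound {n : ℕ} (hcard : Nat.card G = 2 ^ n) (hnc : ¬IsCyclic G) (g : G) :
    g ^ 2 ^ (n - 1) = 1 := by
  have hfin : Finite G := Nat.finite_of_card_ne_zero (by rw [hcard]; positivity)
  obtain ⟨k, hk, hog⟩ := orderOf_pow_two hcard g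
  have hkn : k ≤ n - 1 := by
    rcases Nat.lt_or_ge k n with h | h
    · omega
    · exact absurd (isCyclic_of_orderOf_eq_card g (by rw [hcard, hog]; congr 1; omega)) hnc
  exact orderOf_dvd_iff_pow_eq_one.mp (by rw [hog]; exact pow_dvd_pow 2 hkn)

lemma abelian_case {n : ℕ} [Finite G] (h4 : 4 ≤ n) (hcard : Nat.card G = 2 ^ n)
    (hmax : ∀ M : Subgroup G, Nat.card M = 2 ^ (n - 1) → IsCyclic M)
    (hab : ∀ a b : G, a * b = b * a) (hnc : ¬IsCyclic G) : False := by
  haveI := Fact.mk Nat.prime_two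
  obtain ⟨M1, _, _, ⟨hM1, _, _⟩, _, _, _⟩ := exists_three_max (by omega) hcard hnc
  obtain ⟨m1, hm1M, hm1ord, hm1gen⟩ := exists_gen (hmax M1 hM1)
  rw [hM1] at hm1ord
  haveI : M1.Normal := ⟨fun a ha g => by
    have e : g * a * g⁻¹ = a := by rw [hab g a]; group
    rw [e]; exact ha⟩
  have hiM1 : M1.index = 2 := by
    rw [index_of_card hcard hM1 (by omega)]
    have e : n - (n - 1) = 1 := by omega
    rw [e, pow_one]
  obtain ⟨x, hx⟩ := exists_not_mem (M := M1) (by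
    rw [hM1, hcard]
    intro h
    have := Nat.pow_right_injective (le_refl 2) h
    omega)
  have hx2 : x ^ 2 ∈ M1 := by
    have := M1.pow_index_mem x
    rwa [hiM1] at this
  obtain ⟨j, hj⟩ := hm1gen _ hx2
  have hjeven : 2 ∣ j := by
    have h1 : m1 ^ (j * 2 ^ (n - 2)) = 1 := by
      rw [pow_mul, ← hj, ← pow_mul]
      have e : 2 * 2 ^ (n - 2) = 2 ^ (n - 1) := by rw [← pow_succ']; congr 1; omega
      rw [e]
      exact exp_bound hcard hnc x
    have h2 := orderOf_dvd_iff_pow_eq_one.mpr h1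
    rw [hm1ord] at h2
    obtain ⟨t, ht⟩ := h2
    have e : (2:ℕ) ^ (n - 1) = 2 * 2 ^ (n - 2) := by rw [← pow_succ']; congr 1; omega
    refine ⟨t, ?_⟩
    have hpos : 0 < (2:ℕ) ^ (n - 2) := by positivity
    have h3 : j * 2 ^ (n - 2) = 2 * t * 2 ^ (n - 2) := by rw [ht, e]; ring
    exact Nat.eq_of_mul_eq_mul_right hpos h3
  obtain ⟨i, hi⟩ := hjeven
  set t := x * (m1 ^ i)⁻¹ with ht
  have htM1 : t ∉ M1 := by
    intro h
    have hx' : x = t * m1 ^ i := by rw [ht]; group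
    exact hx (hx' ▸ M1.mul_mem h (M1.pow_mem hm1M i))
  have ht2 : t ^ 2 = 1 := by
    have hcomm : Commute x ((m1 ^ i)⁻¹) := hab _ _
    have e1 : ((m1 ^ i)⁻¹) ^ 2 = (m1 ^ j)⁻¹ := by
      rw [inv_pow, ← pow_mul, mul_comm i 2, ← hi]
    rw [ht, hcomm.mul_pow, e1, hj]
    simp
  have hordm2 : orderOf (m1 ^ 2) = 2 ^ (n - 2) := by
    have h1 := orderOf_sq (m := m1) (k := n - 1) (by omega) hm1ord
    rwa [show n - 1 - 1 = n - 2 by omega] at h1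
  set A := zpowers (m1 ^ 2) with hA
  set H := A ⊔ zpowers t with hH
  haveI : A.Normal := ⟨fun a ha g => by
    have e : g * a * g⁻¹ = a := by rw [hab g a]; group
    rw [e]; exact ha⟩
  have hmemH : ∀ y ∈ H, y ^ 2 ^ (n - 2) = 1 := by
    intro y hy
    have hy' : y ∈ (A : Set G) * (zpowers t : Set G) := by
      rw [← Subgroup.normal_mul]
      exact hy
    obtain ⟨p, hp, q, hq, rfl⟩ := hy'
    have hpo : p ^ 2 ^ (n - 2) = 1 := by
      apply orderOf_dvd_iff_pow_eq_one.mp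
      have h1 := Subgroup.orderOf_dvd_natCard A hp
      rwa [hA, Nat.card_zpowers, hordm2] at h1
    have hqo : q ^ 2 ^ (n - 2) = 1 := by
      apply orderOf_dvd_iff_pow_eq_one.mp
      have h1 := Subgroup.orderOf_dvd_natCard (zpowers t) hq
      rw [Nat.card_zpowers] at h1
      have h2 : orderOf t ∣ 2 := orderOf_dvd_iff_pow_eq_one.mpr ht2
      exact (h1.trans h2).trans (dvd_pow_self 2 (by omega))
    have hcomm : Commute p q := hab p q
    rw [hcomm.mul_pow, hpo, hqo, one_mul]
  have htH : t ∈ H := (le_sup_right : zpowers t ≤ H) (mem_zpowers t)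
  have hAH : A ≤ H := le_sup_left
  have hcardA : Nat.card A = 2 ^ (n - 2) := by rw [hA, Nat.card_zpowers, hordm2]
  obtain ⟨w, hwle, hcardH⟩ := card_pow_two hcard H
  have hge : n - 2 ≤ w := by
    apply (Nat.pow_dvd_pow_iff_le_right one_lt_two).mp
    rw [← hcardA, ← hcardH]
    exact card_dvd_of_le hAH
  have hne2 : w ≠ n - 2 := by
    intro h'
    have hAeq : A = H := eq_of_le_of_card_ge hAH (by rw [hcardA, hcardH, h'])
    have h1 : t ∈ A := hAeq ▸ htH
    exact htM1 ((zpowers_le.mpr (M1.pow_mem hm1M 2)) h1)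
  have hnen : w ≠ n := by
    intro h'
    have hHtop : H = ⊤ := eq_top_of_card_eq _ (by rw [hcardH, h', hcard])
    have h1 := orderOf_dvd_iff_pow_eq_one.mpr (hmemH m1 (hHtop ▸ mem_top m1))
    rw [hm1ord] at h1
    have := (Nat.pow_dvd_pow_iff_le_right one_lt_two).mp h1
    omega
  have hw1 : w = n - 1 := by omega
  obtain ⟨d, hdH, hdord, -⟩ := exists_gen (hmax H (by rw [hcardH, hw1]))
  rw [hcardH, hw1] at hdord
  have h1 := orderOf_dvd_iff_pow_eq_one.mpr (hmemH d hdH)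
  rw [hdord] at h1
  have := (Nat.pow_dvd_pow_iff_le_right one_lt_two).mp h1
  omega


lemma cyclic_of_max_cyclic {n : ℕ} (h4 : 4 ≤ n) (hcard : Nat.card G = 2 ^ n)
    (hmax : ∀ M : Subgroup G, Nat.card M = 2 ^ (n - 1) → IsCyclic M) : IsCyclic G := by
  by_contra hnc
  have hfin : Finite G := Nat.finite_of_card_ne_zero (by rw [hcard]; positivity)
  haveI := Fact.mk Nat.prime_two
  by_cases hab : ∀ a b : G, a * b = b * a
  · exact abelian_case h4 hcard hmax hab hnc
  push_neg at hab
  obtain ⟨a0, b0, hab0⟩ := hab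
  obtain ⟨M1, M2, _, ⟨hM1, hM2, _⟩, h12, _, _⟩ := exists_three_max (by omega) hcard hnc
  obtain ⟨m1, hm1M, hm1ord, hm1gen⟩ := exists_gen (hmax M1 hM1)
  rw [hM1] at hm1ord
  obtain ⟨m2, hm2M, hm2ord, hm2gen⟩ := exists_gen (hmax M2 hM2)
  rw [hM2] at hm2ord
  set C := M1 ⊓ M2 with hCdef
  have hCle : C ≤ M1 := inf_le_left
  have hCle2 : C ≤ M2 := inf_le_right
  have hCneM : C ≠ M1 := by
    intro h
    have hle : M1 ≤ M2 := by rw [← h]; exact inf_le_right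
    exact h12 (eq_of_le_of_card_ge hle (by rw [hM1, hM2]))
  have hi1 : M1.index = 2 := by
    rw [index_of_card hcard hM1 (by omega), show n - (n - 1) = 1 by omega, pow_one]
  have hi2 : M2.index = 2 := by
    rw [index_of_card hcard hM2 (by omega), show n - (n - 1) = 1 by omega, pow_one]
  have hidvd : 2 ∣ C.index := hi1 ▸ index_dvd_of_le hCle
  have hile : C.index ≤ 4 := by
    have h := index_inf_le (H := M1) (K := M2)
    rw [hi1, hi2] at h
    simpa using h
  have hipos : C.index ≠ 0 := by
    intro h
    have h1 := C.card_mul_index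
    rw [h, hcard, mul_zero] at h1
    exact absurd h1.symm (by positivity)
  have hine2 : C.index ≠ 2 := by
    intro h
    have h1 := C.card_mul_index
    rw [h, hcard] at h1
    have h2 : (2:ℕ) ^ n = 2 ^ (n - 1) * 2 := by rw [← pow_succ]; congr 1; omega
    rw [h2] at h1
    have h3 : Nat.card C = 2 ^ (n - 1) := Nat.eq_of_mul_eq_mul_right (by norm_num) h1
    exact hCneM (eq_of_le_of_card_ge hCle (by rw [hM1, h3]))
  have hindexC : C.index = 4 := by omega
  have hcardC : Nat.card C = 2 ^ (n - 2) := by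
    have h1 := C.card_mul_index
    rw [hindexC, hcard] at h1
    have h2 : (2:ℕ) ^ n = 2 ^ (n - 2) * 4 := by
      rw [show (4:ℕ) = 2 ^ 2 by norm_num, ← pow_add]; congr 1; omega
    rw [h2] at h1
    exact Nat.eq_of_mul_eq_mul_right (by norm_num) h1
  have hsup : M1 ⊔ M2 = ⊤ := by
    obtain ⟨w, hwle, hcardS⟩ := card_pow_two hcard (M1 ⊔ M2)
    have hdvd : (2:ℕ) ^ (n - 1) ∣ 2 ^ w := by
      rw [← hM1, ← hcardS]; exact card_dvd_of_le le_sup_left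
    have hge := (Nat.pow_dvd_pow_iff_le_right one_lt_two).mp hdvd
    have hne : w ≠ n - 1 := by
      intro h
      have h1 : M1 = M1 ⊔ M2 := eq_of_le_of_card_ge le_sup_left (by rw [hM1, hcardS, h])
      have h2 : M2 ≤ M1 := le_sup_right.trans h1.symm.le
      exact h12 (eq_of_le_of_card_ge h2 (by rw [hM1, hM2])).symm
    have hw : w = n := by omega
    exact eq_top_of_card_eq _ (by rw [hcardS, hw, hcard])
  have hcent : ∀ c ∈ C, ∀ g : G, c * g = g * c := by
    intro c hc g
    have hM1c : M1 ≤ centralizer {c} := by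
      intro y hy
      rw [mem_centralizer_iff]
      intro u hu
      rw [Set.mem_singleton_iff] at hu
      subst hu
      obtain ⟨j1, hj1⟩ := hm1gen u (hCle hc)
      obtain ⟨j2, hj2⟩ := hm1gen y hy
      rw [hj1, hj2, ← pow_add, ← pow_add, Nat.add_comm]
    have hM2c : M2 ≤ centralizer {c} := by
      intro y hy
      rw [mem_centralizer_iff]
      intro u hu
      rw [Set.mem_singleton_iff] at hu
      subst hu
      obtain ⟨j1, hj1⟩ := hm2gen u (hCle2 hc)
      obtain ⟨j2, hj2⟩ := hm2gen y hy
      rw [hj1, hj2, ← pow_add, ← pow_add, Nat.add_comm]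
    have htop : (⊤ : Subgroup G) ≤ centralizer {c} := by
      rw [← hsup]; exact sup_le hM1c hM2c
    have hg := htop (mem_top g)
    rw [mem_centralizer_iff] at hg
    exact hg c rfl
  haveI hCnormal : C.Normal := ⟨fun a ha g => by
    have e : g * a * g⁻¹ = a := by
      rw [show g * a = a * g from (hcent a ha g).symm]; group
    rw [e]; exact ha⟩
  have hcardQ : Nat.card (G ⧸ C) = 4 := by rw [← Subgroup.index_eq_card]; exact hindexC
  by_cases hQc : IsCyclic (G ⧸ C)
  · apply hab0
    apply commutative_of_cyclic_center_quotient (QuotientGroup.mk' C)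
    rw [QuotientGroup.ker_mk']
    intro c hc
    rw [Subgroup.mem_center_iff]
    intro g
    exact (hcent c hc g).symm
  · have hfinQ : Finite (G ⧸ C) := Nat.finite_of_card_ne_zero (by rw [hcardQ]; norm_num)
    have hQ2 : ∀ q : G ⧸ C, q ^ 2 = 1 := by
      intro q
      have hdvd : orderOf q ∣ 2 ^ 2 := by
        rw [show (2:ℕ) ^ 2 = 4 by norm_num, ← hcardQ]
        exact _root_.orderOf_dvd_natCard q
      obtain ⟨k, hk, hq⟩ := (Nat.dvd_prime_pow Nat.prime_two).mp hdvd
      have hk2 : k ≠ 2 := by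
        intro h
        exact hQc (isCyclic_of_orderOf_eq_card q (by rw [hcardQ, hq, h]; norm_num))
      apply orderOf_dvd_iff_pow_eq_one.mp
      rw [hq, show (2:ℕ) = 2 ^ 1 by norm_num]
      exact pow_dvd_pow 2 (by omega)
    have hsq : ∀ x : G, x ^ 2 ∈ C := by
      intro x
      have h1 : (QuotientGroup.mk' C) (x ^ 2) = 1 := by
        rw [map_pow]; exact hQ2 _
      exact (QuotientGroup.ker_mk' C) ▸ MonoidHom.mem_ker.mpr h1
    have hQab : ∀ q1 q2 : G ⧸ C, q1 * q2 = q2 * q1 := by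
      have hinv : ∀ q : G ⧸ C, q⁻¹ = q := by
        intro q
        have hq : q * q = 1 := by rw [← pow_two]; exact hQ2 q
        exact inv_eq_of_mul_eq_one_right hq
      intro q1 q2
      calc q1 * q2 = (q1 * q2)⁻¹ := (hinv _).symm
        _ = q2⁻¹ * q1⁻¹ := mul_inv_rev _ _
        _ = q2 * q1 := by rw [hinv, hinv]
    have hcomm_inC : ∀ x y : G, x * y * x⁻¹ * y⁻¹ ∈ C := by
      intro x y
      have h1 : (QuotientGroup.mk' C) (x * y * x⁻¹ * y⁻¹) = 1 := by
        rw [map_mul, map_mul, map_mul, map_inv, map_inv,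
          hQab ((QuotientGroup.mk' C) x) ((QuotientGroup.mk' C) y)]
        group
      exact (QuotientGroup.ker_mk' C) ▸ MonoidHom.mem_ker.mpr h1
    have hordm1sq : orderOf (m1 ^ 2) = 2 ^ (n - 2) := by
      have h1 := orderOf_sq (m := m1) (k := n - 1) (by omega) hm1ord
      rwa [show n - 1 - 1 = n - 2 by omega] at h1
    have hordm2sq : orderOf (m2 ^ 2) = 2 ^ (n - 2) := by
      have h1 := orderOf_sq (m := m2) (k := n - 1) (by omega) hm2ord
      rwa [show n - 1 - 1 = n - 2 by omega] at h1
    have hCz : C = zpowers (m1 ^ 2) := by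
      refine (eq_of_le_of_card_ge (zpowers_le.mpr (hsq m1)) ?_).symm
      rw [hcardC, Nat.card_zpowers, hordm1sq]
    have hm2sqC : m2 ^ 2 ∈ zpowers (m1 ^ 2) := hCz ▸ hsq m2
    obtain ⟨k, hk⟩ := mem_powers_iff_mem_zpowers.mpr hm2sqC
    have hkodd : ¬ 2 ∣ k := by
      rintro ⟨k', rfl⟩
      have h1 : (m2 ^ 2) ^ 2 ^ (n - 3) = 1 := by
        rw [← hk, ← pow_mul, ← pow_mul]
        have e : 2 * (2 * k' * 2 ^ (n - 3)) = k' * 2 ^ (n - 1) := by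
          have e2 : (2:ℕ) ^ (n - 1) = 4 * 2 ^ (n - 3) := by
            rw [show (4:ℕ) = 2 ^ 2 by norm_num, ← pow_add]; congr 1; omega
          rw [e2]; ring
        rw [e, mul_comm k' (2 ^ (n - 1)), pow_mul, ← hm1ord, pow_orderOf_eq_one, one_pow]
      have h2 := orderOf_dvd_iff_pow_eq_one.mpr h1
      rw [hordm2sq] at h2
      have := (Nat.pow_dvd_pow_iff_le_right one_lt_two).mp h2
      omega
    set p := m1 ^ k with hp
    set h := m2 * p⁻¹ with hdefh
    have hpsq : p ^ 2 = m2 ^ 2 := by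
      rw [hp, ← pow_mul, mul_comm k 2, pow_mul]
      exact hk
    set w := p⁻¹ * m2 * p * m2⁻¹ with hwdef
    have hwC : w ∈ C := by
      have h1 := hcomm_inC p⁻¹ m2
      rw [inv_inv] at h1
      exact h1
    have hwc : ∀ g : G, w * g = g * w := hcent w hwC
    have hcm : m2 * w = w * m2 := (hwc m2).symm
    have key : m2 * m2 = p * p := by
      have := hpsq.symm
      rwa [pow_two, pow_two] at this
    have hw_eq : h ^ 2 = w := by
      have e1 : h ^ 2 = (m2 * w) * m2 * p⁻¹ * p⁻¹ := by
        rw [pow_two, hdefh, hwdef]; group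
      rw [e1, hcm]
      have e2 : w * m2 * m2 * p⁻¹ * p⁻¹ = w * ((m2 * m2) * (p * p)⁻¹) := by group
      rw [e2, key]
      group
    have hz2 : w * w = 1 := by
      have e3 : p⁻¹ * (m2 * m2) * p = m2 * m2 := by
        have h1 : (m2 * m2) * p = p * (m2 * m2) := by
          have h2 := hcent (m2 ^ 2) (hsq m2) p
          rwa [pow_two] at h2
        rw [mul_assoc, h1]; group
      have e1w : m2 * w * m2⁻¹ = w := by
        rw [hcm]; group
      have e2w : w * (m2 * w * m2⁻¹) = p⁻¹ * (m2 * m2) * p * (m2 * m2)⁻¹ := by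
        rw [hwdef]; group
      calc w * w = w * (m2 * w * m2⁻¹) := by rw [e1w]
        _ = p⁻¹ * (m2 * m2) * p * (m2 * m2)⁻¹ := e2w
        _ = (m2 * m2) * (m2 * m2)⁻¹ := by rw [e3]
        _ = 1 := by group
    have hh4 : h ^ 4 = 1 := by
      have e : h ^ 4 = h ^ 2 * h ^ 2 := by rw [← pow_add]
      rw [e, hw_eq]
      exact hz2
    have hhC' : h ∉ C := by
      intro hmem
      have h1 : h * p ∈ M1 := M1.mul_mem (hCle hmem) (by rw [hp]; exact M1.pow_mem hm1M k)
      have h2 : m2 ∈ M1 := by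
        have e : m2 = h * p := by rw [hdefh]; group
        rw [e]; exact h1
      have hle : M2 ≤ M1 := by
        intro y hy
        obtain ⟨j, hj⟩ := hm2gen y hy
        rw [hj]; exact M1.pow_mem h2 j
      exact h12 (eq_of_le_of_card_ge hle (by rw [hM1, hM2])).symm
    set D := C ⊔ zpowers h with hD
    have hhD : h ∈ D := (le_sup_right : zpowers h ≤ D) (mem_zpowers h)
    have hCD : C ≤ D := le_sup_left
    have hmemD : ∀ y ∈ D, ∃ c ∈ C, ∃ e : ℕ, y = c * h ^ e := by
      intro y hy
      have hy' : y ∈ (C : Set G) * (zpowers h : Set G) := by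
        rw [← Subgroup.normal_mul]
        exact hy
      obtain ⟨c, hc, q, hq, rfl⟩ := hy'
      obtain ⟨e, he⟩ := mem_powers_iff_mem_zpowers.mpr hq
      exact ⟨c, hc, e, by rw [← he]⟩
    have hexpD : ∀ y ∈ D, y ^ 2 ^ (n - 2) = 1 := by
      intro y hy
      obtain ⟨c, hc, e, rfl⟩ := hmemD y hy
      have hcomm : Commute c (h ^ e) := hcent c hc (h ^ e)
      rw [hcomm.mul_pow]
      have hc1 : c ^ 2 ^ (n - 2) = 1 := by
        apply orderOf_dvd_iff_pow_eq_one.mp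
        have h1 := Subgroup.orderOf_dvd_natCard C hc
        rwa [hcardC] at h1
      have hh1 : (h ^ e) ^ 2 ^ (n - 2) = 1 := by
        rw [← pow_mul, mul_comm e, pow_mul]
        have hhp : h ^ 2 ^ (n - 2) = 1 := by
          obtain ⟨t, ht⟩ : (4:ℕ) ∣ 2 ^ (n - 2) := by
            rw [show (4:ℕ) = 2 ^ 2 by norm_num]
            exact pow_dvd_pow 2 (by omega)
          rw [ht, pow_mul, hh4, one_pow]
        rw [hhp, one_pow]
      rw [hc1, hh1, one_mul]
    obtain ⟨w', hw'le, hcardD⟩ := card_pow_two hcard D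
    have hge : n - 2 ≤ w' := by
      apply (Nat.pow_dvd_pow_iff_le_right one_lt_two).mp
      rw [← hcardC, ← hcardD]
      exact card_dvd_of_le hCD
    have hne2 : w' ≠ n - 2 := by
      intro h'
      have hCeq : C = D := eq_of_le_of_card_ge hCD (by rw [hcardC, hcardD, h'])
      exact hhC' (hCeq ▸ hhD)
    have hnen : w' ≠ n := by
      intro h'
      have hDtop : D = ⊤ := eq_top_of_card_eq _ (by rw [hcardD, h', hcard])
      apply hab0
      obtain ⟨c1, hc1, e1, he1⟩ := hmemD a0 (hDtop ▸ mem_top a0)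
      obtain ⟨c2, hc2, e2, he2⟩ := hmemD b0 (hDtop ▸ mem_top b0)
      rw [he1, he2]
      have A1 : Commute c1 c2 := hcent c1 hc1 c2
      have A2 : Commute c1 (h ^ e2) := hcent c1 hc1 (h ^ e2)
      have A : Commute c1 (c2 * h ^ e2) := A1.mul_right A2
      have B1 : Commute (h ^ e1) c2 := (hcent c2 hc2 (h ^ e1)).symm
      have B2 : Commute (h ^ e1) (h ^ e2) := (Commute.refl h).pow_pow e1 e2
      exact Commute.mul_left A (B1.mul_right B2)
    have hw1 : w' = n - 1 := by omega
    obtain ⟨d, hdD, hdord, -⟩ := exists_gen (hmax D (by rw [hcardD, hw1]))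
    rw [hcardD, hw1] at hdord
    have h1 := orderOf_dvd_iff_pow_eq_one.mpr (hexpD d hdD)
    rw [hdord] at h1
    have := (Nat.pow_dvd_pow_iff_le_right one_lt_two).mp h1
    omega


lemma card_map_subtype (H : Subgroup G) (K : Subgroup H) :
    Nat.card (K.map H.subtype) = Nat.card K :=
  (Nat.card_congr (K.equivMapOfInjective H.subtype H.subtype_injective).toEquiv).symm

lemma noncyclic_map {H : Subgroup G} {K : Subgroup H} (h : ¬IsCyclic K) :
    ¬IsCyclic (K.map H.subtype) := by
  intro hc
  apply h
  exact isCyclic_of_surjective (K.equivMapOfInjective H.subtype H.subtype_injective).symm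
    (MulEquiv.surjective _)

lemma noncyclic_top (hnc : ¬IsCyclic G) : ¬IsCyclic (⊤ : Subgroup G) := by
  intro h
  exact hnc (isCyclic_of_surjective (Subgroup.topEquiv (G := G)) Subgroup.topEquiv.surjective)

lemma exists_noncyclic {a : ℕ} (hcard : Nat.card G = 2 ^ a) (hnc : ¬IsCyclic G) :
    ∀ d j, j + d = a → 3 ≤ j → ∃ H : Subgroup G, Nat.card H = 2 ^ j ∧ ¬IsCyclic H := by
  intro d
  induction d with
  | zero =>
    intro j hj _
    refine ⟨⊤, ?_, noncyclic_top hnc⟩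
    rw [card_top, hcard]; congr 1; omega
  | succ d ih =>
    intro j hj h3
    obtain ⟨H', hcard', hnc'⟩ := ih (j + 1) (by omega) (by omega)
    have h4 : 4 ≤ j + 1 := by omega
    have hstep : ∃ M : Subgroup H', Nat.card M = 2 ^ j ∧ ¬IsCyclic M := by
      by_contra hcon
      push_neg at hcon
      apply hnc'
      apply cyclic_of_max_cyclic h4 hcard'
      intro M hM
      exact hcon M (by rw [hM]; norm_num)
    obtain ⟨M, hM, hMnc⟩ := hstep
    exact ⟨M.map H'.subtype, by rw [card_map_subtype]; exact hM, noncyclic_map hMnc⟩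

lemma three_of_card {a : ℕ} (ha : 4 ≤ a) (hcard : Nat.card G = 2 ^ a) (hnc : ¬IsCyclic G)
    {k : ℕ} (hk2 : 2 ≤ k) (hk : k ≤ a - 1) :
    ∃ H1 H2 H3 : Subgroup G,
      (Nat.card H1 = 2 ^ k ∧ Nat.card H2 = 2 ^ k ∧ Nat.card H3 = 2 ^ k) ∧
      (H1 ≠ H2 ∧ H1 ≠ H3 ∧ H2 ≠ H3) := by
  obtain ⟨H, hH, hHnc⟩ := exists_noncyclic hcard hnc (a - (k + 1)) (k + 1) (by omega) (by omega)
  obtain ⟨M1, M2, M3, ⟨hc1, hc2, hc3⟩, hne1, hne2, hne3⟩ :=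
    exists_three_max (G := H) (by omega) hH hHnc
  have hconv : (2:ℕ) ^ (k + 1 - 1) = 2 ^ k := by norm_num
  refine ⟨M1.map H.subtype, M2.map H.subtype, M3.map H.subtype,
    ⟨by rw [card_map_subtype, hc1, hconv], by rw [card_map_subtype, hc2, hconv],
     by rw [card_map_subtype, hc3, hconv]⟩,
    fun h => hne1 (Subgroup.map_injective H.subtype_injective h),
    fun h => hne2 (Subgroup.map_injective H.subtype_injective h),
    fun h => hne3 (Subgroup.map_injective H.subtype_injective h)⟩


lemma card_mem_filter [Fintype G] (H : Subgroup G) [DecidablePred (· ∈ H)] :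
    (Finset.univ.filter (fun x => x ∈ H)).card = Nat.card H := by
  rw [Nat.card_eq_fintype_card]
  exact (Fintype.card_subtype _).symm

lemma cyclic_of_mem_orderOf_card [Finite G] {H : Subgroup G} {x : G} (hx : x ∈ H)
    (h : orderOf x = Nat.card H) : IsCyclic H := by
  apply isCyclic_of_orderOf_eq_card (⟨x, hx⟩ : H)
  rw [← orderOf_injective H.subtype H.subtype_injective ⟨x, hx⟩]
  exact h

lemma isCyclic_of_le {H L : Subgroup G} (hle : H ≤ L) (hc : IsCyclic L) : IsCyclic H := by
  haveI := hc
  exact isCyclic_of_surjective (Subgroup.subgroupOfEquivOfLe hle) (MulEquiv.surjective _)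

lemma pow_ne8 {x : G} (hx : orderOf x = 8) {i j : ℕ} (hi : i < 8) (hj : j < 8) (hij : i ≠ j) :
    x ^ i ≠ x ^ j := by
  intro h
  have := pow_injOn_Iio_orderOf (x := x) (by rw [hx]; exact hi) (by rw [hx]; exact hj) h
  exact hij this

lemma odd_exp : ∀ e < 8, Nat.gcd 8 e = 1 → e = 1 ∨ e = 3 ∨ e = 5 ∨ e = 7 := by decide

lemma mem_of_involution [Fintype G] {z : G} (hzord : orderOf z = 2)
    (huniq : ∀ x : G, orderOf x = 2 → x = z) {H : Subgroup G} (hH : 2 ∣ Nat.card H) :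
    z ∈ H := by
  haveI := Fact.mk Nat.prime_two
  haveI : Fintype H := Fintype.ofFinite H
  rw [Nat.card_eq_fintype_card] at hH
  obtain ⟨y, hy⟩ := exists_prime_orderOf_dvd_card 2 hH
  have h1 : orderOf (y : G) = 2 := by
    rw [← hy]
    exact orderOf_injective H.subtype H.subtype_injective y
  have h2 := huniq _ h1
  rw [← h2]
  exact y.2


set_option maxHeartbeats 1000000 in
lemma five_of_card_four {a : ℕ} (ha : 4 ≤ a) (hcard : Nat.card G = 2 ^ a) (hnc : ¬IsCyclic G)
    {z : G} (hzord : orderOf z = 2) (huniq : ∀ x : G, orderOf x = 2 → x = z) :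
    ∃ S : Finset (Subgroup G), (∀ H ∈ S, Nat.card H = 4) ∧ 5 ≤ S.card := by
  classical
  have hfin : Finite G := Nat.finite_of_card_ne_zero (by rw [hcard]; positivity)
  haveI : Fintype G := Fintype.ofFinite G
  haveI := Fact.mk Nat.prime_two
  by_contra hcon
  push_neg at hcon
  obtain ⟨K, hKcard, hKnc⟩ := exists_noncyclic hcard hnc (a - 3) 3 (by omega) (by omega)
  rw [show (2:ℕ) ^ 3 = 8 by norm_num] at hKcard
  have hzK : z ∈ K := mem_of_involution hzord huniq (by rw [hKcard]; norm_num)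
  have hzz : z * z = 1 := by
    have h1 := pow_orderOf_eq_one z
    rwa [hzord, pow_two] at h1
  have horder8 : ∀ x ∈ K, orderOf x ≠ 8 := by
    intro x hx h8
    exact hKnc (cyclic_of_mem_orderOf_card hx (by rw [hKcard, h8]))
  have horderK : ∀ x ∈ K, x ≠ 1 → x ≠ z → orderOf x = 4 ∧ x ^ 2 = z := by
    intro x hx hx1 hxz
    have hdvd := Subgroup.orderOf_dvd_natCard K hx
    rw [hKcard, show (8:ℕ) = 2 ^ 3 by norm_num] at hdvd
    obtain ⟨m, hm, hom⟩ := (Nat.dvd_prime_pow Nat.prime_two).mp hdvd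
    have hm3 : m ≠ 3 := fun h => horder8 x hx (by rw [hom, h]; norm_num)
    have hm0 : m ≠ 0 := fun h => hx1 (orderOf_eq_one_iff.mp (by rw [hom, h, pow_zero]))
    have hm1 : m ≠ 1 := fun h => hxz (huniq x (by rw [hom, h, pow_one]))
    have hm2 : m = 2 := by omega
    have ho4 : orderOf x = 4 := by rw [hom, hm2]; norm_num
    refine ⟨ho4, ?_⟩
    apply huniq
    have h1 := orderOf_sq (m := x) (k := 2) (by norm_num) (by rw [ho4]; norm_num)
    simpa using h1
  obtain ⟨M1, M2, M3, ⟨hq1, hq2, hq3⟩, hn12, hn13, hn23⟩ :=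
    exists_three_max (G := K) (n := 3) (by norm_num) (by rw [hKcard]; norm_num) hKnc
  set C1 := M1.map K.subtype with hC1
  set C2 := M2.map K.subtype with hC2
  set C3 := M3.map K.subtype with hC3
  have hC1card : Nat.card C1 = 4 := by rw [hC1, card_map_subtype, hq1]; norm_num
  have hC2card : Nat.card C2 = 4 := by rw [hC2, card_map_subtype, hq2]; norm_num
  have hC3card : Nat.card C3 = 4 := by rw [hC3, card_map_subtype, hq3]; norm_num
  have hC1le : C1 ≤ K := Subgroup.map_subtype_le M1
  have hC2le : C2 ≤ K := Subgroup.map_subtype_le M2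
  have hC3le : C3 ≤ K := Subgroup.map_subtype_le M3
  have hC12 : C1 ≠ C2 := fun h => hn12 (Subgroup.map_injective K.subtype_injective h)
  have hC13 : C1 ≠ C3 := fun h => hn13 (Subgroup.map_injective K.subtype_injective h)
  have hC23 : C2 ≠ C3 := fun h => hn23 (Subgroup.map_injective K.subtype_injective h)
  obtain ⟨L, hLcard, hKL⟩ := Sylow.exists_subgroup_card_pow_prime_le 2
    (by rw [hcard]; exact pow_dvd_pow 2 (by omega)) K (by rw [hKcard]; norm_num)
    (by norm_num : (3:ℕ) ≤ 4)
  rw [show (2:ℕ) ^ 4 = 16 by norm_num] at hLcard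
  have hKneL : K ≠ L := by
    intro h
    rw [h, hLcard] at hKcard
    omega
  have horder16 : ∀ x ∈ L, orderOf x ≠ 16 := by
    intro x hx h16
    have h1 : IsCyclic L := cyclic_of_mem_orderOf_card hx (by rw [hLcard, h16])
    exact hKnc (isCyclic_of_le hKL h1)
  have horderL : ∀ x ∈ L, x ∉ K → orderOf x = 4 ∨ orderOf x = 8 := by
    intro x hx hxK
    have hdvd := Subgroup.orderOf_dvd_natCard L hx
    rw [hLcard, show (16:ℕ) = 2 ^ 4 by norm_num] at hdvd
    obtain ⟨m, hm, hom⟩ := (Nat.dvd_prime_pow Nat.prime_two).mp hdvd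
    have hm4 : m ≠ 4 := fun h => horder16 x hx (by rw [hom, h]; norm_num)
    have hm0 : m ≠ 0 := by
      intro h
      rw [h, pow_zero] at hom
      exact hxK ((orderOf_eq_one_iff.mp hom) ▸ K.one_mem)
    have hm1 : m ≠ 1 := by
      intro h
      rw [h, pow_one] at hom
      exact hxK ((huniq x hom) ▸ hzK)
    have hm23 : m = 2 ∨ m = 3 := by omega
    rcases hm23 with h|h
    · left; rw [hom, h]; norm_num
    · right; rw [hom, h]; norm_num
  set E8 : Finset G := Finset.univ.filter (fun x => x ∈ L ∧ x ∉ K ∧ orderOf x = 8) with hE8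
  have hFK : (Finset.univ.filter (fun x => x ∈ K)).card = 8 := by
    rw [card_mem_filter, hKcard]
  have hFL : (Finset.univ.filter (fun x => x ∈ L)).card = 16 := by
    rw [card_mem_filter, hLcard]
  have hFLK : (Finset.univ.filter (fun x => x ∈ L ∧ x ∉ K)).card = 8 := by
    have hsub : (Finset.univ.filter (fun x => x ∈ K)) ⊆ (Finset.univ.filter (fun x => x ∈ L)) := by
      intro x hx
      simp only [Finset.mem_filter, Finset.mem_univ, true_and] at *
      exact hKL hx
    have heq : Finset.univ.filter (fun x => x ∈ L ∧ x ∉ K)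
        = (Finset.univ.filter (fun x => x ∈ L)) \ (Finset.univ.filter (fun x => x ∈ K)) := by
      ext x
      simp only [Finset.mem_filter, Finset.mem_univ, true_and, Finset.mem_sdiff]
    rw [heq, Finset.card_sdiff_of_subset hsub, hFL, hFK]
  by_cases hA : ∃ x ∈ L, x ∉ K ∧ orderOf x = 4
  · -- Case A
    obtain ⟨x0, hx0L, hx0K, hx0ord⟩ := hA
    have hx0sq : x0 ^ 2 = z := by
      apply huniq
      have h1 := orderOf_sq (m := x0) (k := 2) (by norm_num) (by rw [hx0ord]; norm_num)
      simpa using h1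
    set D := zpowers x0 with hD
    have hDK : ¬ D ≤ K := fun h => hx0K (h (mem_zpowers x0))
    have hCD1 : C1 ≠ D := fun h => hDK (h ▸ hC1le)
    have hCD2 : C2 ≠ D := fun h => hDK (h ▸ hC2le)
    have hCD3 : C3 ≠ D := fun h => hDK (h ▸ hC3le)
    have hall4 : ∀ v, v ∈ L → v ∉ K → orderOf v = 4 → v ∈ D := by
      intro v hvL hvK hv4
      by_contra hvD
      have hZv : D ≠ zpowers v := fun h => hvD (h ▸ mem_zpowers v)
      have hZvK : ¬ zpowers v ≤ K := fun h => hvK (h (mem_zpowers v))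
      have hCZ1 : C1 ≠ zpowers v := fun h => hZvK (h ▸ hC1le)
      have hCZ2 : C2 ≠ zpowers v := fun h => hZvK (h ▸ hC2le)
      have hCZ3 : C3 ≠ zpowers v := fun h => hZvK (h ▸ hC3le)
      have hScard : ({C1, C2, C3, D, zpowers v} : Finset (Subgroup G)).card = 5 := by
        rw [Finset.card_insert_of_notMem (by
              simp only [Finset.mem_insert, Finset.mem_singleton]
              push_neg
              exact ⟨hC12, hC13, hCD1, hCZ1⟩),
            Finset.card_insert_of_notMem (by
              simp only [Finset.mem_insert, Finset.mem_singleton]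
              push_neg
              exact ⟨hC23, hCD2, hCZ2⟩),
            Finset.card_insert_of_notMem (by
              simp only [Finset.mem_insert, Finset.mem_singleton]
              push_neg
              exact ⟨hCD3, hCZ3⟩),
            Finset.card_insert_of_notMem (by
              simp only [Finset.mem_singleton]
              exact hZv),
            Finset.card_singleton]
      have hSall : ∀ H ∈ ({C1, C2, C3, D, zpowers v} : Finset (Subgroup G)), Nat.card H = 4 := by
        intro H hH
        simp only [Finset.mem_insert, Finset.mem_singleton] at hH
        rcases hH with rfl|rfl|rfl|rfl|rfl
        · exact hC1card
        · exact hC2card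
        · exact hC3card
        · rw [hD, Nat.card_zpowers, hx0ord]
        · rw [Nat.card_zpowers, hv4]
      have := hcon _ hSall
      omega
    have hE4eq : Finset.univ.filter (fun x => x ∈ L ∧ x ∉ K ∧ ¬(orderOf x = 8))
        = ({x0, x0⁻¹} : Finset G) := by
      ext v
      simp only [Finset.mem_filter, Finset.mem_univ, true_and, Finset.mem_insert,
        Finset.mem_singleton]
      constructor
      · rintro ⟨hvL, hvK, hv8⟩
        have hv4 : orderOf v = 4 := by
          rcases horderL v hvL hvK with h|h
          · exact h
          · exact absurd h hv8
        have hvD := hall4 v hvL hvK hv4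
        obtain ⟨e, he⟩ := mem_powers_iff_mem_zpowers.mpr hvD
        have h1 := pow_mod_orderOf x0 e
        rw [hx0ord] at h1
        have hmod : x0 ^ (e % 4) = v := h1.trans he
        have h4 : e % 4 = 0 ∨ e % 4 = 1 ∨ e % 4 = 2 ∨ e % 4 = 3 := by omega
        rcases h4 with h|h|h|h
        · rw [h, pow_zero] at hmod
          rw [← hmod] at hvK
          exact absurd K.one_mem hvK
        · left; rw [← hmod, h, pow_one]
        · rw [h] at hmod
          rw [show v = z from hmod.symm.trans hx0sq] at hvK
          exact absurd hzK hvK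
        · right
          rw [← hmod, h]
          have h3 : x0 ^ 3 * x0 = 1 := by
            rw [← pow_succ, show 3 + 1 = 4 from rfl, ← hx0ord]
            exact pow_orderOf_eq_one x0
          exact eq_inv_of_mul_eq_one_left h3
      · intro h
        rcases h with rfl|rfl
        · exact ⟨hx0L, hx0K, by rw [hx0ord]; norm_num⟩
        · exact ⟨L.inv_mem hx0L, fun h => hx0K (by simpa using K.inv_mem h),
            by rw [orderOf_inv, hx0ord]; norm_num⟩
    have hx0ne : x0 ≠ x0⁻¹ := by
      intro h
      have h2 : x0 ^ 2 = 1 := by rw [pow_two]; nth_rewrite 2 [h]; group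
      have h3 := orderOf_dvd_iff_pow_eq_one.mpr h2
      rw [hx0ord] at h3
      exact absurd (Nat.le_of_dvd (by norm_num) h3) (by norm_num)
    have hE8card : E8.card = 6 := by
      have hsplit := Finset.card_filter_add_card_filter_not
        (s := Finset.univ.filter (fun x => x ∈ L ∧ x ∉ K)) (p := fun x => orderOf x = 8)
      have e1 : (Finset.univ.filter (fun x => x ∈ L ∧ x ∉ K)).filter (fun x => orderOf x = 8)
          = E8 := by
        rw [Finset.filter_filter, hE8]
        ext v
        simp only [Finset.mem_filter, Finset.mem_univ, true_and]
        tauto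
      have e2 : (Finset.univ.filter (fun x => x ∈ L ∧ x ∉ K)).filter (fun x => ¬(orderOf x = 8))
          = ({x0, x0⁻¹} : Finset G) := by
        rw [Finset.filter_filter, ← hE4eq]
        ext v
        simp only [Finset.mem_filter, Finset.mem_univ, true_and]
        tauto
      have ecard : ({x0, x0⁻¹} : Finset G).card = 2 := by
        rw [Finset.card_insert_of_notMem (by simp [hx0ne]), Finset.card_singleton]
      rw [e1, e2, ecard, hFLK] at hsplit
      omega
    have hTsub : ∀ x ∈ E8, ({x, x ^ 3, x ^ 5, x ^ 7} : Finset G) ⊆ E8 := by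
      intro x hx
      simp only [hE8, Finset.mem_filter, Finset.mem_univ, true_and] at hx
      obtain ⟨hxL, hxK, hxord⟩ := hx
      intro y hy
      simp only [Finset.mem_insert, Finset.mem_singleton] at hy
      have hmem : ∀ i : ℕ, Nat.gcd 8 i = 1 → x ^ i ∈ E8 := by
        intro i hgcd
        have hyL : x ^ i ∈ L := L.pow_mem hxL i
        have hyord : orderOf (x ^ i) = 8 := by
          rw [orderOf_pow, hxord, hgcd, Nat.div_one]
        have hyK : x ^ i ∉ K := fun h => horder8 _ h hyord
        simp only [hE8, Finset.mem_filter, Finset.mem_univ, true_and]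
        exact ⟨hyL, hyK, hyord⟩
      rcases hy with rfl|rfl|rfl|rfl
      · have h1 := hmem 1 (by decide); rwa [pow_one] at h1
      · exact hmem 3 (by decide)
      · exact hmem 5 (by decide)
      · exact hmem 7 (by decide)
    have hTcard : ∀ x : G, orderOf x = 8 → ({x, x ^ 3, x ^ 5, x ^ 7} : Finset G).card = 4 := by
      intro x hx
      have d13 : x ≠ x ^ 3 := by
        have h' := pow_ne8 hx (show (1:ℕ) < 8 by norm_num) (show (3:ℕ) < 8 by norm_num)
          (by norm_num)
        rwa [pow_one] at h'
      have d15 : x ≠ x ^ 5 := by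
        have h' := pow_ne8 hx (show (1:ℕ) < 8 by norm_num) (show (5:ℕ) < 8 by norm_num)
          (by norm_num)
        rwa [pow_one] at h'
      have d17 : x ≠ x ^ 7 := by
        have h' := pow_ne8 hx (show (1:ℕ) < 8 by norm_num) (show (7:ℕ) < 8 by norm_num)
          (by norm_num)
        rwa [pow_one] at h'
      have d35 := pow_ne8 hx (show (3:ℕ) < 8 by norm_num) (show (5:ℕ) < 8 by norm_num) (by norm_num)
      have d37 := pow_ne8 hx (show (3:ℕ) < 8 by norm_num) (show (7:ℕ) < 8 by norm_num) (by norm_num)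
      have d57 := pow_ne8 hx (show (5:ℕ) < 8 by norm_num) (show (7:ℕ) < 8 by norm_num) (by norm_num)
      rw [Finset.card_insert_of_notMem (by
            simp only [Finset.mem_insert, Finset.mem_singleton]
            push_neg
            exact ⟨d13, d15, d17⟩),
          Finset.card_insert_of_notMem (by
            simp only [Finset.mem_insert, Finset.mem_singleton]
            push_neg
            exact ⟨d35, d37⟩),
          Finset.card_insert_of_notMem (by
            simp only [Finset.mem_singleton]
            exact d57),
          Finset.card_singleton]
    have hTzp : ∀ x y : G, orderOf x = 8 → y ∈ ({x, x ^ 3, x ^ 5, x ^ 7} : Finset G) →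
        y ∈ zpowers x ∧ orderOf y = 8 := by
      intro x y hx hy
      simp only [Finset.mem_insert, Finset.mem_singleton] at hy
      have hgen : ∀ i : ℕ, Nat.gcd 8 i = 1 → x ^ i ∈ zpowers x ∧ orderOf (x ^ i) = 8 := by
        intro i hgcd
        exact ⟨Subgroup.pow_mem _ (mem_zpowers x) i, by rw [orderOf_pow, hx, hgcd, Nat.div_one]⟩
      rcases hy with rfl|rfl|rfl|rfl
      · exact ⟨mem_zpowers _, hx⟩
      · exact hgen 3 (by decide)
      · exact hgen 5 (by decide)
      · exact hgen 7 (by decide)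
    have hT8 : ∀ x y : G, orderOf x = 8 → orderOf y = 8 → y ∈ zpowers x →
        y ∈ ({x, x ^ 3, x ^ 5, x ^ 7} : Finset G) := by
      intro x y hx hy hyz
      obtain ⟨e, he⟩ := mem_powers_iff_mem_zpowers.mpr hyz
      have h1 := pow_mod_orderOf x e
      rw [hx] at h1
      have hmod : x ^ (e % 8) = y := h1.trans he
      have hlt : e % 8 < 8 := Nat.mod_lt _ (by norm_num)
      have hgcd : Nat.gcd 8 (e % 8) = 1 := by
        have h2 : orderOf (x ^ (e % 8)) = 8 := by rw [hmod, hy]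
        rw [orderOf_pow, hx] at h2
        rcases Nat.div_eq_self.mp h2 with h|h
        · norm_num at h
        · exact h
      rcases odd_exp _ hlt hgcd with h|h|h|h <;> simp [← hmod, h]
    obtain ⟨x, hxE⟩ := Finset.card_pos.mp (by omega : 0 < E8.card)
    have hxord : orderOf x = 8 := by
      have h1 := hxE
      simp only [hE8, Finset.mem_filter, Finset.mem_univ, true_and] at h1
      exact h1.2.2
    have hsd : 0 < (E8 \ ({x, x ^ 3, x ^ 5, x ^ 7} : Finset G)).card := by
      have h1 := Finset.le_card_sdiff ({x, x ^ 3, x ^ 5, x ^ 7} : Finset G) E8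
      rw [hE8card, hTcard x hxord] at h1
      omega
    obtain ⟨x', hx'⟩ := Finset.card_pos.mp hsd
    rw [Finset.mem_sdiff] at hx'
    obtain ⟨hx'E, hx'T⟩ := hx'
    have hx'ord : orderOf x' = 8 := by
      have h1 := hx'E
      simp only [hE8, Finset.mem_filter, Finset.mem_univ, true_and] at h1
      exact h1.2.2
    have hx'z : x' ∉ zpowers x := fun h => hx'T (hT8 x x' hxord hx'ord h)
    have hdisj : Disjoint ({x, x ^ 3, x ^ 5, x ^ 7} : Finset G)
        ({x', x' ^ 3, x' ^ 5, x' ^ 7} : Finset G) := by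
      rw [Finset.disjoint_left]
      intro y hy hy'
      obtain ⟨hyzx, hyord⟩ := hTzp x y hxord hy
      obtain ⟨hyzx', -⟩ := hTzp x' y hx'ord hy'
      have h1 : zpowers y ≤ zpowers x' := zpowers_le.mpr hyzx'
      have h2 : zpowers y = zpowers x' := eq_of_le_of_card_ge h1
        (by rw [Nat.card_zpowers, Nat.card_zpowers, hyord, hx'ord])
      have h3 : x' ∈ zpowers y := h2 ▸ mem_zpowers x'
      exact hx'z ((zpowers_le.mpr hyzx) h3)
    have hunion := Finset.card_le_card
      (Finset.union_subset (hTsub x hxE) (hTsub x' hx'E))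
    rw [Finset.card_union_of_disjoint hdisj, hTcard x hxord, hTcard x' hx'ord, hE8card] at hunion
    omega
  · -- Case B
    push_neg at hA
    have hB4 : ∀ x ∈ L, orderOf x ∣ 4 → x ∈ K := by
      intro x hx hdvd
      by_contra hxK
      rcases horderL x hx hxK with h|h
      · exact hA x hx hxK h
      · rw [h] at hdvd
        exact absurd (Nat.le_of_dvd (by norm_num) hdvd) (by norm_num)
    obtain ⟨b, hbL, hbK⟩ := SetLike.exists_of_lt (lt_of_le_of_ne hKL hKneL)
    have hbord : orderOf b = 8 := by
      rcases horderL b hbL hbK with h|h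
      · exact absurd (hB4 b hbL (by rw [h])) hbK
      · exact h
    set c := b ^ 2 with hc
    have hcord : orderOf c = 4 := by
      rw [hc, orderOf_pow, hbord]
      decide
    have hcL : c ∈ L := by rw [hc]; exact L.pow_mem hbL 2
    have hcK : c ∈ K := hB4 c hcL (by rw [hcord])
    have hc2 : c ^ 2 = z := by
      apply huniq
      have h1 := orderOf_sq (m := c) (k := 2) (by norm_num) (by rw [hcord]; norm_num)
      simpa using h1
    set Cc := zpowers c with hCc
    have hCcK : Cc ≤ K := zpowers_le.mpr hcK
    have hCcCard : Nat.card Cc = 4 := by rw [hCc, Nat.card_zpowers, hcord]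
    have hzCc : z ∈ Cc := by
      rw [← hc2]
      exact Cc.pow_mem (mem_zpowers c) 2
    have hCcne : Cc ≠ K := by
      intro h
      rw [h, hKcard] at hCcCard
      omega
    obtain ⟨u, huK, huC⟩ := SetLike.exists_of_lt (lt_of_le_of_ne hCcK hCcne)
    have hu1 : u ≠ 1 := fun h => huC (h ▸ Cc.one_mem)
    have huz : u ≠ z := fun h => huC (h ▸ hzCc)
    obtain ⟨huord, hu2⟩ := horderK u huK hu1 huz
    have hucK : u * c ∈ K := K.mul_mem huK hcK
    have huc1 : u * c ≠ 1 := by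
      intro h
      apply huC
      rw [eq_inv_of_mul_eq_one_left h]
      exact Cc.inv_mem (mem_zpowers c)
    have hucz : u * c ≠ z := by
      intro h
      apply huC
      have h1 : u = z * c⁻¹ := by rw [← h]; group
      rw [h1]
      exact Cc.mul_mem hzCc (Cc.inv_mem (mem_zpowers c))
    obtain ⟨hucord, hucsq⟩ := horderK (u * c) hucK huc1 hucz
    have hcuK : c * u ∈ K := K.mul_mem hcK huK
    have hcu1' : c * u ≠ 1 := by
      intro h
      apply huC
      have h1 : u = c⁻¹ := by
        have h2 := congrArg (fun t => c⁻¹ * t) h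
        simpa [mul_assoc] using h2
      rw [h1]
      exact Cc.inv_mem (mem_zpowers c)
    have hcuz : c * u ≠ z := by
      intro h
      apply huC
      have h1 : u = c⁻¹ * z := by
        have h2 := congrArg (fun t => c⁻¹ * t) h
        simpa [mul_assoc] using h2
      rw [h1]
      exact Cc.mul_mem (Cc.inv_mem (mem_zpowers c)) hzCc
    obtain ⟨hcuord, hcusq⟩ := horderK (c * u) hcuK hcu1' hcuz
    have hucu : u * c * u = c := by
      have h1 : (u * c) * (u * c) = c * c := by
        rw [← pow_two, ← pow_two, hucsq, hc2]
      have h2 : ((u * c) * u) * c = c * c := by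
        rw [← h1]; group
      exact mul_right_cancel h2
    have hcu1 : c * u = u⁻¹ * c := by
      have h1 := congrArg (fun t => u⁻¹ * t) hucu
      simpa [mul_assoc] using h1
    have hcu2 : u * c = c * u⁻¹ := by
      have h1 := congrArg (fun t => t * u⁻¹) hucu
      simpa [mul_assoc] using h1
    have huu : u * u = z := by rw [← pow_two]; exact hu2
    have hcc : c * c = z := by rw [← pow_two]; exact hc2
    have hcz : c ≠ z := by
      intro h
      rw [h, hzord] at hcord
      omega
    have hd1 : u ≠ u⁻¹ := by
      intro h
      have h2 : u ^ 2 = 1 := by rw [pow_two]; nth_rewrite 2 [h]; group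
      have h3 := orderOf_dvd_iff_pow_eq_one.mpr h2
      rw [huord] at h3
      exact absurd (Nat.le_of_dvd (by norm_num) h3) (by norm_num)
    have hd2 : u ≠ c * u := by
      intro h
      have h1 : (1:G) = c := by
        have h2 := congrArg (fun t => t * u⁻¹) h
        simpa [mul_assoc] using h2
      rw [← h1, orderOf_one] at hcord
      omega
    have hd3 : u ≠ (c * u)⁻¹ := by
      intro h
      have h2 := congrArg (fun t => (c * u) * t) h
      simp only [mul_inv_cancel] at h2
      have h3 : c * z = 1 := by
        rw [← huu, ← mul_assoc]
        exact h2
      have h4 : c = z⁻¹ := eq_inv_of_mul_eq_one_left h3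
      exact hcz (h4.trans (inv_eq_of_mul_eq_one_right hzz))
    have hd4 : u⁻¹ ≠ c * u := by
      intro h
      have h2 := congrArg (fun t => t * u⁻¹) h
      simp only [mul_inv_cancel_right] at h2
      have h3 : (u * u)⁻¹ = c := by rw [mul_inv_rev]; exact h2
      have h4 : c = z⁻¹ := by rw [← h3, huu]
      exact hcz (h4.trans (inv_eq_of_mul_eq_one_right hzz))
    have hd5 : u⁻¹ ≠ (c * u)⁻¹ := fun h => hd2 (inv_injective h)
    have hd6 : c * u ≠ (c * u)⁻¹ := by
      intro h
      have h2 : (c * u) ^ 2 = 1 := by rw [pow_two]; nth_rewrite 2 [h]; group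
      have h3 := orderOf_dvd_iff_pow_eq_one.mpr h2
      rw [hcuord] at h3
      exact absurd (Nat.le_of_dvd (by norm_num) h3) (by norm_num)
    set v := b⁻¹ * u * b with hv
    have hvord : orderOf v = 4 := by
      have h1 : v = (MulAut.conj b⁻¹) u := by rw [hv]; simp [MulAut.conj_apply]
      rw [h1]
      exact (orderOf_injective (MulAut.conj b⁻¹).toMonoidHom (MulEquiv.injective _) u).trans huord
    have hvL : v ∈ L := by
      rw [hv]
      exact L.mul_mem (L.mul_mem (L.inv_mem hbL) (hKL huK)) hbL
    have hvK : v ∈ K := hB4 v hvL (by rw [hvord])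
    have hbcb : ∀ e : ℕ, b * c ^ e * b⁻¹ = c ^ e := by
      intro e
      have hcomm : Commute b (c ^ e) := ((Commute.refl b).pow_right 2).pow_right e
      rw [show b * c ^ e = c ^ e * b from hcomm]
      group
    have hvC : v ∉ Cc := by
      intro hmem
      obtain ⟨e, he⟩ := mem_powers_iff_mem_zpowers.mpr hmem
      apply huC
      have h1 : u = b * v * b⁻¹ := by rw [hv]; group
      rw [h1, ← he, hbcb e]
      exact Cc.pow_mem (mem_zpowers c) e
    have hT4 : v = u ∨ v = u⁻¹ ∨ v = c * u ∨ v = (c * u)⁻¹ := by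
      have hFKCcard : (Finset.univ.filter (fun x => x ∈ K ∧ x ∉ Cc)).card = 4 := by
        have hsub : (Finset.univ.filter (fun x => x ∈ Cc))
            ⊆ (Finset.univ.filter (fun x => x ∈ K)) := by
          intro t ht
          simp only [Finset.mem_filter, Finset.mem_univ, true_and] at *
          exact hCcK ht
        have heq : Finset.univ.filter (fun x => x ∈ K ∧ x ∉ Cc)
            = (Finset.univ.filter (fun x => x ∈ K)) \ (Finset.univ.filter (fun x => x ∈ Cc)) := by
          ext t
          simp only [Finset.mem_filter, Finset.mem_univ, true_and, Finset.mem_sdiff]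
        rw [heq, Finset.card_sdiff_of_subset hsub, card_mem_filter, card_mem_filter, hKcard, hCcCard]
      have hmuinv : u⁻¹ ∉ Cc := fun h => huC (by simpa using Cc.inv_mem h)
      have hmcu : c * u ∉ Cc := by
        intro h
        apply huC
        have h1 : u = c⁻¹ * (c * u) := by group
        rw [h1]
        exact Cc.mul_mem (Cc.inv_mem (mem_zpowers c)) h
      have hmcuinv : (c * u)⁻¹ ∉ Cc := fun h => hmcu (by simpa using Cc.inv_mem h)
      have hsubT : ({u, u⁻¹, c * u, (c * u)⁻¹} : Finset G)
          ⊆ Finset.univ.filter (fun x => x ∈ K ∧ x ∉ Cc) := by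
        intro t ht
        simp only [Finset.mem_insert, Finset.mem_singleton] at ht
        simp only [Finset.mem_filter, Finset.mem_univ, true_and]
        rcases ht with rfl|rfl|rfl|rfl
        · exact ⟨huK, huC⟩
        · exact ⟨K.inv_mem huK, hmuinv⟩
        · exact ⟨K.mul_mem hcK huK, hmcu⟩
        · exact ⟨K.inv_mem (K.mul_mem hcK huK), hmcuinv⟩
      have hcardT : ({u, u⁻¹, c * u, (c * u)⁻¹} : Finset G).card = 4 := by
        rw [Finset.card_insert_of_notMem (by
              simp only [Finset.mem_insert, Finset.mem_singleton]
              push_neg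
              exact ⟨hd1, hd2, hd3⟩),
            Finset.card_insert_of_notMem (by
              simp only [Finset.mem_insert, Finset.mem_singleton]
              push_neg
              exact ⟨hd4, hd5⟩),
            Finset.card_insert_of_notMem (by
              simp only [Finset.mem_singleton]
              exact hd6),
            Finset.card_singleton]
      have hTeq : ({u, u⁻¹, c * u, (c * u)⁻¹} : Finset G)
          = Finset.univ.filter (fun x => x ∈ K ∧ x ∉ Cc) :=
        Finset.eq_of_subset_of_card_le hsubT (by rw [hFKCcard, hcardT])
      have hvF : v ∈ Finset.univ.filter (fun x => x ∈ K ∧ x ∉ Cc) := by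
        simp only [Finset.mem_filter, Finset.mem_univ, true_and]
        exact ⟨hvK, hvC⟩
      rw [← hTeq] at hvF
      simpa using hvF
    rcases hT4 with hcase|hcase|hcase|hcase
    · -- v = u
      rw [hv] at hcase
      have e3 : u * b = b * u := by
        have h1 := congrArg (fun t => b * t) hcase
        simpa [mul_assoc] using h1
      have hcomm : Commute b u := e3.symm
      have e4 : c * u = u * c := hcomm.pow_left 2
      rw [hcu1] at e4
      exact hd1 (mul_right_cancel e4).symm
    · -- v = u⁻¹
      rw [hv] at hcase
      have e1 : b⁻¹ * u⁻¹ * b = u := by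
        have h1 := congrArg (fun t => t⁻¹) hcase
        simpa [mul_inv_rev, mul_assoc] using h1
      have e2 : c⁻¹ * u * c = u := by
        have estep : c⁻¹ * u * c = b⁻¹ * (b⁻¹ * u * b) * b := by
          rw [hc, pow_two]; group
        rw [estep, hcase]
        exact e1
      have e3 : u * c = c * u := by
        have h1 := congrArg (fun t => c * t) e2
        simpa [mul_assoc] using h1
      rw [hcu2] at e3
      exact hd1 (mul_left_cancel e3).symm
    · -- v = c * u
      rw [hv] at hcase
      have e0 : (b * u) * (b * u) = (b * b) * (b⁻¹ * u * b) * u := by group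
      rw [hcase] at e0
      have e1 : (b * b) * (c * u) * u = (c * c) * (u * u) := by
        rw [← pow_two b, ← hc]; group
      rw [e1, huu, hcc, hzz] at e0
      have h2 : (b * u) ^ 2 = 1 := by rw [pow_two]; exact e0
      have horddvd : orderOf (b * u) ∣ 4 :=
        (orderOf_dvd_iff_pow_eq_one.mpr h2).trans (by norm_num)
      have hbuK : b * u ∈ K := hB4 _ (L.mul_mem hbL (hKL huK)) horddvd
      exact hbK (by simpa using K.mul_mem hbuK (K.inv_mem huK))
    · -- v = (c * u)⁻¹
      rw [hv] at hcase
      have r1 : u⁻¹ * c⁻¹ = c⁻¹ * u := by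
        have h1 := congrArg (fun t => t⁻¹) hcu1
        simpa [mul_inv_rev] using h1
      have e0 : (b * u) * (b * u) = (b * b) * (b⁻¹ * u * b) * u := by group
      rw [hcase] at e0
      have e1 : (b * b) * (c * u)⁻¹ * u = c * (u⁻¹ * c⁻¹) * u := by
        rw [← pow_two b, ← hc]; group
      rw [e1, r1] at e0
      have e2 : c * (c⁻¹ * u) * u = z := by
        rw [← huu]; group
      rw [e2] at e0
      have hbu2 : (b * u) ^ 2 = z := by rw [pow_two]; exact e0
      have h2 : (b * u) ^ 4 = 1 := by
        rw [show (4:ℕ) = 2 * 2 from rfl, pow_mul, hbu2, pow_two, hzz]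
      have horddvd : orderOf (b * u) ∣ 4 := orderOf_dvd_iff_pow_eq_one.mpr h2
      have hbuK : b * u ∈ K := hB4 _ (L.mul_mem hbL (hKL huK)) horddvd
      exact hbK (by simpa using K.mul_mem hbuK (K.inv_mem huK))


lemma three_involutions {x y : G} (hx : orderOf x = 2) (hy : orderOf y = 2) (hxy : x ≠ y) :
    ∃ w : G, orderOf w = 2 ∧ w ≠ x ∧ w ≠ y := by
  haveI := Fact.mk Nat.prime_two
  have hx2 : x * x = 1 := by
    have h := pow_orderOf_eq_one x; rwa [hx, pow_two] at h
  have hy2 : y * y = 1 := by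
    have h := pow_orderOf_eq_one y; rwa [hy, pow_two] at h
  have hx1 : x ≠ 1 := by intro h; rw [h, orderOf_one] at hx; omega
  have hy1 : y ≠ 1 := by intro h; rw [h, orderOf_one] at hy; omega
  by_cases hc : x * y = y * x
  · refine ⟨x * y, ?_, ?_, ?_⟩
    · apply orderOf_eq_prime
      · rw [pow_two, show x * y * (x * y) = x * (y * x) * y from by group, ← hc,
          show x * (x * y) * y = (x * x) * (y * y) from by group, hx2, hy2, one_mul]
      · intro h
        have h1 : x = y⁻¹ := eq_inv_of_mul_eq_one_left h
        exact hxy (h1.trans (inv_eq_of_mul_eq_one_right hy2))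
    · intro h
      apply hy1
      have h1 := congrArg (fun t => x⁻¹ * t) h
      simpa [mul_assoc] using h1
    · intro h
      apply hx1
      have h1 := congrArg (fun t => t * y⁻¹) h
      simpa [mul_assoc] using h1
  · refine ⟨x * y * x, ?_, ?_, ?_⟩
    · apply orderOf_eq_prime
      · rw [pow_two, show (x * y * x) * (x * y * x) = x * y * (x * x) * y * x from by group, hx2,
          show x * y * 1 * y * x = x * (y * y) * x from by group, hy2,
          show x * 1 * x = x * x from by group, hx2]
      · intro h
        apply hy1
        have h1 : y = x⁻¹ * x⁻¹ := by
          have h2 := congrArg (fun t => x⁻¹ * t * x⁻¹) h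
          simpa [mul_assoc] using h2
        rw [h1, ← mul_inv_rev, hx2, inv_one]
    · intro h
      apply hxy
      have h1 : y * x = 1 := by
        have h2 := congrArg (fun t => x⁻¹ * t) h
        simpa [mul_assoc] using h2
      have h3 : y = x⁻¹ := eq_inv_of_mul_eq_one_left h1
      exact ((h3.trans (inv_eq_of_mul_eq_one_right hx2))).symm
    · intro h
      apply hc
      have h1 := congrArg (fun t => t * x) h
      have h2 : x * y * (x * x) = y * x := by
        rw [show x * y * (x * x) = (x * y * x) * x from by group]
        exact h1
      rwa [hx2, mul_one] at h2

lemma zpowers_inj_invol [Finite G] {x y : G} (hx : orderOf x = 2) (hy : orderOf y = 2)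
    (h : zpowers x = zpowers y) : x = y := by
  have hxy : x ∈ zpowers y := h ▸ mem_zpowers x
  obtain ⟨e, he⟩ := mem_powers_iff_mem_zpowers.mpr hxy
  have h1 := pow_mod_orderOf y e
  rw [hy] at h1
  have hmod : y ^ (e % 2) = x := h1.trans he
  have h2 : e % 2 = 0 ∨ e % 2 = 1 := by omega
  rcases h2 with h2|h2
  · rw [h2, pow_zero] at hmod
    rw [← hmod, orderOf_one] at hx
    omega
  · rw [h2, pow_one] at hmod
    exact hmod.symm

end TwoGroupAux

open TwoGroupAux

theorem two_group_subgroup_bound (G : Type*) [Group G] (a : ℕ) (ha : 4 ≤ a)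
    (hcard : Nat.card G = 2 ^ a) (hnc : ¬IsCyclic G) :
    3 * a - 1 ≤ Nat.card (Subgroup G) := by
  classical
  have hfin : Finite G := Nat.finite_of_card_ne_zero (by rw [hcard]; positivity)
  haveI : Fintype G := Fintype.ofFinite G
  haveI : Finite (Subgroup G) :=
    Finite.of_injective (fun H : Subgroup G => (H : Set G)) SetLike.coe_injective
  haveI : Fintype (Subgroup G) := Fintype.ofFinite _
  haveI := Fact.mk Nat.prime_two
  set lv : Subgroup G → ℕ := fun H => Nat.log 2 (Nat.card H) with hlv
  have hlv_eq : ∀ (H : Subgroup G) (k : ℕ), Nat.card H = 2 ^ k → lv H = k := by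
    intro H k h
    simp only [hlv]
    rw [h, Nat.log_pow one_lt_two]
  have hlv_mem : ∀ H : Subgroup G, lv H ∈ Finset.range (a + 1) := by
    intro H
    obtain ⟨k, hk, hck⟩ := card_pow_two hcard H
    rw [Finset.mem_range, hlv_eq H k hck]
    omega
  have hsum : Nat.card (Subgroup G) = ∑ k ∈ Finset.range (a + 1),
      (Finset.univ.filter (fun H : Subgroup G => lv H = k)).card := by
    rw [Nat.card_eq_fintype_card, ← Finset.card_univ]
    exact Finset.card_eq_sum_card_fiberwise (fun H _ => hlv_mem H)
  set f : ℕ → ℕ := fun k => (Finset.univ.filter (fun H : Subgroup G => lv H = k)).card with hf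
  have hmem : ∀ (H : Subgroup G) (k : ℕ), Nat.card H = 2 ^ k →
      H ∈ Finset.univ.filter (fun H : Subgroup G => lv H = k) := by
    intro H k h
    simp only [Finset.mem_filter, Finset.mem_univ, true_and]
    exact hlv_eq H k h
  have hone : ∀ (k : ℕ) (H : Subgroup G), Nat.card H = 2 ^ k → 1 ≤ f k := by
    intro k H h
    exact Finset.card_pos.mpr ⟨H, hmem H k h⟩
  have hthree : ∀ (k : ℕ) (H1 H2 H3 : Subgroup G), Nat.card H1 = 2 ^ k → Nat.card H2 = 2 ^ k →
      Nat.card H3 = 2 ^ k → H1 ≠ H2 → H1 ≠ H3 → H2 ≠ H3 → 3 ≤ f k := by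
    intro k H1 H2 H3 h1 h2 h3 h12 h13 h23
    have hsub : ({H1, H2, H3} : Finset (Subgroup G))
        ⊆ Finset.univ.filter (fun H : Subgroup G => lv H = k) := by
      intro H hH
      simp only [Finset.mem_insert, Finset.mem_singleton] at hH
      rcases hH with rfl|rfl|rfl
      · exact hmem _ _ h1
      · exact hmem _ _ h2
      · exact hmem _ _ h3
    have hcard3 : ({H1, H2, H3} : Finset (Subgroup G)).card = 3 := by
      rw [Finset.card_insert_of_notMem (by
            simp only [Finset.mem_insert, Finset.mem_singleton]
            push_neg
            exact ⟨h12, h13⟩),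
          Finset.card_insert_of_notMem (by
            simp only [Finset.mem_singleton]
            exact h23),
          Finset.card_singleton]
    calc 3 = ({H1, H2, H3} : Finset (Subgroup G)).card := hcard3.symm
      _ ≤ f k := Finset.card_le_card hsub
  have hb0 : 1 ≤ f 0 := hone 0 ⊥ (by rw [card_bot]; norm_num)
  have hba : 1 ≤ f a := hone a ⊤ (by rw [card_top, hcard])
  have hmid : ∀ k, 2 ≤ k → k ≤ a - 1 → 3 ≤ f k := by
    intro k h2 hk
    obtain ⟨H1, H2, H3, ⟨h1, h2', h3⟩, h12, h13, h23⟩ := three_of_card ha hcard hnc h2 hk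
    exact hthree k H1 H2 H3 h1 h2' h3 h12 h13 h23
  obtain ⟨z, hz⟩ := exists_prime_orderOf_dvd_card (G := G) 2
    (by rw [← Nat.card_eq_fintype_card, hcard]; exact dvd_pow_self 2 (by omega))
  have h12sum : 6 ≤ f 1 + f 2 := by
    by_cases huniq : ∀ x : G, orderOf x = 2 → x = z
    · obtain ⟨S, hSall, hScard⟩ := five_of_card_four ha hcard hnc hz huniq
      have hf2 : 5 ≤ f 2 := by
        have hsub : S ⊆ Finset.univ.filter (fun H : Subgroup G => lv H = 2) := by
          intro H hH
          exact hmem H 2 (by rw [hSall H hH]; norm_num)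
        calc 5 ≤ S.card := hScard
          _ ≤ f 2 := Finset.card_le_card hsub
      have hf1 : 1 ≤ f 1 := hone 1 (zpowers z) (by rw [Nat.card_zpowers, hz, pow_one])
      omega
    · push_neg at huniq
      obtain ⟨y, hy, hyz⟩ := huniq
      obtain ⟨w, hw, hwy, hwz⟩ := three_involutions hy hz hyz
      have hf1 : 3 ≤ f 1 := by
        apply hthree 1 (zpowers y) (zpowers z) (zpowers w)
        · rw [Nat.card_zpowers, hy, pow_one]
        · rw [Nat.card_zpowers, hz, pow_one]
        · rw [Nat.card_zpowers, hw, pow_one]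
        · intro h; exact hyz (zpowers_inj_invol hy hz h)
        · intro h; exact hwy (zpowers_inj_invol hy hw h).symm
        · intro h; exact hwz (zpowers_inj_invol hz hw h).symm
      have hf2 : 3 ≤ f 2 := hmid 2 (le_refl 2) (by omega)
      omega
  rw [hsum]
  have hdecomp : ∑ k ∈ Finset.range (a + 1),
      (Finset.univ.filter (fun H : Subgroup G => lv H = k)).card
      = (f 0 + f 1 + f 2) + (∑ k ∈ Finset.Ico 3 a, f k) + f a := by
    show ∑ k ∈ Finset.range (a + 1), f k = _
    rw [Finset.range_eq_Ico,
      ← Finset.sum_Ico_consecutive f (by omega : 0 ≤ 3) (by omega : 3 ≤ a + 1),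
      ← Finset.sum_Ico_consecutive f (by omega : 3 ≤ a) (by omega : a ≤ a + 1)]
    have e1 : ∑ k ∈ Finset.Ico 0 3, f k = f 0 + f 1 + f 2 := by
      rw [← Finset.range_eq_Ico, Finset.sum_range_succ, Finset.sum_range_succ,
        Finset.sum_range_one]
    have e2 : ∑ k ∈ Finset.Ico a (a + 1), f k = f a := by
      have : Finset.Ico a (a + 1) = {a} := by
        ext t
        simp only [Finset.mem_Ico, Finset.mem_singleton]
        omega
      rw [this, Finset.sum_singleton]
    rw [e1, e2]
    ring
  rw [hdecomp]
  have hmidsum : (a - 3) * 3 ≤ ∑ k ∈ Finset.Ico 3 a, f k := by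
    calc (a - 3) * 3 = ∑ _k ∈ Finset.Ico 3 a, 3 := by
          rw [Finset.sum_const, Nat.card_Ico, smul_eq_mul]
      _ ≤ ∑ k ∈ Finset.Ico 3 a, f k := Finset.sum_le_sum (fun k hk => by
          rw [Finset.mem_Ico] at hk
          exact hmid k (by omega) (by omega))
  omega
end

section
/- Let G be a finite group whose order is divisible by exactly two primes p < q, and suppose a Sylow p-subgroup of G is cyclic. Then G has a unique (hence normal) Sylow q-subgroup. -/
theorem cyclic_sylow_p_implies_unique_sylow_q (G : Type*) [Group G] [Finite G]
    (p q a b : ℕ) (hp : p.Prime) (hq : q.Prime) (hpq : p < q)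
    (ha : 1 ≤ a) (hb : 1 ≤ b) (hcard : Nat.card G = p ^ a * q ^ b)
    (P : Sylow p G) (hP : IsCyclic P) :
    Nat.card (Sylow q G) = 1 ∧ ∀ Q : Sylow q G, (Q : Subgroup G).Normal := by
  have hpq' : p ≠ q := hpq.ne
  have := Fact.mk hp
  have := Fact.mk hq
  -- factorizations
  have hfp : (Nat.card G).factorization p = a := by
    rw [hcard, Nat.factorization_mul (pow_ne_zero _ hp.pos.ne') (pow_ne_zero _ hq.pos.ne'),
      Nat.Prime.factorization_pow hp, Nat.Prime.factorization_pow hq]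
    simp [Finsupp.single_apply, hpq', hpq'.symm]
  have hfq : (Nat.card G).factorization q = b := by
    rw [hcard, Nat.factorization_mul (pow_ne_zero _ hp.pos.ne') (pow_ne_zero _ hq.pos.ne'),
      Nat.Prime.factorization_pow hp, Nat.Prime.factorization_pow hq]
    simp [Finsupp.single_apply, hpq', hpq'.symm]
  have hcardP : Nat.card P = p ^ a := by
    rw [P.card_eq_multiplicity, hfp]
  have hindexP : (P : Subgroup G).index = q ^ b := by
    have h := Subgroup.card_mul_index (P : Subgroup G)
    rw [hcardP, hcard] at h
    exact Nat.eq_of_mul_eq_mul_left (pow_pos hp.pos a) h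
  -- N(P) ≤ C(P)
  have hNC : Subgroup.normalizer ((P : Subgroup G) : Set G) ≤ Subgroup.centralizer (P : Set G) := by
    set f := (P : Subgroup G).normalizerMonoidHom with hf
    have hker : f.ker.index ∣ Nat.totient (p ^ a) := by
      rw [Subgroup.index_ker, ← hcardP, ← hP.card_mulAut]
      exact Subgroup.card_subgroup_dvd_card f.range
    have hcomm : (P : Subgroup G) ≤ Subgroup.centralizer (P : Set G) := by
      letI := hP.commGroup
      exact Subgroup.le_centralizer_iff_isMulCommutative.mpr ⟨⟨fun x y => mul_comm x y⟩⟩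
    have hker2 : f.ker.index ∣ q ^ b := by
      rw [Subgroup.normalizerMonoidHom_ker]
      have hle : ((P : Subgroup G)).subgroupOf (Subgroup.normalizer ((P : Subgroup G) : Set G)) ≤
          (Subgroup.centralizer (P : Set G)).subgroupOf (Subgroup.normalizer ((P : Subgroup G) : Set G)) :=
        Subgroup.comap_mono hcomm
      calc ((Subgroup.centralizer ((P : Subgroup G) : Set G)).subgroupOf
              (Subgroup.normalizer ((P : Subgroup G) : Set G))).index
          ∣ ((P : Subgroup G).subgroupOf (Subgroup.normalizer ((P : Subgroup G) : Set G))).index :=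
            Subgroup.index_dvd_of_le hle
        _ = (P : Subgroup G).relIndex (Subgroup.normalizer ((P : Subgroup G) : Set G)) := rfl
        _ ∣ (P : Subgroup G).index :=
            Subgroup.relIndex_dvd_index_of_le Subgroup.le_normalizer
        _ = q ^ b := hindexP
    have hcop : Nat.Coprime (q ^ b) (Nat.totient (p ^ a)) := by
      rw [Nat.totient_prime_pow hp ha]
      refine Nat.Coprime.pow_left _ (Nat.Coprime.mul_right ?_ ?_)
      · exact Nat.Coprime.pow_right _ ((Nat.coprime_primes hq hp).mpr hpq'.symm)
      · have hp2 := hp.two_le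
        rw [hq.coprime_iff_not_dvd]
        intro hdvd
        have := Nat.le_of_dvd (by omega) hdvd
        omega
    have h1 : f.ker.index = 1 :=
      Nat.eq_one_of_dvd_coprimes hcop hker2 hker
    have hktop : f.ker = ⊤ := Subgroup.index_eq_one.mp h1
    rw [Subgroup.normalizerMonoidHom_ker] at hktop
    exact Subgroup.subgroupOf_eq_top.mp hktop
  -- Burnside transfer: normal complement K
  set K := (MonoidHom.transferSylow P hNC).ker with hK
  have hcomp : Subgroup.IsComplement' K P :=
    MonoidHom.ker_transferSylow_isComplement' P hNC
  have hKnormal : K.Normal := MonoidHom.normal_ker _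
  have hcardK : Nat.card K = q ^ b := hcomp.index_eq_card.symm.trans hindexP
  have hcardK' : Nat.card K = q ^ (Nat.card G).factorization q := by rw [hfq, hcardK]
  let Q0 : Sylow q G := Sylow.ofCard K hcardK'
  have hQ0 : (Q0 : Subgroup G) = K := Sylow.coe_ofCard K hcardK'
  have hQ0n : Q0.Normal := by rw [show Q0.Normal = (Q0 : Subgroup G).Normal from rfl, hQ0]; exact hKnormal
  haveI := Sylow.unique_of_normal Q0 hQ0n
  refine ⟨Nat.card_unique, fun Q => ?_⟩
  rw [Subsingleton.elim Q Q0, hQ0]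
  exact hKnormal
end

section
/- Let G be a non-nilpotent group of order pqr for primes p < q < r, and suppose G is not isomorphic to a direct product of two nontrivial subgroups of coprime orders. Then the number of subgroups of G is at least r + 4 + min(r + 1, 2q). -/
open Subgroup Pointwise

private lemma modeq_one_lt_false {t n : ℕ} (h : n ≡ 1 [MOD t]) (h1 : 2 ≤ n) (h2 : n ≤ t) :
    False := by
  have hd := (Nat.modEq_iff_dvd' (by omega : 1 ≤ n)).mp h.symm
  have := Nat.le_of_dvd (by omega) hd
  omega

private lemma dvd_prime_mul' {a b d : ℕ} (ha : a.Prime) (hb : b.Prime) (h : d ∣ a * b) :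
    d = 1 ∨ d = a ∨ d = b ∨ d = a * b := by
  by_cases had : a ∣ d
  · obtain ⟨e, rfl⟩ := had
    have he : e ∣ b := (mul_dvd_mul_iff_left ha.ne_zero).mp h
    rcases hb.eq_one_or_self_of_dvd e he with rfl | rfl
    · right; left; simp
    · right; right; right; rfl
  · have hcop : Nat.Coprime d a := Nat.Coprime.symm ((Nat.Prime.coprime_iff_not_dvd ha).mpr had)
    have hdb : d ∣ b := hcop.dvd_of_dvd_mul_left h
    rcases hb.eq_one_or_self_of_dvd d hdb with rfl | rfl
    · left; rfl
    · right; right; left; rfl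

private lemma sylow_card_eq {G : Type*} [Group G] [Finite G] {t : ℕ} (ht : t.Prime)
    (h1 : t ∣ Nat.card G) (h2 : ¬(t * t ∣ Nat.card G)) (P : Sylow t G) : Nat.card P = t := by
  haveI : Fact t.Prime := ⟨ht⟩
  rw [Sylow.card_eq_multiplicity]
  have hG : Nat.card G ≠ 0 := Nat.card_pos.ne'
  have hle : 1 ≤ (Nat.card G).factorization t :=
    (Nat.Prime.pow_dvd_iff_le_factorization ht hG).mp (by simpa using h1)
  have hlt : (Nat.card G).factorization t < 2 := by
    by_contra hge
    exact h2 (by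
      have := (Nat.Prime.pow_dvd_iff_le_factorization ht hG).mpr (by omega : 2 ≤ (Nat.card G).factorization t)
      simpa [pow_two] using this)
  have hone : (Nat.card G).factorization t = 1 := by omega
  rw [hone, pow_one]

private lemma normal_of_sylow_card_eq_one {G : Type*} [Group G] {t : ℕ} [Fact t.Prime]
    (P : Sylow t G) (h : Nat.card (Sylow t G) = 1) : (P : Subgroup G).Normal := by
  have hsub : Subsingleton (Sylow t G) := (Nat.card_eq_one_iff_unique.mp h).1
  rw [← normalizer_eq_top_iff, eq_top_iff']
  intro g
  exact Sylow.smul_eq_iff_mem_normalizer.mp (Subsingleton.elim _ _)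

private lemma eq_of_le_of_card_le' {G : Type*} [Group G] [Finite G] {A B : Subgroup G}
    (h : A ≤ B) (hc : Nat.card B ≤ Nat.card A) : A = B := by
  have hcard : Nat.card (A.subgroupOf B) = Nat.card A :=
    Nat.card_congr (Subgroup.subgroupOfEquivOfLe h).toEquiv
  have htop : A.subgroupOf B = ⊤ := by
    apply Subgroup.eq_top_of_card_eq
    rw [hcard]
    exact le_antisymm (Subgroup.card_le_of_le h) hc
  exact le_antisymm h (Subgroup.subgroupOf_eq_top.mp htop)

private lemma card_sup_of_coprime {G : Type*} [Group G] [Finite G] {A B : Subgroup G}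
    [hB : B.Normal] (h : Nat.Coprime (Nat.card A) (Nat.card B)) :
    Nat.card ↥(A ⊔ B) = Nat.card A * Nat.card B := by
  have hset : ((A ⊔ B : Subgroup G) : Set G) = (A : Set G) * (B : Set G) := Subgroup.mul_normal A B
  have hle : Nat.card ↥(A ⊔ B) ≤ Nat.card A * Nat.card B := by
    calc Nat.card ↥(A ⊔ B) = Nat.card ((A : Set G) * (B : Set G) : Set G) := by rw [← hset]; rfl
      _ ≤ Nat.card (A : Set G) * Nat.card (B : Set G) := Set.natCard_mul_le
      _ = Nat.card A * Nat.card B := rfl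
  have hdvd : Nat.card A * Nat.card B ∣ Nat.card ↥(A ⊔ B) :=
    Nat.Coprime.mul_dvd_of_dvd_of_dvd h (card_dvd_of_le le_sup_left) (card_dvd_of_le le_sup_right)
  have hpos : 0 < Nat.card ↥(A ⊔ B) := Nat.card_pos
  have := Nat.le_of_dvd hpos hdvd
  omega

private lemma commute_of_normalize {G : Type*} [Group G] {A B : Subgroup G} (hd : Disjoint A B)
    (hA : ∀ b ∈ B, ∀ a ∈ A, b * a * b⁻¹ ∈ A) (hB : ∀ a ∈ A, ∀ b ∈ B, a * b * a⁻¹ ∈ B)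
    {a b : G} (ha : a ∈ A) (hb : b ∈ B) : a * b = b * a := by
  have h1 : a * b * a⁻¹ * b⁻¹ ∈ B := B.mul_mem (hB a ha b hb) (B.inv_mem hb)
  have h2 : a * b * a⁻¹ * b⁻¹ ∈ A := by
    have : a * (b * a⁻¹ * b⁻¹) ∈ A := A.mul_mem ha (hA b hb a⁻¹ (A.inv_mem ha))
    simpa [mul_assoc] using this
  have hbot := hd.le_bot (Subgroup.mem_inf.mpr ⟨h2, h1⟩ : a * b * a⁻¹ * b⁻¹ ∈ A ⊓ B)
  rw [Subgroup.mem_bot, mul_inv_eq_one, mul_inv_eq_iff_eq_mul] at hbot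
  exact hbot

private lemma le_normalizer_of_subgroupOf_normal {G : Type*} [Group G] {A M : Subgroup G}
    (hAM : A ≤ M) (h : (A.subgroupOf M).Normal) : M ≤ normalizer (A : Set G) := by
  intro m hm
  rw [Subgroup.mem_normalizer_iff]
  intro x
  constructor
  · intro hx
    have h2 := h.conj_mem ⟨x, hAM hx⟩ (by simpa [Subgroup.mem_subgroupOf] using hx) ⟨m, hm⟩
    simpa [Subgroup.mem_subgroupOf] using h2
  · intro hx
    have h2 := h.conj_mem ⟨m * x * m⁻¹, hAM hx⟩
      (by simpa [Subgroup.mem_subgroupOf] using hx) ⟨m⁻¹, M.inv_mem hm⟩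
    simp only [Subgroup.mem_subgroupOf, Subgroup.coe_mul, InvMemClass.coe_inv] at h2
    have he : (↑(⟨m⁻¹, M.inv_mem hm⟩ : M) : G) * ↑(⟨m * x * m⁻¹, hAM hx⟩ : M) *
        (↑(⟨m⁻¹, M.inv_mem hm⟩ : M) : G)⁻¹ = x := by
      simp only []
      group
    rwa [he] at h2

private lemma map_sylow_normal {G : Type*} [Group G] [Finite G] {H : Subgroup G} (hH : H.Normal)
    {t : ℕ} [Fact t.Prime] (S : Sylow t ↥H) (hu : Nat.card (Sylow t ↥H) = 1) :
    (Subgroup.map H.subtype (S : Subgroup ↥H)).Normal := by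
  haveI := hH
  haveI : (S : Subgroup ↥H).Characteristic :=
    Sylow.characteristic_of_normal S (normal_of_sylow_card_eq_one S hu)
  exact ConjAct.normal_of_characteristic_of_normal

private lemma decomp_lemma {G : Type*} [Group G] [Finite G] {A B : Subgroup G}
    (hA : A.Normal) (hB : B.Normal) (hcop : Nat.Coprime (Nat.card A) (Nat.card B))
    (hmul : Nat.card A * Nat.card B = Nat.card G)
    (hA1 : Nat.card A ≠ 1) (hB1 : Nat.card B ≠ 1) :
    ∃ H K : Subgroup G, H ≠ ⊥ ∧ K ≠ ⊥ ∧
      Nat.Coprime (Nat.card H) (Nat.card K) ∧ Nonempty (G ≃* H × K) := by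
  have hd : Disjoint A B := disjoint_iff.mpr (inf_eq_bot_of_coprime hcop)
  have comm : ∀ (a : A) (b : B), Commute (A.subtype a) (B.subtype b) := fun a b =>
    Subgroup.commute_of_normal_of_disjoint A B hA hB hd a b a.2 b.2
  let f : A × B →* G := MonoidHom.noncommCoprod A.subtype B.subtype comm
  have hinj : Function.Injective f := by
    have := Subgroup.mul_injective_of_disjoint hd
    exact this
  have hbij : Function.Bijective f := by
    rw [Nat.bijective_iff_injective_and_card]
    exact ⟨hinj, by rw [Nat.card_prod, hmul]⟩
  refine ⟨A, B, ?_, ?_, hcop, ⟨(MulEquiv.ofBijective f hbij).symm⟩⟩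
  · intro h; exact hA1 (by rw [h, Subgroup.card_bot])
  · intro h; exact hB1 (by rw [h, Subgroup.card_bot])

private lemma sum_levels_le {G : Type*} [Group G] [Finite G] (s : Finset ℕ) :
    ∑ n ∈ s, {H : Subgroup G | Nat.card H = n}.ncard ≤ Nat.card (Subgroup G) := by
  classical
  have h1 : ∀ s : Finset ℕ, ∑ n ∈ s, {H : Subgroup G | Nat.card H = n}.ncard
      = (⋃ n ∈ (s : Set ℕ), {H : Subgroup G | Nat.card H = n}).ncard := by
    intro s
    induction s using Finset.induction_on with
    | empty => simp
    | insert a s' ha ih =>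
      have hdisj : Disjoint {H : Subgroup G | Nat.card H = a}
          (⋃ n ∈ (s' : Set ℕ), {H : Subgroup G | Nat.card H = n}) := by
        rw [Set.disjoint_left]
        rintro H hHa hHs
        simp only [Set.mem_iUnion, Set.mem_setOf_eq] at hHs hHa
        obtain ⟨n, hn, hH⟩ := hHs
        rw [hHa] at hH
        rw [← hH] at hn
        exact ha hn
      rw [Finset.sum_insert ha, ih, Finset.coe_insert, Set.biUnion_insert,
        Set.ncard_union_eq hdisj (Set.toFinite _) (Set.toFinite _)]
  rw [h1]
  calc (⋃ n ∈ (s : Set ℕ), {H : Subgroup G | Nat.card H = n}).ncard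
      ≤ (Set.univ : Set (Subgroup G)).ncard :=
        Set.ncard_le_ncard (Set.subset_univ _) Set.finite_univ
    _ = Nat.card (Subgroup G) := Set.ncard_univ _
private lemma not_sq_dvd_mul {t m : ℕ} (ht : t.Prime) (hm : ¬ t ∣ m) : ¬ t * t ∣ t * m :=
  fun h => hm ((mul_dvd_mul_iff_left ht.ne_zero).mp h)

private lemma prime_not_dvd_prime {a b : ℕ} (ha : a.Prime) (hb : b.Prime) (h : a ≠ b) : ¬ a ∣ b :=
  fun hd => h ((Nat.prime_dvd_prime_iff_eq ha hb).mp hd)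

private lemma not_dvd_mul_prime {t u v : ℕ} (ht : t.Prime) (hu : u.Prime) (hv : v.Prime)
    (h1 : t ≠ u) (h2 : t ≠ v) : ¬ t ∣ u * v := fun hd => by
  rcases (Nat.Prime.dvd_mul ht).mp hd with h | h
  · exact prime_not_dvd_prime ht hu h1 h
  · exact prime_not_dvd_prime ht hv h2 h

private lemma sylow_normalizer_injective {G : Type*} [Group G] [Finite G] {t : ℕ} [Fact t.Prime] :
    Function.Injective (fun Q : Sylow t G => (normalizer ((Q : Subgroup G) : Set G))) := by
  intro Q1 Q2 h
  dsimp only at h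
  have h1 : (Q1 : Subgroup G) ≤ (normalizer ((Q1 : Subgroup G) : Set G)) := le_normalizer
  have h2 : (Q2 : Subgroup G) ≤ (normalizer ((Q1 : Subgroup G) : Set G)) := by rw [h]; exact le_normalizer
  let S1 : Sylow t ((normalizer ((Q1 : Subgroup G) : Set G))) := Q1.subtype h1
  let S2 : Sylow t ((normalizer ((Q1 : Subgroup G) : Set G))) := Q2.subtype h2
  haveI : (S1 : Subgroup ((normalizer ((Q1 : Subgroup G) : Set G)))).Normal := by
    rw [Sylow.coe_subtype]
    exact Subgroup.normal_in_normalizer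
  obtain ⟨n, hn⟩ := MulAction.exists_smul_eq ((normalizer ((Q1 : Subgroup G) : Set G))) S2 S1
  have hS : S2 = S1 := by
    have h3 : n⁻¹ • S1 = S1 := Sylow.smul_eq_of_normal
    rw [← hn, inv_smul_smul] at h3
    exact h3.trans hn
  have hsub : (Q2 : Subgroup G).subgroupOf ((normalizer ((Q1 : Subgroup G) : Set G)))
      = (Q1 : Subgroup G).subgroupOf ((normalizer ((Q1 : Subgroup G) : Set G))) := by
    rw [← Sylow.coe_subtype Q2 h2, ← Sylow.coe_subtype Q1 h1]
    exact congrArg _ hS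
  rw [Subgroup.subgroupOf_inj, inf_eq_left.mpr h2, inf_eq_left.mpr h1] at hsub
  exact Sylow.ext hsub.symm

private lemma sylow_r_normal {G : Type*} [Group G] [Finite G] {p q r : ℕ}
    (hp : p.Prime) (hq : q.Prime) (hr : r.Prime) (hpq : p < q) (hqr : q < r)
    (hcard : Nat.card G = p * q * r) (R : Sylow r G) : (R : Subgroup G).Normal := by
  haveI : Fact p.Prime := ⟨hp⟩
  haveI : Fact q.Prime := ⟨hq⟩
  haveI : Fact r.Prime := ⟨hr⟩
  have hp2 := hp.two_le
  have hq2 := hq.two_le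
  have hr2 := hr.two_le
  have hpr : p < r := hpq.trans hqr
  have hcardR : Nat.card R = r := by
    refine sylow_card_eq hr ⟨p * q, by rw [hcard]; ring⟩ ?_ R
    rw [hcard, show p * q * r = r * (p * q) by ring]
    exact not_sq_dvd_mul hr (not_dvd_mul_prime hr hp hq (by omega) (by omega))
  have hidx : (R : Subgroup G).index = p * q := by
    have h1 := (R : Subgroup G).card_mul_index
    rw [hcard] at h1
    have h1' : Nat.card (R : Subgroup G) = r := hcardR
    rw [h1', show p * q * r = r * (p * q) by ring] at h1
    exact Nat.eq_of_mul_eq_mul_left (by omega) h1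
  have hmod := card_sylow_modEq_one r G
  have hdvd : Nat.card (Sylow r G) ∣ p * q := hidx ▸ R.card_dvd_index
  rcases dvd_prime_mul' hp hq hdvd with h1 | h1 | h1 | h1
  · exact normal_of_sylow_card_eq_one R h1
  · exact absurd hmod (fun hh => modeq_one_lt_false (h1 ▸ hh) (by omega) (by omega))
  · exact absurd hmod (fun hh => modeq_one_lt_false (h1 ▸ hh) (by omega) (by omega))
  · -- Burnside case: N(R) = R
    exfalso
    have hNcard : Nat.card ((normalizer ((R : Subgroup G) : Set G))) = r := by
      have h2 := (normalizer ((R : Subgroup G) : Set G)).card_mul_index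
      rw [hcard, R.coe_coe, ← R.card_eq_index_normalizer, h1,
        show p * q * r = r * (p * q) by ring] at h2
      exact Nat.eq_of_mul_eq_mul_right (by positivity) h2
    have hNR : (R : Subgroup G) = (normalizer ((R : Subgroup G) : Set G)) :=
      eq_of_le_of_card_le' le_normalizer (by rw [hNcard, hcardR])
    haveI : IsMulCommutative (R : Subgroup G) := by
      haveI : IsCyclic ↥(R : Subgroup G) := isCyclic_of_prime_card hcardR
      letI := IsCyclic.commGroup (α := ↥(R : Subgroup G))
      exact ⟨⟨fun a b => mul_comm a b⟩⟩
    have hP : (normalizer ((R : Subgroup G) : Set G)) ≤ Subgroup.centralizer ((R : Subgroup G) : Set G) := by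
      rw [← hNR]
      exact Subgroup.le_centralizer _
    set H := (MonoidHom.transferSylow R hP).ker with hH
    have hHnormal : H.Normal := MonoidHom.normal_ker _
    have hcomp := MonoidHom.ker_transferSylow_isComplement' R hP
    have hHcard : Nat.card H = p * q := by
      have h3 := hcomp.card_mul
      rw [hcard, hcardR, show p * q * r = (p * q) * r by ring] at h3
      exact Nat.eq_of_mul_eq_mul_right (by omega) h3
    obtain ⟨S⟩ : Nonempty (Sylow q ↥H) := inferInstance
    have hScard : Nat.card S = q := by
      refine sylow_card_eq hq ⟨p, by rw [hHcard]; ring⟩ ?_ S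
      rw [hHcard, show p * q = q * p by ring]
      exact not_sq_dvd_mul hq (prime_not_dvd_prime hq hp (by omega))
    have hSidx : (S : Subgroup ↥H).index = p := by
      have h4 := (S : Subgroup ↥H).card_mul_index
      rw [hHcard] at h4
      have h4' : Nat.card (S : Subgroup ↥H) = q := hScard
      rw [h4', show p * q = q * p by ring] at h4
      exact Nat.eq_of_mul_eq_mul_left (by omega) h4
    have hSnum : Nat.card (Sylow q ↥H) = 1 := by
      have hdvd2 : Nat.card (Sylow q ↥H) ∣ p := hSidx ▸ S.card_dvd_index
      have hmod2 := card_sylow_modEq_one q H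
      rcases hp.eq_one_or_self_of_dvd _ hdvd2 with h5 | h5
      · exact h5
      · exact absurd hmod2 (fun hh => modeq_one_lt_false (h5 ▸ hh) (by omega) (by omega))
    have hQgnormal : (Subgroup.map H.subtype (S : Subgroup ↥H)).Normal :=
      map_sylow_normal hHnormal S hSnum
    set Qg := Subgroup.map H.subtype (S : Subgroup ↥H) with hQg
    have hQgcard : Nat.card Qg = q := by
      rw [← hScard]
      exact (Nat.card_congr (Subgroup.equivMapOfInjective _ _ H.subtype_injective).toEquiv).symm
    set M := (R : Subgroup G) ⊔ Qg with hM
    have hMcard : Nat.card M = r * q := by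
      haveI := hQgnormal
      rw [hM, card_sup_of_coprime (by rw [hcardR, hQgcard]; exact
        (Nat.coprime_primes hr hq).mpr (by omega)), hcardR, hQgcard]
    have hRM : (R : Subgroup G) ≤ M := le_sup_left
    let SR : Sylow r ↥M := R.subtype hRM
    have hSRcard : Nat.card SR = r := by
      refine sylow_card_eq hr ⟨q, by rw [hMcard]⟩ ?_ SR
      rw [hMcard]
      exact not_sq_dvd_mul hr (prime_not_dvd_prime hr hq (by omega))
    have hSRidx : (SR : Subgroup ↥M).index = q := by
      have h6 := (SR : Subgroup ↥M).card_mul_index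
      rw [hMcard] at h6
      have h6' : Nat.card (SR : Subgroup ↥M) = r := hSRcard
      rw [h6'] at h6
      exact Nat.eq_of_mul_eq_mul_left (by omega) h6
    have hSRnum : Nat.card (Sylow r ↥M) = 1 := by
      have hdvd3 : Nat.card (Sylow r ↥M) ∣ q := hSRidx ▸ SR.card_dvd_index
      have hmod3 := card_sylow_modEq_one r ↥M
      rcases hq.eq_one_or_self_of_dvd _ hdvd3 with h7 | h7
      · exact h7
      · exact absurd hmod3 (fun hh => modeq_one_lt_false (h7 ▸ hh) (by omega) (by omega))
    have hSRnormal : (SR : Subgroup ↥M).Normal := normal_of_sylow_card_eq_one SR hSRnum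
    have hsubnormal : ((R : Subgroup G).subgroupOf M).Normal := by
      rwa [Sylow.coe_subtype] at hSRnormal
    have hMle : M ≤ (normalizer ((R : Subgroup G) : Set G)) :=
      le_normalizer_of_subgroupOf_normal hRM hsubnormal
    rw [← hNR] at hMle
    have := Subgroup.card_le_of_le hMle
    rw [hMcard, hcardR] at this
    nlinarith
private lemma card_le_ncard_level {G : Type*} [Group G] [Finite G] {α : Type*} [Finite α]
    (f : α → Subgroup G) (hinj : Function.Injective f) (n : ℕ)
    (hn : ∀ a, Nat.card (f a) = n) :
    Nat.card α ≤ {H : Subgroup G | Nat.card H = n}.ncard := by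
  have hsub : Set.range f ⊆ {H : Subgroup G | Nat.card H = n} := by
    rintro _ ⟨a, rfl⟩
    exact hn a
  have heq : (Set.range f).ncard = Nat.card α := by
    rw [← Nat.card_coe_set_eq, Nat.card_range_of_injective hinj]
  calc Nat.card α = (Set.range f).ncard := heq.symm
    _ ≤ _ := Set.ncard_le_ncard hsub (Set.toFinite _)

private lemma one_le_ncard_level {G : Type*} [Group G] [Finite G] {n : ℕ} (H : Subgroup G)
    (hH : Nat.card H = n) : 1 ≤ {H : Subgroup G | Nat.card H = n}.ncard :=
  (Set.ncard_pos (Set.toFinite _)).mpr ⟨H, hH⟩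

set_option maxHeartbeats 1000000 in
private lemma final_assembly {G : Type*} [Group G] [Finite G] {p q r np nq npq : ℕ}
    (hp : p.Prime) (hq : q.Prime) (hr : r.Prime) (hpq : p < q) (hqr : q < r)
    (h1 : 1 ≤ {H : Subgroup G | Nat.card H = 1}.ncard)
    (htop : 1 ≤ {H : Subgroup G | Nat.card H = p * q * r}.ncard)
    (hlr : 1 ≤ {H : Subgroup G | Nat.card H = r}.ncard)
    (hlqr : 1 ≤ {H : Subgroup G | Nat.card H = q * r}.ncard)
    (hlp : np ≤ {H : Subgroup G | Nat.card H = p}.ncard)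
    (hlq : nq ≤ {H : Subgroup G | Nat.card H = q}.ncard)
    (hlpq : npq ≤ {H : Subgroup G | Nat.card H = p * q}.ncard)
    (harith : r + min (r + 1) (2 * q) ≤ np + nq + npq) :
    r + 4 + min (r + 1) (2 * q) ≤ Nat.card (Subgroup G) := by
  have hp2 := hp.two_le
  have hq2 := hq.two_le
  have hr2 := hr.two_le
  have key := sum_levels_le (G := G) ({1, p, q, r, p * q, q * r, p * q * r} : Finset ℕ)
  have d_rpq : r ≠ p * q := by
    intro h
    have hdp : p ∣ r := ⟨q, h⟩
    rcases hr.eq_one_or_self_of_dvd p hdp with h' | h' <;> omega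
  have m1 : q < p * q := by nlinarith
  have m2 : r < q * r := by nlinarith
  have m3 : p * q < p * q * r := by nlinarith
  have m4 : q * r < p * q * r := by nlinarith
  have m5 : p * q ≠ q * r := by
    intro h
    have : q * p = q * r := by linarith [mul_comm p q]
    have := Nat.eq_of_mul_eq_mul_left (by omega : 0 < q) this
    omega
  have m6 : p < p * q := by nlinarith
  have m7 : p < q * r := by nlinarith
  have m8 : q < q * r := by nlinarith
  have m9 : r < p * q * r := by nlinarith
  have m10 : p < p * q * r := by nlinarith
  have m11 : q < p * q * r := by nlinarith
  have m12 : 2 ≤ p * q := by nlinarith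
  have m13 : 2 ≤ q * r := by nlinarith
  have m14 : 2 ≤ p * q * r := by nlinarith
  have m15 : r < q * r := m2
  set a := p * q with ha
  set b := q * r with hb
  set c := p * q * r with hc
  rw [Finset.sum_insert (by simp only [Finset.mem_insert, Finset.mem_singleton]; omega),
    Finset.sum_insert (by simp only [Finset.mem_insert, Finset.mem_singleton]; omega),
    Finset.sum_insert (by simp only [Finset.mem_insert, Finset.mem_singleton]; omega),
    Finset.sum_insert (by simp only [Finset.mem_insert, Finset.mem_singleton]; omega),
    Finset.sum_insert (by simp only [Finset.mem_insert, Finset.mem_singleton]; omega),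
    Finset.sum_insert (by simp only [Finset.mem_singleton]; omega),
    Finset.sum_singleton] at key
  set m := min (r + 1) (2 * q) with hm
  omega
set_option maxHeartbeats 1000000 in
theorem pqr_nonnilpotent_subgroup_bound (G : Type*) [Group G] (p q r : ℕ)
    (hp : p.Prime) (hq : q.Prime) (hr : r.Prime) (hpq : p < q) (hqr : q < r)
    (hcard : Nat.card G = p * q * r) (hnn : ¬Group.IsNilpotent G)
    (hindec : ¬∃ (H K : Subgroup G), H ≠ ⊥ ∧ K ≠ ⊥ ∧
      Nat.Coprime (Nat.card H) (Nat.card K) ∧ Nonempty (G ≃* H × K)) :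
    r + 4 + min (r + 1) (2 * q) ≤ Nat.card (Subgroup G) := by
  haveI : Fact p.Prime := ⟨hp⟩
  haveI : Fact q.Prime := ⟨hq⟩
  haveI : Fact r.Prime := ⟨hr⟩
  have hp2 := hp.two_le
  have hq2 := hq.two_le
  have hr2 := hr.two_le
  have hpr : p < r := hpq.trans hqr
  have hG0 : Nat.card G ≠ 0 := by rw [hcard]; positivity
  haveI : Finite G := Nat.finite_of_card_ne_zero hG0
  have cardP : ∀ P : Sylow p G, Nat.card P = p := fun P =>
    sylow_card_eq hp ⟨q * r, by rw [hcard]; ring⟩ (by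
      rw [hcard, show p * q * r = p * (q * r) by ring]
      exact not_sq_dvd_mul hp (not_dvd_mul_prime hp hq hr (by omega) (by omega))) P
  have cardQ : ∀ Q : Sylow q G, Nat.card Q = q := fun Q =>
    sylow_card_eq hq ⟨p * r, by rw [hcard]; ring⟩ (by
      rw [hcard, show p * q * r = q * (p * r) by ring]
      exact not_sq_dvd_mul hq (not_dvd_mul_prime hq hp hr (by omega) (by omega))) Q
  have cardR : ∀ R : Sylow r G, Nat.card R = r := fun R =>
    sylow_card_eq hr ⟨p * q, by rw [hcard]; ring⟩ (by
      rw [hcard, show p * q * r = r * (p * q) by ring]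
      exact not_sq_dvd_mul hr (not_dvd_mul_prime hr hp hq (by omega) (by omega))) R
  obtain ⟨R0⟩ : Nonempty (Sylow r G) := inferInstance
  obtain ⟨Q0⟩ : Nonempty (Sylow q G) := inferInstance
  obtain ⟨P0⟩ : Nonempty (Sylow p G) := inferInstance
  haveI hRn : (R0 : Subgroup G).Normal := sylow_r_normal hp hq hr hpq hqr hcard R0
  have hKcard : Nat.card ((Q0 : Subgroup G) ⊔ (R0 : Subgroup G) : Subgroup G) = q * r := by
    rw [card_sup_of_coprime (by
      rw [cardQ Q0, cardR R0]; exact (Nat.coprime_primes hq hr).mpr (by omega)),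
      cardQ Q0, cardR R0]
  have l1 : 1 ≤ {H : Subgroup G | Nat.card H = 1}.ncard :=
    one_le_ncard_level ⊥ Subgroup.card_bot
  have ltop : 1 ≤ {H : Subgroup G | Nat.card H = p * q * r}.ncard :=
    one_le_ncard_level ⊤ (by rw [Subgroup.card_top, hcard])
  have lr : 1 ≤ {H : Subgroup G | Nat.card H = r}.ncard :=
    one_le_ncard_level (R0 : Subgroup G) (cardR R0)
  have lqr : 1 ≤ {H : Subgroup G | Nat.card H = q * r}.ncard :=
    one_le_ncard_level _ hKcard
  have lp1 : 1 ≤ {H : Subgroup G | Nat.card H = p}.ncard :=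
    one_le_ncard_level (P0 : Subgroup G) (cardP P0)
  have lq1 : 1 ≤ {H : Subgroup G | Nat.card H = q}.ncard :=
    one_le_ncard_level (Q0 : Subgroup G) (cardQ Q0)
  have hQidx : (Q0 : Subgroup G).index = p * r := by
    have h := (Q0 : Subgroup G).card_mul_index
    have h' : Nat.card (Q0 : Subgroup G) = q := cardQ Q0
    rw [hcard, h', show p * q * r = q * (p * r) by ring] at h
    exact Nat.eq_of_mul_eq_mul_left (by omega) h
  have hq_dvd : Nat.card (Sylow q G) ∣ p * r := hQidx ▸ Q0.card_dvd_index
  have hq_mod := card_sylow_modEq_one q G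
  rcases dvd_prime_mul' hp hr hq_dvd with hnq | hnq | hnq | hnq
  · -- n_q = 1 : Sylow q is normal; analyze Sylow p
    haveI hQn : (Q0 : Subgroup G).Normal := normal_of_sylow_card_eq_one Q0 hnq
    have hPidx : (P0 : Subgroup G).index = q * r := by
      have h := (P0 : Subgroup G).card_mul_index
      have h' : Nat.card (P0 : Subgroup G) = p := cardP P0
      rw [hcard, h', show p * q * r = p * (q * r) by ring] at h
      exact Nat.eq_of_mul_eq_mul_left (by omega) h
    have hp_dvd : Nat.card (Sylow p G) ∣ q * r := hPidx ▸ P0.card_dvd_index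
    have hp_mod := card_sylow_modEq_one p G
    rcases dvd_prime_mul' hq hr hp_dvd with hnp | hnp | hnp | hnp
    · -- n_p = 1 : everything normal, G decomposes, contradiction
      exfalso
      haveI hPn : (P0 : Subgroup G).Normal := normal_of_sylow_card_eq_one P0 hnp
      have hAcard : Nat.card ((P0 : Subgroup G) ⊔ (Q0 : Subgroup G) : Subgroup G) = p * q := by
        rw [card_sup_of_coprime (by
          rw [cardP P0, cardQ Q0]; exact (Nat.coprime_primes hp hq).mpr (by omega)),
          cardP P0, cardQ Q0]
      haveI hAn : ((P0 : Subgroup G) ⊔ (Q0 : Subgroup G)).Normal := Subgroup.sup_normal _ _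
      refine hindec (decomp_lemma hAn hRn ?_ ?_ ?_ ?_)
      · rw [hAcard, cardR R0]
        exact Nat.Coprime.mul ((Nat.coprime_primes hp hr).mpr (by omega))
          ((Nat.coprime_primes hq hr).mpr (by omega))
      · rw [hAcard, cardR R0, hcard]
      · rw [hAcard]
        have : 1 < p * q := by nlinarith
        omega
      · rw [cardR R0]; omega
    · -- n_p = q : R is central, G decomposes, contradiction
      exfalso
      have hNPidx : (normalizer ((P0 : Subgroup G) : Set G)).index = q := by
        rw [P0.coe_coe, ← P0.card_eq_index_normalizer, hnp]
      have hNPcard : Nat.card ((normalizer ((P0 : Subgroup G) : Set G))) = p * r := by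
        have h := (normalizer ((P0 : Subgroup G) : Set G)).card_mul_index
        rw [hcard, hNPidx, show p * q * r = (p * r) * q by ring] at h
        exact Nat.eq_of_mul_eq_mul_right (by omega) h
      obtain ⟨SN⟩ : Nonempty (Sylow r ((normalizer ((P0 : Subgroup G) : Set G)))) := inferInstance
      have hSNcard : Nat.card SN = r := by
        refine sylow_card_eq hr ⟨p, by rw [hNPcard]; ring⟩ ?_ SN
        rw [hNPcard, show p * r = r * p by ring]
        exact not_sq_dvd_mul hr (prime_not_dvd_prime hr hp (by omega))
      set S' := Subgroup.map ((normalizer ((P0 : Subgroup G) : Set G))).subtype (SN : Subgroup _) with hS'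
      have hS'card : Nat.card S' = r := by
        rw [← hSNcard]
        exact (Nat.card_congr (Subgroup.equivMapOfInjective _ _
          (Subgroup.subtype_injective _)).toEquiv).symm
      have hS'p : IsPGroup r S' := IsPGroup.of_card (by rw [hS'card, pow_one])
      obtain ⟨T, hT⟩ := hS'p.exists_le_sylow
      have hTR : T = R0 := by
        letI := Sylow.unique_of_normal R0 hRn
        exact Subsingleton.elim T R0
      rw [hTR] at hT
      have hS'R : S' = (R0 : Subgroup G) := eq_of_le_of_card_le' hT (by rw [hS'card, cardR R0])
      have hRle : (R0 : Subgroup G) ≤ (normalizer ((P0 : Subgroup G) : Set G)) := by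
        rw [← hS'R]; exact Subgroup.map_subtype_le _
      have hdisjRP : Disjoint (R0 : Subgroup G) (P0 : Subgroup G) :=
        disjoint_iff.mpr (inf_eq_bot_of_coprime (by
          rw [cardR R0, cardP P0]; exact (Nat.coprime_primes hr hp).mpr (by omega)))
      have hcommRP : ∀ a ∈ (R0 : Subgroup G), ∀ b ∈ (P0 : Subgroup G), a * b = b * a := by
        intro a ha b hb
        refine commute_of_normalize hdisjRP ?_ ?_ ha hb
        · intro b' hb' a' ha'
          exact hRn.conj_mem a' ha' b'
        · intro a' ha' b' hb'
          have hmem := hRle ha'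
          rw [Subgroup.mem_normalizer_iff] at hmem
          exact (hmem b').mp hb'
      haveI : IsMulCommutative (R0 : Subgroup G) := by
        haveI : IsCyclic ((R0 : Subgroup G)) := isCyclic_of_prime_card (cardR R0)
        letI := IsCyclic.commGroup (α := ((R0 : Subgroup G)))
        exact ⟨⟨fun a b => mul_comm a b⟩⟩
      have hcent : Subgroup.centralizer ((R0 : Subgroup G) : Set G) = ⊤ := by
        rw [eq_top_iff]
        have htop2 : (P0 : Subgroup G) ⊔ ((Q0 : Subgroup G) ⊔ (R0 : Subgroup G)) = ⊤ := by
          apply Subgroup.eq_top_of_card_eq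
          haveI : ((Q0 : Subgroup G) ⊔ (R0 : Subgroup G)).Normal := Subgroup.sup_normal _ _
          rw [card_sup_of_coprime (by
            rw [cardP P0, hKcard]
            exact Nat.Coprime.mul_right ((Nat.coprime_primes hp hq).mpr (by omega))
              ((Nat.coprime_primes hp hr).mpr (by omega))), cardP P0, hKcard, hcard]
          ring
        rw [← htop2]
        refine sup_le ?_ (sup_le ?_ ?_)
        · intro x hx
          rw [Subgroup.mem_centralizer_iff]
          intro y hy
          exact hcommRP y hy x hx
        · intro x hx
          rw [Subgroup.mem_centralizer_iff]
          intro y hy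
          exact Subgroup.commute_of_normal_of_disjoint _ _ hRn hQn
            (disjoint_iff.mpr (inf_eq_bot_of_coprime (by
              rw [cardR R0, cardQ Q0]; exact (Nat.coprime_primes hr hq).mpr (by omega))))
            y x hy hx
        · intro x hx
          rw [Subgroup.mem_centralizer_iff]
          intro y hy
          exact Subgroup.mul_comm_of_mem_isMulCommutative (H := (R0 : Subgroup G)) hy hx
      have hsubcenter : ((R0 : Subgroup G) : Set G) ⊆ (Subgroup.center G : Set G) :=
        Subgroup.centralizer_eq_top_iff_subset.mp hcent
      have hRidx : (R0 : Subgroup G).index = p * q := by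
        have h := (R0 : Subgroup G).card_mul_index
        have h' : Nat.card (R0 : Subgroup G) = r := cardR R0
        rw [hcard, h', show p * q * r = r * (p * q) by ring] at h
        exact Nat.eq_of_mul_eq_mul_left (by omega) h
      obtain ⟨M, hM⟩ := Subgroup.exists_right_complement'_of_coprime (N := (R0 : Subgroup G)) (by
        rw [hRidx]
        have h' : Nat.card (R0 : Subgroup G) = r := cardR R0
        rw [h']
        exact Nat.Coprime.mul_right ((Nat.coprime_primes hr hp).mpr (by omega))
          ((Nat.coprime_primes hr hq).mpr (by omega)))
      have hMcard : Nat.card M = p * q := by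
        have h := hM.card_mul
        have h' : Nat.card (R0 : Subgroup G) = r := cardR R0
        rw [hcard, h', show p * q * r = r * (p * q) by ring] at h
        exact Nat.eq_of_mul_eq_mul_left (by omega) h
      have hMn : M.Normal := by
        constructor
        intro m hm g
        obtain ⟨⟨x, y⟩, hxy⟩ := hM.2 g
        have hxc : (x : G) ∈ Subgroup.center G := hsubcenter x.2
        rw [Subgroup.mem_center_iff] at hxc
        have hyM : (y : G) ∈ M := y.2
        have hw : (y : G) * m * (y : G)⁻¹ ∈ M := M.mul_mem (M.mul_mem hyM hm) (M.inv_mem hyM)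
        have heq : ((x : G) * (y : G)) * m * ((x : G) * (y : G))⁻¹
            = (y : G) * m * (y : G)⁻¹ := by
          have hc := hxc ((y : G) * m * (y : G)⁻¹)
          rw [mul_inv_rev]
          calc (x : G) * (y : G) * m * ((y : G)⁻¹ * (x : G)⁻¹)
              = (x : G) * ((y : G) * m * (y : G)⁻¹) * (x : G)⁻¹ := by group
            _ = ((y : G) * m * (y : G)⁻¹) * (x : G) * (x : G)⁻¹ := by rw [← hc]
            _ = (y : G) * m * (y : G)⁻¹ := by group
        have hxyg : (x : G) * (y : G) = g := hxy
        rw [← hxyg, heq]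
        exact hw
      refine hindec (decomp_lemma hMn hRn ?_ ?_ ?_ ?_)
      · rw [hMcard, cardR R0]
        exact Nat.Coprime.mul ((Nat.coprime_primes hp hr).mpr (by omega))
          ((Nat.coprime_primes hq hr).mpr (by omega))
      · rw [hMcard, cardR R0, hcard]
      · rw [hMcard]
        have : 1 < p * q := by nlinarith
        omega
      · rw [cardR R0]; omega
    · -- n_p = r
      have hNcardP : ∀ P : Sylow p G, Nat.card ((normalizer ((P : Subgroup G) : Set G))) = p * q := by
        intro P
        have hidxN : (normalizer ((P : Subgroup G) : Set G)).index = r := by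
          rw [P.coe_coe, ← P.card_eq_index_normalizer, hnp]
        have h := (normalizer ((P : Subgroup G) : Set G)).card_mul_index
        rw [hcard, hidxN, show p * q * r = (p * q) * r by ring] at h
        exact Nat.eq_of_mul_eq_mul_right (by omega) h
      have lp : r ≤ {H : Subgroup G | Nat.card H = p}.ncard := by
        rw [← hnp]
        exact card_le_ncard_level (fun P : Sylow p G => (P : Subgroup G))
          (fun a b h => Sylow.ext h) p cardP
      have lpq : r ≤ {H : Subgroup G | Nat.card H = p * q}.ncard := by
        rw [← hnp]
        exact card_le_ncard_level (fun P : Sylow p G => (normalizer ((P : Subgroup G) : Set G)))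
          sylow_normalizer_injective (p * q) hNcardP
      refine final_assembly hp hq hr hpq hqr l1 ltop lr lqr lp lq1 lpq ?_
      have := min_le_left (r + 1) (2 * q)
      omega
    · -- n_p = q * r
      have lp : q * r ≤ {H : Subgroup G | Nat.card H = p}.ncard := by
        rw [← hnp]
        exact card_le_ncard_level (fun P : Sylow p G => (P : Subgroup G))
          (fun a b h => Sylow.ext h) p cardP
      refine final_assembly hp hq hr hpq hqr l1 ltop lr lqr lp lq1 (Nat.zero_le _) ?_
      have hmin := min_le_right (r + 1) (2 * q)
      have hq3 : 3 ≤ q := by omega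
      have harith : r + 2 * q ≤ q * r + 1 := by nlinarith
      omega
  · -- n_q = p : impossible
    exact absurd hq_mod (fun hh => modeq_one_lt_false (hnq ▸ hh) (by omega) (by omega))
  · -- n_q = r
    have hNcardQ : ∀ Q : Sylow q G, Nat.card ((normalizer ((Q : Subgroup G) : Set G))) = p * q := by
      intro Q
      have hidxN : (normalizer ((Q : Subgroup G) : Set G)).index = r := by
        rw [Q.coe_coe, ← Q.card_eq_index_normalizer, hnq]
      have h := (normalizer ((Q : Subgroup G) : Set G)).card_mul_index
      rw [hcard, hidxN, show p * q * r = (p * q) * r by ring] at h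
      exact Nat.eq_of_mul_eq_mul_right (by omega) h
    have lq : r ≤ {H : Subgroup G | Nat.card H = q}.ncard := by
      rw [← hnq]
      exact card_le_ncard_level (fun Q : Sylow q G => (Q : Subgroup G))
        (fun a b h => Sylow.ext h) q cardQ
    have lpq : r ≤ {H : Subgroup G | Nat.card H = p * q}.ncard := by
      rw [← hnq]
      exact card_le_ncard_level (fun Q : Sylow q G => (normalizer ((Q : Subgroup G) : Set G)))
        sylow_normalizer_injective (p * q) hNcardQ
    refine final_assembly hp hq hr hpq hqr l1 ltop lr lqr lp1 lq lpq ?_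
    have := min_le_left (r + 1) (2 * q)
    omega
  · -- n_q = p * r
    have lq : p * r ≤ {H : Subgroup G | Nat.card H = q}.ncard := by
      rw [← hnq]
      exact card_le_ncard_level (fun Q : Sylow q G => (Q : Subgroup G))
        (fun a b h => Sylow.ext h) q cardQ
    refine final_assembly hp hq hr hpq hqr l1 ltop lr lqr lp1 lq (Nat.zero_le _) ?_
    have hmin := min_le_left (r + 1) (2 * q)
    have h2r : 2 * r ≤ p * r := Nat.mul_le_mul_right r hp2
    omega
end
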